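/- arXiv:1909.01257 — 7 statements merged into one kernel-verified Lean document; each statement's English description precedes it below -/
import Mathlib

section
/- The number of ways to place n labeled balls into q unlabeled boxes arranged in a circle (q > n), so that no box contains more than one ball and for i < j the ball i is never in the box immediately clockwise of the box holding ball j, is (q-n)^{n-1}. -/
/-- A placement of `n` labeled balls into `q` boxes arranged in a circle: ball `i` goes in
box `f i` (boxes identified with `ZMod q`, clockwise successor of box `b` being `b + 1`),
no box holds more than one ball, and for `i < j` ball `i` is never in the box immediately
clockwise of the box holding ball `j`. -/
def CircularPlacement (n q : ℕ) : Type :=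
  {f : Fin n → ZMod q // Function.Injective f ∧
    ∀ i j : Fin n, i < j → f i ≠ f j + 1}

namespace CircAux

def del (b u : ℕ) : ℕ := if u < b then u else u - 1
def ins (c u : ℕ) : ℕ := if u < c then u else u + 1

lemma mod_eq_ite {v q : ℕ} (h : v < q) : (v + 1) % q = if v + 1 = q then 0 else v + 1 := by
  split_ifs with h1
  · simp [h1]
  · exact Nat.mod_eq_of_lt (by omega)

lemma del_lt {b u q : ℕ} (hb : b + 1 < q) (hu : u < q) (hub : u ≠ b) : del b u < q - 1 := by
  unfold del; split <;> omega

lemma del_inj {b u₁ u₂ : ℕ} (h1 : u₁ ≠ b) (h2 : u₂ ≠ b) (h : del b u₁ = del b u₂) : u₁ = u₂ := by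
  unfold del at h; split_ifs at h <;> omega

lemma del_ne_b {b u : ℕ} (h1 : u ≠ b) (h2 : u ≠ b + 1) : del b u ≠ b := by
  unfold del; split <;> omega

lemma ins_del {b u : ℕ} (h : u ≠ b) : ins b (del b u) = u := by
  unfold ins del; split_ifs <;> omega

lemma del_ins {c u : ℕ} : del c (ins c u) = u := by
  unfold ins del; split_ifs <;> omega

lemma ins_ne_self {c u : ℕ} : ins c u ≠ c := by unfold ins; split <;> omega

lemma ins_inj {c u₁ u₂ : ℕ} (h : ins c u₁ = ins c u₂) : u₁ = u₂ := by
  unfold ins at h; split_ifs at h <;> omega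

lemma ins_lt {c u q : ℕ} (hu : u < q - 1) : ins c u < q := by unfold ins; split <;> omega

lemma ins_ne_succ {c u : ℕ} (h : u ≠ c) : ins c u ≠ c + 1 := by unfold ins; split <;> omega

lemma ins_zero {c : ℕ} (h : 0 < c) : ins c 0 = 0 := by unfold ins; split <;> omega

lemma del_cond {q b u v : ℕ} (hb : b + 1 < q) (hu : u < q) (hv : v < q)
    (hub : u ≠ b) (hvb : v ≠ b) (hub1 : u ≠ b + 1)
    (h : u ≠ (v + 1) % q) : del b u ≠ (del b v + 1) % (q - 1) := by
  have h1 : (v + 1) % q = if v + 1 = q then 0 else v + 1 := mod_eq_ite hv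
  have hd : del b v < q - 1 := del_lt hb hv hvb
  have h2 : (del b v + 1) % (q - 1) = if del b v + 1 = q - 1 then 0 else del b v + 1 :=
    mod_eq_ite hd
  rw [h1] at h
  rw [h2]
  unfold del at *
  split_ifs at * <;> omega

lemma ins_cond {q c u v : ℕ} (hc0 : 0 < c) (hc : c + 1 < q) (hu : u < q - 1) (hv : v < q - 1)
    (huc : u ≠ c) (hvc : v ≠ c)
    (h : u ≠ (v + 1) % (q - 1)) : ins c u ≠ (ins c v + 1) % q := by
  have h1 : (v + 1) % (q - 1) = if v + 1 = q - 1 then 0 else v + 1 := mod_eq_ite hv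
  have hi : ins c v < q := ins_lt hv
  have h2 : (ins c v + 1) % q = if ins c v + 1 = q then 0 else ins c v + 1 := mod_eq_ite hi
  rw [h1] at h
  rw [h2]
  unfold ins at *
  split_ifs at * <;> omega

/-- ℕ-valued model of normalized placements: `n+1` balls in `q` boxes `0,…,q-1`,
ball `0` in box `0`. -/
def N (n q : ℕ) : Type :=
  {v : Fin (n + 1) → ℕ // (∀ i, v i < q) ∧ v 0 = 0 ∧ Function.Injective v ∧
    ∀ i j : Fin (n + 1), i < j → v i ≠ (v j + 1) % q}

def emptySet {n : ℕ} (q : ℕ) (w : Fin (n + 1) → ℕ) : Finset ℕ :=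
  (Finset.range q).filter (fun e => ∀ i, w i ≠ e)

lemma emptySet_card {n q : ℕ} {w : Fin (n + 1) → ℕ} (hinj : Function.Injective w)
    (hlt : ∀ i, w i < q) : (emptySet q w).card = q - (n + 1) := by
  have he : emptySet q w = Finset.range q \ Finset.image w Finset.univ := by
    ext e
    simp only [emptySet, Finset.mem_filter, Finset.mem_range, Finset.mem_sdiff,
      Finset.mem_image, Finset.mem_univ, true_and]
    constructor
    · rintro ⟨h1, h2⟩
      exact ⟨h1, fun ⟨i, hi⟩ => h2 i hi⟩
    · rintro ⟨h1, h2⟩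
      exact ⟨h1, fun i hi => h2 ⟨i, hi⟩⟩
  rw [he, Finset.card_sdiff_of_subset]
  · rw [Finset.card_range, Finset.card_image_of_injective _ hinj, Finset.card_univ,
      Fintype.card_fin]
  · intro e he'
    simp only [Finset.mem_image, Finset.mem_univ, true_and] at he'
    obtain ⟨i, rfl⟩ := he'
    exact Finset.mem_range.mpr (hlt i)

section Step

variable {n q : ℕ}

lemma b_pos (x : N (n + 1) q) : 0 < x.1 (Fin.last (n + 1)) := by
  have h0 : x.1 0 = 0 := x.2.2.1
  have hne : x.1 (Fin.last (n + 1)) ≠ x.1 0 := fun h => absurd (x.2.2.2.1 h) Fin.last_pos.ne'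
  rw [h0] at hne
  omega

lemma b_succ_lt (x : N (n + 1) q) : x.1 (Fin.last (n + 1)) + 1 < q := by
  have h0 : x.1 0 = 0 := x.2.2.1
  have hlt := x.2.1 (Fin.last (n + 1))
  have hc := x.2.2.2.2 0 (Fin.last (n + 1)) Fin.last_pos
  rw [h0] at hc
  by_contra hq
  have he : x.1 (Fin.last (n + 1)) + 1 = q := by omega
  rw [he, Nat.mod_self] at hc
  exact hc rfl

lemma v_ne_b_succ (x : N (n + 1) q) (i : Fin (n + 2)) :
    x.1 i ≠ x.1 (Fin.last (n + 1)) + 1 := by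
  rcases eq_or_lt_of_le (Fin.le_last i) with h | h
  · rw [h]; omega
  · have hc := x.2.2.2.2 i (Fin.last (n + 1)) h
    rwa [Nat.mod_eq_of_lt (b_succ_lt x)] at hc

lemma v_ne_b (x : N (n + 1) q) (i : Fin (n + 1)) :
    x.1 i.castSucc ≠ x.1 (Fin.last (n + 1)) := fun h =>
  absurd (x.2.2.2.1 h) (Fin.castSucc_lt_last i).ne

def fwdW (x : N (n + 1) q) : Fin (n + 1) → ℕ :=
  fun i => del (x.1 (Fin.last (n + 1))) (x.1 i.castSucc)

lemma fwdW_lt (x : N (n + 1) q) (i : Fin (n + 1)) : fwdW x i < q - 1 :=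
  del_lt (b_succ_lt x) (x.2.1 _) (v_ne_b x i)

lemma fwdW_zero (x : N (n + 1) q) : fwdW x 0 = 0 := by
  have hb := b_pos x
  unfold fwdW
  rw [Fin.castSucc_zero, x.2.2.1]
  unfold del; split <;> omega

lemma fwdW_inj (x : N (n + 1) q) : Function.Injective (fwdW x) := fun i j h =>
  Fin.castSucc_injective _ (x.2.2.2.1 (del_inj (v_ne_b x i) (v_ne_b x j) h))

lemma fwdW_cond (x : N (n + 1) q) :
    ∀ i j : Fin (n + 1), i < j → fwdW x i ≠ (fwdW x j + 1) % (q - 1) :=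
  fun i j hij => del_cond (b_succ_lt x) (x.2.1 _) (x.2.1 _) (v_ne_b x i) (v_ne_b x j)
    (v_ne_b_succ x i.castSucc) (x.2.2.2.2 _ _ (Fin.castSucc_lt_castSucc_iff.mpr hij))

def fwdN (x : N (n + 1) q) : N n (q - 1) :=
  ⟨fwdW x, fwdW_lt x, fwdW_zero x, fwdW_inj x, fwdW_cond x⟩

lemma emptySet_card' (y : N n (q - 1)) : (emptySet (q - 1) y.1).card = q - (n + 2) := by
  rw [emptySet_card y.2.2.2.1 y.2.1]
  omega

lemma b_mem (x : N (n + 1) q) :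
    x.1 (Fin.last (n + 1)) ∈ emptySet (q - 1) (fwdW x) := by
  simp only [emptySet, Finset.mem_filter, Finset.mem_range]
  exact ⟨by have := b_succ_lt x; omega,
    fun i => del_ne_b (v_ne_b x i) (v_ne_b_succ x i.castSucc)⟩

noncomputable def fwd (x : N (n + 1) q) : N n (q - 1) × Fin (q - (n + 2)) :=
  (fwdN x, ((emptySet (q - 1) (fwdN x).1).orderIsoOfFin (emptySet_card' (fwdN x))).symm
    ⟨x.1 (Fin.last (n + 1)), b_mem x⟩)

noncomputable def unrank (y : N n (q - 1)) (a : Fin (q - (n + 2))) : ℕ :=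
  ((emptySet (q - 1) y.1).orderIsoOfFin (emptySet_card' y) a : ℕ)

noncomputable def bwdV (y : N n (q - 1)) (a : Fin (q - (n + 2))) : Fin (n + 2) → ℕ :=
  Fin.snoc (fun i => ins (unrank y a) (y.1 i)) (unrank y a)

lemma unrank_fwd (x : N (n + 1) q) :
    unrank (fwd x).1 (fwd x).2 = x.1 (Fin.last (n + 1)) := by
  have h : ∀ z : {t // t ∈ emptySet (q - 1) (fwdN x).1},
      (((emptySet (q - 1) (fwdN x).1).orderIsoOfFin (emptySet_card' (fwdN x)))
        ((((emptySet (q - 1) (fwdN x).1).orderIsoOfFin (emptySet_card' (fwdN x)))).symm z) : ℕ)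
        = (z : ℕ) := by
    intro z
    rw [OrderIso.apply_symm_apply]
  exact h ⟨x.1 (Fin.last (n + 1)), b_mem x⟩

lemma bwdV_fwd (x : N (n + 1) q) : bwdV (fwd x).1 (fwd x).2 = x.1 := by
  funext i
  unfold bwdV
  rw [unrank_fwd]
  induction i using Fin.lastCases with
  | last => rw [Fin.snoc_last]
  | cast i =>
      rw [Fin.snoc_castSucc]
      exact ins_del (v_ne_b x i)

lemma fwd_injective : Function.Injective (fwd : N (n + 1) q → N n (q - 1) × Fin (q - (n + 2))) := by
  intro x₁ x₂ h
  apply Subtype.ext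
  rw [← bwdV_fwd x₁, ← bwdV_fwd x₂, h]

-- facts about unrank
lemma unrank_mem (y : N n (q - 1)) (a : Fin (q - (n + 2))) :
    unrank y a ∈ emptySet (q - 1) y.1 :=
  ((emptySet (q - 1) y.1).orderIsoOfFin (emptySet_card' y) a).2

lemma unrank_lt (y : N n (q - 1)) (a : Fin (q - (n + 2))) : unrank y a < q - 1 := by
  have := unrank_mem y a
  simp only [emptySet, Finset.mem_filter, Finset.mem_range] at this
  exact this.1

lemma unrank_ne (y : N n (q - 1)) (a : Fin (q - (n + 2))) (i : Fin (n + 1)) :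
    y.1 i ≠ unrank y a := by
  have := unrank_mem y a
  simp only [emptySet, Finset.mem_filter, Finset.mem_range] at this
  exact this.2 i

lemma unrank_pos (y : N n (q - 1)) (a : Fin (q - (n + 2))) : 0 < unrank y a := by
  have h1 := unrank_ne y a 0
  have h2 := y.2.2.1
  omega

lemma bwdV_last (y : N n (q - 1)) (a : Fin (q - (n + 2))) :
    bwdV y a (Fin.last (n + 1)) = unrank y a := by
  unfold bwdV; rw [Fin.snoc_last]

lemma bwdV_castSucc (y : N n (q - 1)) (a : Fin (q - (n + 2))) (i : Fin (n + 1)) :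
    bwdV y a i.castSucc = ins (unrank y a) (y.1 i) := by
  unfold bwdV; rw [Fin.snoc_castSucc]

lemma bwdV_lt (y : N n (q - 1)) (a : Fin (q - (n + 2))) (i : Fin (n + 2)) :
    bwdV y a i < q := by
  have hq := unrank_lt y a
  induction i using Fin.lastCases with
  | last => rw [bwdV_last]; omega
  | cast i => rw [bwdV_castSucc]; exact ins_lt (y.2.1 i)

lemma bwdV_zero (y : N n (q - 1)) (a : Fin (q - (n + 2))) : bwdV y a 0 = 0 := by
  have h : ((0 : Fin (n + 1)).castSucc : Fin (n + 2)) = 0 := Fin.castSucc_zero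
  rw [← h, bwdV_castSucc, y.2.2.1]
  exact ins_zero (unrank_pos y a)

lemma bwdV_inj (y : N n (q - 1)) (a : Fin (q - (n + 2))) :
    Function.Injective (bwdV y a) := by
  intro i j h
  induction i using Fin.lastCases with
  | last =>
      induction j using Fin.lastCases with
      | last => rfl
      | cast j =>
          rw [bwdV_last, bwdV_castSucc] at h
          exact absurd h.symm ins_ne_self
  | cast i =>
      induction j using Fin.lastCases with
      | last =>
          rw [bwdV_last, bwdV_castSucc] at h
          exact absurd h ins_ne_self
      | cast j =>
          rw [bwdV_castSucc, bwdV_castSucc] at h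
          exact congrArg Fin.castSucc (y.2.2.2.1 (ins_inj h))

lemma bwdV_cond (y : N n (q - 1)) (a : Fin (q - (n + 2))) :
    ∀ i j : Fin (n + 2), i < j → bwdV y a i ≠ (bwdV y a j + 1) % q := by
  intro i j hij
  have hclt := unrank_lt y a
  have hc1 : unrank y a + 1 < q := by omega
  induction j using Fin.lastCases with
  | last =>
      induction i using Fin.lastCases with
      | last => exact absurd hij (lt_irrefl _)
      | cast i =>
          rw [bwdV_last, bwdV_castSucc, Nat.mod_eq_of_lt hc1]
          exact ins_ne_succ (unrank_ne y a i)
  | cast j =>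
      induction i using Fin.lastCases with
      | last => exact absurd hij (not_lt.mpr (Fin.le_last _))
      | cast i =>
          rw [bwdV_castSucc, bwdV_castSucc]
          exact ins_cond (unrank_pos y a) hc1 (y.2.1 i) (y.2.1 j)
            (unrank_ne y a i) (unrank_ne y a j)
            (y.2.2.2.2 i j (Fin.castSucc_lt_castSucc_iff.mp hij))

noncomputable def bwdN (y : N n (q - 1)) (a : Fin (q - (n + 2))) : N (n + 1) q :=
  ⟨bwdV y a, bwdV_lt y a, bwdV_zero y a, bwdV_inj y a, bwdV_cond y a⟩

lemma fwdW_bwd (y : N n (q - 1)) (a : Fin (q - (n + 2))) : fwdW (bwdN y a) = y.1 := by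
  funext i
  show del ((bwdN y a).1 (Fin.last (n + 1))) ((bwdN y a).1 i.castSucc) = y.1 i
  show del (bwdV y a (Fin.last (n + 1))) (bwdV y a i.castSucc) = y.1 i
  rw [bwdV_last, bwdV_castSucc]
  exact del_ins

lemma symm_eq {k : ℕ} {E E' : Finset ℕ} (hE : E' = E) (h' : E'.card = k) (h : E.card = k)
    {b : ℕ} (hb : b ∈ E') (a : Fin k) (hba : b = (E.orderIsoOfFin h a : ℕ)) :
    (E'.orderIsoOfFin h').symm ⟨b, hb⟩ = a := by
  subst hE
  rw [Subsingleton.elim h' h]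
  have heq : (⟨b, hb⟩ : {x // x ∈ E'}) = E'.orderIsoOfFin h a := Subtype.ext hba
  rw [heq, OrderIso.symm_apply_apply]

lemma fwd_surjective :
    Function.Surjective (fwd : N (n + 1) q → N n (q - 1) × Fin (q - (n + 2))) := by
  rintro ⟨y, a⟩
  refine ⟨bwdN y a, ?_⟩
  have hW : fwdW (bwdN y a) = y.1 := fwdW_bwd y a
  have h1 : fwdN (bwdN y a) = y := Subtype.ext hW
  refine Prod.ext ?_ ?_
  · exact h1
  · show ((emptySet (q - 1) (fwdN (bwdN y a)).1).orderIsoOfFin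
      (emptySet_card' (fwdN (bwdN y a)))).symm
      ⟨(bwdN y a).1 (Fin.last (n + 1)), b_mem (bwdN y a)⟩ = a
    refine symm_eq ?_ _ (emptySet_card' y) _ a ?_
    · exact congrArg (emptySet (q - 1)) hW
    · exact bwdV_last y a

lemma card_N_succ : Nat.card (N (n + 1) q) = Nat.card (N n (q - 1)) * (q - (n + 2)) := by
  rw [Nat.card_eq_of_bijective fwd ⟨fwd_injective, fwd_surjective⟩, Nat.card_prod]
  simp

end Step

lemma card_N_zero (q : ℕ) (hq : 0 < q) : Nat.card (N 0 q) = 1 := by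
  rw [Nat.card_eq_one_iff_unique]
  constructor
  · constructor
    intro x y
    apply Subtype.ext
    funext i
    have hi : i = 0 := Fin.ext (by omega)
    rw [hi, x.2.2.1, y.2.2.1]
  · refine ⟨⟨fun _ => 0, fun _ => hq, rfl,
      fun a b _ => Fin.ext (by have := a.isLt; have := b.isLt; omega), ?_⟩⟩
    intro i j hij
    have h1 := j.isLt
    have h2 : i.val < j.val := hij
    intro _
    omega

lemma card_N (n : ℕ) : ∀ q : ℕ, n + 1 < q → Nat.card (N n q) = (q - (n + 1)) ^ n := by
  induction n with
  | zero =>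
      intro q hq
      rw [card_N_zero q (by omega)]
      simp
  | succ n ih =>
      intro q hq
      rw [card_N_succ, ih (q - 1) (by omega)]
      have h1 : q - 1 - (n + 1) = q - (n + 2) := by omega
      rw [h1, ← pow_succ]

section Bridge

variable {k q : ℕ} [NeZero q] [Fact (1 < q)]

def toN (f : CircularPlacement (k + 1) q) : N k q :=
  ⟨fun i => (f.1 i - f.1 0).val, by
    refine ⟨fun i => ZMod.val_lt _, ?_, ?_, ?_⟩
    · show (f.1 0 - f.1 0).val = 0
      rw [sub_self, ZMod.val_zero]
    · intro i j h
      simp only at h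
      exact f.2.1 (sub_left_inj.mp (ZMod.val_injective q h))
    · intro i j hij h
      simp only at h
      apply f.2.2 i j hij
      have hv : ((f.1 j - f.1 0) + 1).val = ((f.1 j - f.1 0).val + 1) % q := by
        rw [ZMod.val_add, ZMod.val_one]
      rw [← hv] at h
      have h2 := ZMod.val_injective q h
      linear_combination h2⟩

def fromN (y : N k q) : CircularPlacement (k + 1) q :=
  ⟨fun i => ((y.1 i : ℕ) : ZMod q), by
    constructor
    · intro i j h
      simp only at h
      apply y.2.2.2.1
      have hi := ZMod.val_cast_of_lt (y.2.1 i)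
      have hj := ZMod.val_cast_of_lt (y.2.1 j)
      rw [← hi, ← hj, h]
    · intro i j hij h
      simp only at h
      apply y.2.2.2.2 i j hij
      have h2 := congrArg ZMod.val h
      rwa [ZMod.val_cast_of_lt (y.2.1 i), ZMod.val_add, ZMod.val_one,
        ZMod.val_cast_of_lt (y.2.1 j)] at h2⟩

noncomputable def quotEquiv :
    Quot (fun f g : CircularPlacement (k + 1) q =>
      ∃ c : ZMod q, ∀ i : Fin (k + 1), g.1 i = f.1 i + c) ≃ N k q where
  toFun := Quot.lift toN (by
    rintro f g ⟨c, hc⟩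
    apply Subtype.ext
    funext i
    show (f.1 i - f.1 0).val = (g.1 i - g.1 0).val
    rw [hc i, hc 0, show f.1 i + c - (f.1 0 + c) = f.1 i - f.1 0 from by ring])
  invFun := fun y => Quot.mk _ (fromN y)
  left_inv := by
    intro x
    induction x using Quot.ind with | _ f => ?_
    apply Quot.sound
    refine ⟨f.1 0, fun i => ?_⟩
    show f.1 i = (((f.1 i - f.1 0).val : ℕ) : ZMod q) + f.1 0
    rw [ZMod.natCast_val, ZMod.cast_id]
    ring
  right_inv := by
    intro y
    apply Subtype.ext
    funext i
    show ((((y.1 i : ℕ) : ZMod q) - ((y.1 0 : ℕ) : ZMod q)).val) = y.1 i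
    rw [y.2.2.1, Nat.cast_zero, sub_zero, ZMod.val_cast_of_lt (y.2.1 i)]

end Bridge

end CircAux

open CircAux in
/-- Since the boxes are unlabeled, two placements differing by a rotation of the circle are
identified. The number of placements up to rotation is `(q-n)^(n-1)`. -/
theorem circular_placement_count (n q : ℕ) (hqn : n < q) :
    Nat.card (Quot (fun f g : CircularPlacement n q =>
      ∃ c : ZMod q, ∀ i : Fin n, g.1 i = f.1 i + c)) = (q - n) ^ (n - 1) := by
  obtain _ | k := n
  · rw [Nat.zero_sub, pow_zero, Nat.card_eq_one_iff_unique]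
    constructor
    · constructor
      intro x y
      induction x using Quot.ind with | _ f => ?_
      induction y using Quot.ind with | _ g => ?_
      apply Quot.sound
      exact ⟨0, fun i => i.elim0⟩
    · exact ⟨Quot.mk _ ⟨fun i => i.elim0, fun i => i.elim0, fun i => i.elim0⟩⟩
  · haveI : NeZero q := ⟨by omega⟩
    haveI : Fact (1 < q) := ⟨by omega⟩
    have he := Nat.card_congr (quotEquiv (k := k) (q := q))
    rw [he, card_N k q (by omega)]
    norm_num
end

section
/- The number of nonnesting set partitions of {1,...,n} equals the Catalan number C_n = binomial(2n,n)/(n+1). -/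
/-- `i` and `j` lie in the same block of the set partition `π`. -/
def SameBlock {n : ℕ} (π : Finpartition (Finset.univ : Finset (Fin n)))
    (i j : Fin n) : Prop :=
  ∃ b ∈ π.parts, i ∈ b ∧ j ∈ b

/-- There is an arc from `i` to `j` in the arc diagram of `π`: `i < j`, they are in the
same block, and no element strictly between them lies in that block. -/
def Arc {n : ℕ} (π : Finpartition (Finset.univ : Finset (Fin n)))
    (i j : Fin n) : Prop :=
  i < j ∧ SameBlock π i j ∧ ∀ m : Fin n, i < m → m < j → ¬ SameBlock π i m

/-- A set partition is nonnesting if no arc from `i` to `l` nests over an arc from `j`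
to `k` with `i < j < k < l`. -/
def Nonnesting {n : ℕ} (π : Finpartition (Finset.univ : Finset (Fin n))) : Prop :=
  ¬ ∃ i j k l : Fin n, i < j ∧ j < k ∧ k < l ∧ Arc π i l ∧ Arc π j k


namespace NNCount
open Finset DyckStep

open Finset

variable {n : ℕ}

theorem sb_refl (π : Finpartition (univ : Finset (Fin n))) (i : Fin n) : SameBlock π i i := by
  obtain ⟨b, hb, hib⟩ := π.exists_mem (mem_univ i)
  exact ⟨b, hb, hib, hib⟩

theorem sb_symm {π : Finpartition (univ : Finset (Fin n))} {i j : Fin n}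
    (h : SameBlock π i j) : SameBlock π j i := by
  obtain ⟨b, hb, h1, h2⟩ := h; exact ⟨b, hb, h2, h1⟩

theorem sb_trans {π : Finpartition (univ : Finset (Fin n))} {i j k : Fin n}
    (h : SameBlock π i j) (h' : SameBlock π j k) : SameBlock π i k := by
  obtain ⟨b, hb, h1, h2⟩ := h
  obtain ⟨c, hc, h3, h4⟩ := h'
  obtain rfl := π.eq_of_mem_parts hb hc h2 h3
  exact ⟨b, hb, h1, h4⟩

/-- `i` is not the smallest element of its block. -/
def Closer (π : Finpartition (univ : Finset (Fin n))) (i : Fin n) : Prop :=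
  ∃ j, j < i ∧ SameBlock π j i

/-- `i` is not the largest element of its block. -/
def Opener (π : Finpartition (univ : Finset (Fin n))) (i : Fin n) : Prop :=
  ∃ j, i < j ∧ SameBlock π i j

open Classical in
/-- The previous element in the block of `i` (junk value `i` if there is none). -/
noncomputable def bpred (π : Finpartition (univ : Finset (Fin n))) (i : Fin n) : Fin n :=
  if h : Closer π i then
    (univ.filter fun j => j < i ∧ SameBlock π j i).max'
      (by obtain ⟨j, hj⟩ := h; exact ⟨j, by simp [hj]⟩)
  else i

open Classical in
/-- The next element in the block of `i` (junk value `i` if there is none). -/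
noncomputable def bsucc (π : Finpartition (univ : Finset (Fin n))) (i : Fin n) : Fin n :=
  if h : Opener π i then
    (univ.filter fun j => i < j ∧ SameBlock π i j).min'
      (by obtain ⟨j, hj⟩ := h; exact ⟨j, by simp [hj]⟩)
  else i

section predsucc
variable {π : Finpartition (univ : Finset (Fin n))} {i : Fin n}

theorem bpred_lt (h : Closer π i) : bpred π i < i := by
  classical
  rw [bpred, dif_pos h]
  have := Finset.max'_mem (univ.filter fun j => j < i ∧ SameBlock π j i)
    (by obtain ⟨j, hj⟩ := h; exact ⟨j, by simp [hj]⟩)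
  simp only [mem_filter] at this
  exact this.2.1

theorem bpred_sb (h : Closer π i) : SameBlock π (bpred π i) i := by
  classical
  rw [bpred, dif_pos h]
  have := Finset.max'_mem (univ.filter fun j => j < i ∧ SameBlock π j i)
    (by obtain ⟨j, hj⟩ := h; exact ⟨j, by simp [hj]⟩)
  simp only [mem_filter] at this
  exact this.2.2

theorem le_bpred (h : Closer π i) {j : Fin n} (hj : j < i) (hsb : SameBlock π j i) :
    j ≤ bpred π i := by
  classical
  rw [bpred, dif_pos h]
  exact Finset.le_max' _ _ (by simp [hj, hsb])

theorem lt_bsucc (h : Opener π i) : i < bsucc π i := by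
  classical
  rw [bsucc, dif_pos h]
  have := Finset.min'_mem (univ.filter fun j => i < j ∧ SameBlock π i j)
    (by obtain ⟨j, hj⟩ := h; exact ⟨j, by simp [hj]⟩)
  simp only [mem_filter] at this
  exact this.2.1

theorem bsucc_sb (h : Opener π i) : SameBlock π i (bsucc π i) := by
  classical
  rw [bsucc, dif_pos h]
  have := Finset.min'_mem (univ.filter fun j => i < j ∧ SameBlock π i j)
    (by obtain ⟨j, hj⟩ := h; exact ⟨j, by simp [hj]⟩)
  simp only [mem_filter] at this
  exact this.2.2

theorem bsucc_le (h : Opener π i) {j : Fin n} (hj : i < j) (hsb : SameBlock π i j) :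
    bsucc π i ≤ j := by
  classical
  rw [bsucc, dif_pos h]
  exact Finset.min'_le _ _ (by simp [hj, hsb])

theorem bpred_opener (h : Closer π i) : Opener π (bpred π i) :=
  ⟨i, bpred_lt h, bpred_sb h⟩

theorem bsucc_closer (h : Opener π i) : Closer π (bsucc π i) :=
  ⟨i, lt_bsucc h, bsucc_sb h⟩

theorem bpred_bsucc (h : Opener π i) : bpred π (bsucc π i) = i := by
  have hc : Closer π (bsucc π i) := bsucc_closer h
  have h1 : i ≤ bpred π (bsucc π i) := le_bpred hc (lt_bsucc h) (bsucc_sb h)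
  rcases eq_or_lt_of_le h1 with he | hlt
  · exact he.symm
  · exfalso
    have h2 : bpred π (bsucc π i) < bsucc π i := bpred_lt hc
    have h3 : SameBlock π i (bpred π (bsucc π i)) :=
      sb_trans (bsucc_sb h) (sb_symm (bpred_sb hc))
    exact absurd (bsucc_le h hlt h3) (not_le.2 h2)

theorem bsucc_bpred (h : Closer π i) : bsucc π (bpred π i) = i := by
  have ho : Opener π (bpred π i) := bpred_opener h
  have h1 : bsucc π (bpred π i) ≤ i := bsucc_le ho (bpred_lt h) (bpred_sb h)
  rcases eq_or_lt_of_le h1 with he | hlt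
  · exact he
  · exfalso
    have h2 : bpred π i < bsucc π (bpred π i) := lt_bsucc ho
    have h3 : SameBlock π (bsucc π (bpred π i)) i :=
      sb_trans (sb_symm (bsucc_sb ho)) (bpred_sb h)
    exact absurd (le_bpred h hlt h3) (not_le.2 h2)

theorem arc_bpred (h : Closer π i) : Arc π (bpred π i) i := by
  refine ⟨bpred_lt h, bpred_sb h, fun m h1 h2 hsb => ?_⟩
  have : SameBlock π m i := sb_trans (sb_symm hsb) (bpred_sb h)
  exact absurd (le_bpred h h2 this) (not_le.2 h1)

theorem arc_eq {a : Fin n} (h : Arc π a i) : Closer π i ∧ a = bpred π i := by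
  have hc : Closer π i := ⟨a, h.1, h.2.1⟩
  refine ⟨hc, ?_⟩
  have h1 : a ≤ bpred π i := le_bpred hc h.1 h.2.1
  rcases eq_or_lt_of_le h1 with he | hlt
  · exact he
  · exact absurd (sb_trans h.2.1 (sb_symm (bpred_sb hc)))
      (h.2.2 _ hlt (bpred_lt hc))

theorem arc_iff {a b : Fin n} : Arc π a b ↔ Closer π b ∧ a = bpred π b := by
  constructor
  · exact arc_eq
  · rintro ⟨hc, rfl⟩; exact arc_bpred hc

/-- In a nonnesting partition, `bpred` is strictly monotone on closers. -/
theorem nn_mono (hnn : Nonnesting π) {x y : Fin n} (hx : Closer π x) (hy : Closer π y)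
    (hxy : x < y) : bpred π x < bpred π y := by
  rcases lt_trichotomy (bpred π x) (bpred π y) with h | h | h
  · exact h
  · exfalso
    have := (bsucc_bpred hx).symm.trans (h ▸ bsucc_bpred hy)
    exact absurd this (ne_of_lt hxy)
  · exfalso
    exact hnn ⟨bpred π y, bpred π x, x, y, h, bpred_lt hx, hxy,
      arc_bpred hy, arc_bpred hx⟩

theorem mono_nn
    (h : ∀ x y : Fin n, Closer π x → Closer π y → x < y → bpred π x < bpred π y) :
    Nonnesting π := by
  rintro ⟨i, j, k, l, hij, hjk, hkl, hil, hjk'⟩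
  obtain ⟨hcl, rfl⟩ := arc_eq hil
  obtain ⟨hck, rfl⟩ := arc_eq hjk'
  exact absurd (h k l hck hcl hkl) (not_lt.2 (le_of_lt hij))

end predsucc

end NNCount

namespace NNCount
open Finset DyckStep

open Finset

variable {n : ℕ}

/-- Number of "openers" among positions `< m`. -/
def Ao (f : Fin n → Bool × Bool) (m : ℕ) : ℕ :=
  (univ.filter fun j : Fin n => j.val < m ∧ (f j).1 = true).card

/-- Number of "closers" among positions `< m`. -/
def Bc (f : Fin n → Bool × Bool) (m : ℕ) : ℕ :=
  (univ.filter fun j : Fin n => j.val < m ∧ (f j).2 = true).card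

def Valid (f : Fin n → Bool × Bool) : Prop :=
  (∀ i : Fin n, Bc f (i.val + 1) ≤ Ao f i.val) ∧ Ao f n = Bc f n

open Classical in
/-- The opener/closer data of a partition. -/
noncomputable def obit (π : Finpartition (univ : Finset (Fin n))) (i : Fin n) : Bool × Bool :=
  (decide (Opener π i), decide (Closer π i))

section counting
variable (π : Finpartition (univ : Finset (Fin n)))

open Classical

theorem Ao_obit (m : ℕ) :
    Ao (obit π) m = (univ.filter fun j : Fin n => j.val < m ∧ Opener π j).card := by
  classical
  unfold Ao
  congr 1
  apply Finset.filter_congr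
  intro j _
  simp [obit]

theorem Bc_obit (m : ℕ) :
    Bc (obit π) m = (univ.filter fun j : Fin n => j.val < m ∧ Closer π j).card := by
  classical
  unfold Bc
  congr 1
  apply Finset.filter_congr
  intro j _
  simp [obit]

theorem card_closer_eq :
    (univ.filter fun j : Fin n => j.val < n ∧ Closer π j).card
      = (univ.filter fun j : Fin n => j.val < n ∧ Opener π j).card := by
  classical
  apply Finset.card_bij' (fun a _ => bpred π a) (fun b _ => bsucc π b)
  · intro a ha
    simp only [mem_filter, mem_univ, true_and] at ha ⊢
    exact ⟨(bpred π a).isLt, bpred_opener ha.2⟩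
  · intro b hb
    simp only [mem_filter, mem_univ, true_and] at hb ⊢
    exact ⟨(bsucc π b).isLt, bsucc_closer hb.2⟩
  · intro a ha
    simp only [mem_filter, mem_univ, true_and] at ha
    exact bsucc_bpred ha.2
  · intro b hb
    simp only [mem_filter, mem_univ, true_and] at hb
    exact bpred_bsucc hb.2

theorem prefix_ineq (i : Fin n) :
    (univ.filter fun x : Fin n => x.val < i.val + 1 ∧ Closer π x).card
      ≤ (univ.filter fun x : Fin n => x.val < i.val ∧ Opener π x).card := by
  classical
  apply Finset.card_le_card_of_injOn (fun a => bpred π a)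
  · intro a ha
    simp only [Finset.mem_coe, mem_filter, mem_univ, true_and] at ha ⊢
    refine ⟨?_, bpred_opener ha.2⟩
    have h1 : bpred π a < a := bpred_lt ha.2
    have := ha.1
    omega
  · intro a ha b hb hab
    simp only [coe_filter, Set.mem_setOf_eq, mem_univ, true_and] at ha hb
    have hab' : bpred π a = bpred π b := hab
    calc a = bsucc π (bpred π a) := (bsucc_bpred ha.2).symm
    _ = bsucc π (bpred π b) := by rw [hab']
    _ = b := bsucc_bpred hb.2

theorem obit_valid : Valid (obit π) := by
  constructor
  · intro i
    rw [Ao_obit, Bc_obit]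
    exact prefix_ineq π i
  · rw [Ao_obit, Bc_obit]
    exact (card_closer_eq π).symm

end counting

section inj

variable {π π' : Finpartition (univ : Finset (Fin n))}

/-- For two nonnesting partitions with the same opener and closer sets, the `bpred`
functions agree on closers. -/
theorem bpred_eq (hnn : Nonnesting π) (hnn' : Nonnesting π')
    (hC : ∀ i, Closer π i ↔ Closer π' i) (hO : ∀ i, Opener π i ↔ Opener π' i)
    {i : Fin n} (hi : Closer π i) : bpred π i = bpred π' i := by
  classical
  set Cs : Finset (Fin n) := univ.filter fun j => Closer π j with hCs
  set Os : Finset (Fin n) := univ.filter fun j => Opener π j with hOs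
  have hcard : Os.card = Cs.card := by
    have h1 := card_closer_eq π
    have e1 : (univ.filter fun j : Fin n => j.val < n ∧ Closer π j) = Cs := by
      apply Finset.filter_congr; intro j _; simp [j.isLt]
    have e2 : (univ.filter fun j : Fin n => j.val < n ∧ Opener π j) = Os := by
      apply Finset.filter_congr; intro j _; simp [j.isLt]
    rw [e1, e2] at h1
    exact h1.symm
  have hmem : ∀ r : Fin Cs.card, Cs.orderEmbOfFin rfl r ∈ Cs := fun r =>
    Finset.orderEmbOfFin_mem _ _ _
  have hclo : ∀ r : Fin Cs.card, Closer π (Cs.orderEmbOfFin rfl r) := by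
    intro r
    have := hmem r
    simp only [hCs, mem_filter] at this
    exact this.2
  have key : ∀ (ρ : Finpartition (univ : Finset (Fin n))), Nonnesting ρ →
      (∀ j, Closer ρ j ↔ Closer π j) → (∀ j, Opener ρ j ↔ Opener π j) →
      (fun r : Fin Cs.card => bpred ρ (Cs.orderEmbOfFin rfl r)) = Os.orderEmbOfFin hcard := by
    intro ρ hnnρ hCρ hOρ
    apply Finset.orderEmbOfFin_unique
    · intro r
      simp only [hOs, mem_filter, mem_univ, true_and]
      exact (hOρ _).1 (bpred_opener ((hCρ _).2 (hclo r)))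
    · intro a b hab
      exact nn_mono hnnρ ((hCρ _).2 (hclo a)) ((hCρ _).2 (hclo b))
        ((Cs.orderEmbOfFin rfl).strictMono hab)
  have k1 := key π hnn (fun _ => Iff.rfl) (fun _ => Iff.rfl)
  have k2 := key π' hnn' (fun j => (hC j).symm) (fun j => (hO j).symm)
  have hiC : i ∈ Cs := by simp [hCs, hi]
  have : ∃ r : Fin Cs.card, Cs.orderEmbOfFin rfl r = i := by
    have := Finset.range_orderEmbOfFin Cs (rfl : Cs.card = Cs.card)
    have hmem2 : (i : Fin n) ∈ Set.range (Cs.orderEmbOfFin rfl) := by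
      rw [this]; exact_mod_cast hiC
    exact hmem2
  obtain ⟨r, hr⟩ := this
  have e1 : bpred π (Cs.orderEmbOfFin rfl r) = Os.orderEmbOfFin hcard r := congrFun k1 r
  have e2 : bpred π' (Cs.orderEmbOfFin rfl r) = Os.orderEmbOfFin hcard r := congrFun k2 r
  rw [← hr, e1, e2]

end inj

end NNCount

namespace NNCount
open Finset DyckStep

open Finset

variable {n : ℕ}

theorem sb_lt_iff {π : Finpartition (univ : Finset (Fin n))} {i j : Fin n} (hij : i < j) :
    SameBlock π i j ↔ Closer π j ∧ i ≤ bpred π j ∧ SameBlock π i (bpred π j) := by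
  constructor
  · intro h
    have hc : Closer π j := ⟨i, hij, h⟩
    exact ⟨hc, le_bpred hc hij h, sb_trans h (sb_symm (bpred_sb hc))⟩
  · rintro ⟨hc, _, hsb⟩
    exact sb_trans hsb (bpred_sb hc)

theorem sb_ext {π π' : Finpartition (univ : Finset (Fin n))}
    (hC : ∀ i, Closer π i ↔ Closer π' i)
    (hp : ∀ i, Closer π i → bpred π i = bpred π' i) :
    ∀ i j : Fin n, SameBlock π i j ↔ SameBlock π' i j := by
  have key : ∀ m : ℕ, ∀ j i : Fin n, j.val < m → i ≤ j →
      (SameBlock π i j ↔ SameBlock π' i j) := by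
    intro m
    induction m with
    | zero => omega
    | succ m ih =>
      intro j i hj hij
      rcases eq_or_lt_of_le hij with rfl | hlt
      · simp [sb_refl]
      · rw [sb_lt_iff hlt, sb_lt_iff hlt, hC j]
        constructor
        · rintro ⟨hc', hle, hsb⟩
          have hc : Closer π j := (hC j).2 hc'
          have hpe := hp j hc
          have hpl : (bpred π j).val < m := by
            have := bpred_lt hc
            simp only [Fin.lt_def] at this
            omega
          refine ⟨hc', hpe ▸ hle, hpe ▸ (ih (bpred π j) i hpl hle).1 hsb⟩
        · rintro ⟨hc', hle, hsb⟩
          have hc : Closer π j := (hC j).2 hc'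
          have hpe := hp j hc
          have hpl : (bpred π j).val < m := by
            have := bpred_lt hc
            simp only [Fin.lt_def] at this
            omega
          rw [← hpe] at hle hsb
          exact ⟨hc', hle, (ih (bpred π j) i hpl hle).2 hsb⟩
  intro i j
  rcases le_total i j with h | h
  · exact key (j.val + 1) j i (Nat.lt_succ_self _) h
  · constructor
    · intro hs; exact sb_symm ((key (i.val + 1) i j (Nat.lt_succ_self _) h).1 (sb_symm hs))
    · intro hs; exact sb_symm ((key (i.val + 1) i j (Nat.lt_succ_self _) h).2 (sb_symm hs))

theorem mem_part_iff_sb {π : Finpartition (univ : Finset (Fin n))} {i j : Fin n} :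
    j ∈ π.part i ↔ SameBlock π i j := by
  constructor
  · intro h
    exact ⟨π.part i, π.part_mem.2 (mem_univ i), π.mem_part (mem_univ i), h⟩
  · rintro ⟨b, hb, hi, hj⟩
    rwa [π.part_eq_of_mem hb hi]

theorem parts_subset_of_sb {π π' : Finpartition (univ : Finset (Fin n))}
    (h : ∀ i j, SameBlock π i j ↔ SameBlock π' i j) : π.parts ⊆ π'.parts := by
  intro b hb
  obtain ⟨i, hi⟩ := π.nonempty_of_mem_parts hb
  have : b = π'.part i := by
    ext j
    rw [mem_part_iff_sb, ← h]
    constructor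
    · intro hj; exact ⟨b, hb, hi, hj⟩
    · rintro ⟨c, hc, hi', hj'⟩
      rwa [π.eq_of_mem_parts hb hc hi hi']
  rw [this]
  exact π'.part_mem.2 (mem_univ i)

theorem eq_of_sb {π π' : Finpartition (univ : Finset (Fin n))}
    (h : ∀ i j, SameBlock π i j ↔ SameBlock π' i j) : π = π' := by
  ext b
  constructor
  · intro hb; exact parts_subset_of_sb h hb
  · intro hb; exact parts_subset_of_sb (fun i j => (h i j).symm) hb

/-- Two nonnesting partitions with the same opener/closer data are equal. -/
theorem nn_inj {π π' : Finpartition (univ : Finset (Fin n))}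
    (hnn : Nonnesting π) (hnn' : Nonnesting π') (h : obit π = obit π') : π = π' := by
  classical
  have hO : ∀ i, Opener π i ↔ Opener π' i := by
    intro i
    have := congrFun h i
    have h1 : decide (Opener π i) = decide (Opener π' i) := congrArg Prod.fst this
    constructor <;> intro hx
    · exact of_decide_eq_true (h1 ▸ decide_eq_true hx)
    · exact of_decide_eq_true (h1.symm ▸ decide_eq_true hx)
  have hC : ∀ i, Closer π i ↔ Closer π' i := by
    intro i
    have := congrFun h i
    have h1 : decide (Closer π i) = decide (Closer π' i) := congrArg Prod.snd this
    constructor <;> intro hx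
    · exact of_decide_eq_true (h1 ▸ decide_eq_true hx)
    · exact of_decide_eq_true (h1.symm ▸ decide_eq_true hx)
  exact eq_of_sb (sb_ext hC (fun i hi => bpred_eq hnn hnn' hC hO hi))

end NNCount

namespace NNCount
open Finset DyckStep

open Finset

variable {n : ℕ}

section construct

variable (f : Fin n → Bool × Bool)

def Cf : Finset (Fin n) := univ.filter fun j => (f j).2 = true
def Of : Finset (Fin n) := univ.filter fun j => (f j).1 = true

/-- The canonical matching sending the `r`-th closer to the `r`-th opener. -/
noncomputable def gmap (x : Fin n) : Fin n :=
  if h : (Of f).card = (Cf f).card ∧ x ∈ Cf f then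
    ((Of f).orderIsoOfFin h.1 (((Cf f).orderIsoOfFin rfl).symm ⟨x, h.2⟩) : Fin n)
  else x

/-- The least element of the block of `x` in the partition generated by `gmap`. -/
noncomputable def root (x : Fin n) : Fin n :=
  if h : gmap f x < x then root (gmap f x) else x
termination_by x.val
decreasing_by exact h

theorem root_eq_of_lt {x : Fin n} (h : gmap f x < x) : root f x = root f (gmap f x) := by
  rw [root, dif_pos h]

theorem root_eq_of_not {x : Fin n} (h : ¬ gmap f x < x) : root f x = x := by
  rw [root, dif_neg h]

theorem root_le : ∀ x : Fin n, root f x ≤ x := by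
  have : ∀ m : ℕ, ∀ x : Fin n, x.val < m → root f x ≤ x := by
    intro m
    induction m with
    | zero => omega
    | succ m ih =>
      intro x hx
      by_cases h : gmap f x < x
      · rw [root_eq_of_lt f h]
        have h2 : (gmap f x).val < m := by
          have := h
          simp only [Fin.lt_def] at this
          omega
        exact le_of_lt (lt_of_le_of_lt (ih _ h2) h)
      · rw [root_eq_of_not f h]
  exact fun x => this (x.val + 1) x (Nat.lt_succ_self _)

variable (hv : Valid f)
include hv

theorem hcard : (Of f).card = (Cf f).card := by
  have h2 := hv.2
  have e1 : Ao f n = (Of f).card := by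
    unfold Ao Of
    congr 1
    apply Finset.filter_congr
    intro j _
    simp [j.isLt]
  have e2 : Bc f n = (Cf f).card := by
    unfold Bc Cf
    congr 1
    apply Finset.filter_congr
    intro j _
    simp [j.isLt]
  rw [e1, e2] at h2
  exact h2

theorem gmap_def {x : Fin n} (hx : x ∈ Cf f) :
    gmap f x = ((Of f).orderIsoOfFin (hcard f hv)
      (((Cf f).orderIsoOfFin rfl).symm ⟨x, hx⟩) : Fin n) := by
  rw [gmap, dif_pos ⟨hcard f hv, hx⟩]

theorem gmap_mem {x : Fin n} (hx : x ∈ Cf f) : gmap f x ∈ Of f := by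
  rw [gmap_def f hv hx]
  exact Finset.coe_mem _

theorem gmap_eq_self {x : Fin n} (hx : x ∉ Cf f) : gmap f x = x := by
  rw [gmap, dif_neg (fun h => hx h.2)]

theorem gmap_lt {x : Fin n} (hx : x ∈ Cf f) : gmap f x < x := by
  classical
  set eC := (Cf f).orderIsoOfFin (rfl : (Cf f).card = (Cf f).card) with heC
  set eO := (Of f).orderIsoOfFin (hcard f hv) with heO
  set r : Fin (Cf f).card := eC.symm ⟨x, hx⟩ with hr
  have hrx : (eC r : Fin n) = x := by rw [hr, OrderIso.apply_symm_apply]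
  -- Step 1 : r.val + 1 ≤ Bc f (x.val + 1)
  have step1 : r.val + 1 ≤ Bc f (x.val + 1) := by
    have hle : r.val + 1 ≤ (Cf f).card := r.isLt
    have hmem : ∀ s : Fin (r.val + 1),
        (eC (Fin.castLE hle s) : Fin n)
          ∈ (univ.filter fun j : Fin n => j.val < x.val + 1 ∧ (f j).2 = true) := by
      intro s
      simp only [mem_filter, mem_univ, true_and]
      constructor
      · have h1 : (eC (Fin.castLE hle s) : Fin n) ≤ (eC r : Fin n) :=
          Subtype.coe_le_coe.2 (eC.monotone (by
            simp only [Fin.le_def, Fin.coe_castLE]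
            omega))
        rw [hrx] at h1
        omega
      · have h2 := (eC (Fin.castLE hle s)).2
        simp only [Cf, mem_filter] at h2
        exact h2.2
    have hinj : Set.InjOn (fun s : Fin (r.val + 1) => (eC (Fin.castLE hle s) : Fin n))
        ↑(univ : Finset (Fin (r.val + 1))) := by
      intro a _ b _ hab
      have h3 : Fin.castLE hle a = Fin.castLE hle b :=
        eC.injective (Subtype.coe_injective hab)
      exact Fin.ext (by simpa [Fin.ext_iff] using h3)
    calc r.val + 1 = (univ : Finset (Fin (r.val + 1))).card := by simp
      _ ≤ _ := Finset.card_le_card_of_injOn _ (fun s _ => hmem s) hinj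
  -- Step 2 : Bc f (x.val + 1) ≤ Ao f x.val
  have step2 : Bc f (x.val + 1) ≤ Ao f x.val := hv.1 x
  -- Step 3 : conclude (eO r : Fin n) < x
  have step3 : (eO r : Fin n) < x := by
    by_contra hcon
    push_neg at hcon
    have hub : Ao f x.val ≤ r.val := by
      have hmem : ∀ j ∈ (univ.filter fun j : Fin n => j.val < x.val ∧ (f j).1 = true),
          (if h : j ∈ Of f then ((eO.symm ⟨j, h⟩ : Fin (Cf f).card) : ℕ) else 0)
            ∈ Finset.range r.val := by
        intro j hj
        simp only [mem_filter, mem_univ, true_and] at hj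
        have hjO : j ∈ Of f := by simp only [Of, mem_filter]; exact ⟨mem_univ _, hj.2⟩
        rw [dif_pos hjO, Finset.mem_range]
        have hlt : (⟨j, hjO⟩ : Of f) < eO r := by
          rw [Subtype.mk_lt_mk]
          exact lt_of_lt_of_le (by exact Fin.lt_def.2 hj.1) hcon
        have := eO.symm.strictMono hlt
        rwa [OrderIso.symm_apply_apply] at this
      have hinj : Set.InjOn
          (fun j : Fin n => if h : j ∈ Of f then ((eO.symm ⟨j, h⟩ : Fin (Cf f).card) : ℕ) else 0)
          ↑(univ.filter fun j : Fin n => j.val < x.val ∧ (f j).1 = true) := by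
        intro a ha b hb hab
        simp only [coe_filter, Set.mem_setOf_eq, mem_univ, true_and] at ha hb
        have haO : a ∈ Of f := by simp only [Of, mem_filter]; exact ⟨mem_univ _, ha.2⟩
        have hbO : b ∈ Of f := by simp only [Of, mem_filter]; exact ⟨mem_univ _, hb.2⟩
        simp only [dif_pos haO, dif_pos hbO] at hab
        have : eO.symm ⟨a, haO⟩ = eO.symm ⟨b, hbO⟩ := Fin.ext hab
        have := eO.symm.injective this
        exact congrArg Subtype.val this
      calc Ao f x.val ≤ (Finset.range r.val).card :=
            Finset.card_le_card_of_injOn _ hmem hinj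
        _ = r.val := Finset.card_range _
    omega
  rw [gmap_def f hv hx]
  exact step3

theorem gmap_strictMono {x y : Fin n} (hx : x ∈ Cf f) (hy : y ∈ Cf f) (hxy : x < y) :
    gmap f x < gmap f y := by
  rw [gmap_def f hv hx, gmap_def f hv hy]
  have h1 : (⟨x, hx⟩ : Cf f) < ⟨y, hy⟩ := by rw [Subtype.mk_lt_mk]; exact hxy
  have h2 := ((Cf f).orderIsoOfFin rfl).symm.strictMono h1
  exact Subtype.coe_lt_coe.2 (((Of f).orderIsoOfFin (hcard f hv)).strictMono h2)

theorem gmap_surj {o : Fin n} (ho : o ∈ Of f) :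
    ∃ x ∈ Cf f, gmap f x = o := by
  set eC := (Cf f).orderIsoOfFin (rfl : (Cf f).card = (Cf f).card)
  set eO := (Of f).orderIsoOfFin (hcard f hv)
  refine ⟨(eC (eO.symm ⟨o, ho⟩) : Fin n), (eC (eO.symm ⟨o, ho⟩)).2, ?_⟩
  rw [gmap_def f hv (eC (eO.symm ⟨o, ho⟩)).2]
  have : eC.symm ⟨(eC (eO.symm ⟨o, ho⟩) : Fin n), (eC (eO.symm ⟨o, ho⟩)).2⟩
      = eO.symm ⟨o, ho⟩ := by
    rw [show (⟨(eC (eO.symm ⟨o, ho⟩) : Fin n), (eC (eO.symm ⟨o, ho⟩)).2⟩ : Cf f)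
        = eC (eO.symm ⟨o, ho⟩) from rfl, OrderIso.symm_apply_apply]
  rw [this, OrderIso.apply_symm_apply]

end construct

end NNCount

namespace NNCount
open Finset DyckStep

open Finset

variable {n : ℕ}

section construct2

variable (f : Fin n → Bool × Bool) (hv : Valid f)
include hv

theorem gmap_lt_iff {x : Fin n} : gmap f x < x ↔ x ∈ Cf f := by
  constructor
  · intro h
    by_contra hx
    rw [gmap_eq_self f hv hx] at h
    exact lt_irrefl _ h
  · exact gmap_lt f hv

theorem root_eq_self_iff {x : Fin n} : root f x = x ↔ x ∉ Cf f := by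
  constructor
  · intro h hx
    have h1 : gmap f x < x := gmap_lt f hv hx
    have h3 : root f x = root f (gmap f x) := root_eq_of_lt f h1
    have h2 : root f (gmap f x) ≤ gmap f x := root_le f _
    rw [h] at h3
    rw [← h3] at h2
    exact absurd h2 (not_le.2 h1)
  · intro hx
    exact root_eq_of_not f (by rw [gmap_eq_self f hv hx]; exact lt_irrefl x)

theorem mem_Cf_of_root_lt {x : Fin n} (h : root f x < x) : x ∈ Cf f := by
  by_contra hx
  rw [root_eq_self_iff f hv |>.2 hx] at h
  exact lt_irrefl _ h

theorem root_gmap {x : Fin n} (hx : x ∈ Cf f) : root f (gmap f x) = root f x :=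
  (root_eq_of_lt f (gmap_lt f hv hx)).symm

/-- The chain lemma: any element of the block of `y` that is below `y` is at most `gmap f y`. -/
theorem chain_le : ∀ y : Fin n, y ∈ Cf f → ∀ x : Fin n, root f x = root f y → x < y →
    x ≤ gmap f y := by
  have key : ∀ m : ℕ, ∀ y : Fin n, y.val < m → y ∈ Cf f → ∀ x : Fin n,
      root f x = root f y → x < y → x ≤ gmap f y := by
    intro m
    induction m with
    | zero => omega
    | succ m ih =>
      intro y hy hyC x hroot hxy
      by_contra hcon
      push_neg at hcon  -- gmap f y < x
      have hxroot : root f x < x := by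
        calc root f x = root f (gmap f y) := by rw [hroot, root_gmap f hv hyC]
        _ ≤ gmap f y := root_le f _
        _ < x := hcon
      have hxC : x ∈ Cf f := mem_Cf_of_root_lt f hv hxroot
      have hgm : gmap f x < gmap f y := gmap_strictMono f hv hxC hyC hxy
      have hgy : gmap f y ≤ gmap f x := by
        apply ih x (by have := Fin.lt_def.1 hxy; omega) hxC
        · rw [root_gmap f hv hyC, hroot]
        · exact hcon
      exact absurd hgm (not_lt.2 hgy)
  exact fun y hyC x h1 h2 => key (y.val + 1) y (Nat.lt_succ_self _) hyC x h1 h2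

noncomputable instance rootDecRel : DecidableRel ⇑(Setoid.ker (root f)) :=
  fun _ _ => Classical.dec _

/-- The partition generated by the canonical matching. -/
noncomputable def genPart : Finpartition (univ : Finset (Fin n)) :=
  Finpartition.ofSetoid (Setoid.ker (root f))

omit hv in
theorem sb_genPart {i j : Fin n} : SameBlock (genPart f) i j ↔ root f i = root f j := by
  have hrel : ∀ a b : Fin n, (Setoid.ker (root f)).r a b ↔ root f a = root f b := by
    intro a b; rfl
  constructor
  · rintro ⟨b, hb, hi, hj⟩
    have := (genPart f).part_eq_of_mem hb hi
    rw [← this] at hj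
    have := Finpartition.mem_part_ofSetoid_iff_rel.1 hj
    exact this
  · intro h
    refine ⟨(genPart f).part i, (genPart f).part_mem.2 (mem_univ i),
      (genPart f).mem_part (mem_univ i), ?_⟩
    exact Finpartition.mem_part_ofSetoid_iff_rel.2 h

theorem closer_genPart {x : Fin n} : Closer (genPart f) x ↔ x ∈ Cf f := by
  constructor
  · rintro ⟨j, hj, hsb⟩
    have h1 : root f j = root f x := (sb_genPart f).1 hsb
    apply mem_Cf_of_root_lt f hv
    calc root f x = root f j := h1.symm
    _ ≤ j := root_le f _
    _ < x := hj
  · intro hx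
    exact ⟨gmap f x, gmap_lt f hv hx, (sb_genPart f).2 (root_gmap f hv hx)⟩

theorem opener_genPart {x : Fin n} : Opener (genPart f) x ↔ x ∈ Of f := by
  constructor
  · rintro ⟨j, hj, hsb⟩
    have h1 : root f x = root f j := (sb_genPart f).1 hsb
    -- strong induction on j
    have key : ∀ m : ℕ, ∀ j : Fin n, j.val < m → ∀ i : Fin n, i < j →
        root f i = root f j → i ∈ Of f := by
      intro m
      induction m with
      | zero => omega
      | succ m ih =>
        intro j hj i hij hroot
        have hjC : j ∈ Cf f := by
          apply mem_Cf_of_root_lt f hv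
          calc root f j = root f i := hroot.symm
          _ ≤ i := root_le f _
          _ < j := hij
        have hle : i ≤ gmap f j := chain_le f hv j hjC i hroot hij
        rcases eq_or_lt_of_le hle with he | hlt
        · rw [he]
          exact gmap_mem f hv hjC
        · apply ih (gmap f j) (by have h2 := Fin.lt_def.1 (gmap_lt f hv hjC); omega) i hlt
          rw [hroot, root_gmap f hv hjC]
    exact key (j.val + 1) j (Nat.lt_succ_self _) x hj h1
  · intro hx
    obtain ⟨y, hyC, hgy⟩ := gmap_surj f hv hx
    refine ⟨y, ?_, (sb_genPart f).2 ?_⟩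
    · rw [← hgy]; exact gmap_lt f hv hyC
    · rw [← hgy, root_gmap f hv hyC]

theorem bpred_genPart {x : Fin n} (hx : x ∈ Cf f) :
    bpred (genPart f) x = gmap f x := by
  have hc : Closer (genPart f) x := (closer_genPart f hv).2 hx
  apply le_antisymm
  · -- bpred ≤ gmap via chain lemma
    have h1 : bpred (genPart f) x < x := bpred_lt hc
    have h2 : SameBlock (genPart f) (bpred (genPart f) x) x := bpred_sb hc
    exact chain_le f hv x hx _ ((sb_genPart f).1 h2) h1
  · exact le_bpred hc (gmap_lt f hv hx) ((sb_genPart f).2 (root_gmap f hv hx))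

theorem nonnesting_genPart : Nonnesting (genPart f) := by
  apply mono_nn
  intro x y hx hy hxy
  rw [closer_genPart f hv] at hx hy
  rw [bpred_genPart f hv hx, bpred_genPart f hv hy]
  exact gmap_strictMono f hv hx hy hxy

theorem obit_genPart : obit (genPart f) = f := by
  classical
  funext i
  have h1 : Opener (genPart f) i ↔ (f i).1 = true := by
    rw [opener_genPart f hv, Of, mem_filter]
    simp
  have h2 : Closer (genPart f) i ↔ (f i).2 = true := by
    rw [closer_genPart f hv, Cf, mem_filter]
    simp
  have e1 : decide (Opener (genPart f) i) = (f i).1 := by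
    rcases hb : (f i).1 with _ | _
    · simp only [decide_eq_false_iff_not]
      rw [h1, hb]; simp
    · simp only [decide_eq_true_eq]
      rw [h1, hb]
  have e2 : decide (Closer (genPart f) i) = (f i).2 := by
    rcases hb : (f i).2 with _ | _
    · simp only [decide_eq_false_iff_not]
      rw [h2, hb]; simp
    · simp only [decide_eq_true_eq]
      rw [h2, hb]
  rw [obit, e1, e2]

end construct2

/-- The key bijection: nonnesting partitions correspond to valid opener/closer data. -/
noncomputable def nnEquiv :
    {π : Finpartition (univ : Finset (Fin n)) // Nonnesting π} ≃
      {f : Fin n → Bool × Bool // Valid f} := by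
  apply Equiv.ofBijective (fun π => ⟨obit π.1, obit_valid π.1⟩)
  constructor
  · rintro ⟨π, hπ⟩ ⟨π', hπ'⟩ h
    exact Subtype.ext (nn_inj hπ hπ' (congrArg Subtype.val h))
  · rintro ⟨f, hf⟩
    exact ⟨⟨genPart f, nonnesting_genPart f hf⟩, Subtype.ext (obit_genPart f hf)⟩

end NNCount


namespace NNCount
open Finset DyckStep

variable {n : ℕ}

theorem cnt_zero (p : Fin n → Bool) :
    (univ.filter fun j : Fin n => j.val < 0 ∧ p j = true).card = 0 := by
  simp

theorem cnt_succ (p : Fin n → Bool) {i : ℕ} (h : i < n) :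
    (univ.filter fun j : Fin n => j.val < i + 1 ∧ p j = true).card
      = (univ.filter fun j : Fin n => j.val < i ∧ p j = true).card
        + (if p ⟨i, h⟩ = true then 1 else 0) := by
  classical
  by_cases hb : p ⟨i, h⟩ = true
  · rw [if_pos hb]
    have he : (univ.filter fun j : Fin n => j.val < i + 1 ∧ p j = true)
        = insert ⟨i, h⟩ (univ.filter fun j : Fin n => j.val < i ∧ p j = true) := by
      ext j
      simp only [mem_filter, mem_univ, true_and, mem_insert]
      constructor
      · rintro ⟨hj1, hj2⟩
        rcases Nat.lt_succ_iff_lt_or_eq.1 hj1 with h2 | h2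
        · exact Or.inr ⟨h2, hj2⟩
        · exact Or.inl (Fin.ext h2)
      · rintro (rfl | ⟨hj1, hj2⟩)
        · exact ⟨Nat.lt_succ_self _, hb⟩
        · exact ⟨Nat.lt_succ_of_lt hj1, hj2⟩
    rw [he, Finset.card_insert_of_notMem (by simp)]
  · rw [if_neg hb]
    have he : (univ.filter fun j : Fin n => j.val < i + 1 ∧ p j = true)
        = univ.filter fun j : Fin n => j.val < i ∧ p j = true := by
      ext j
      simp only [mem_filter, mem_univ, true_and]
      constructor
      · rintro ⟨hj1, hj2⟩
        rcases Nat.lt_succ_iff_lt_or_eq.1 hj1 with h2 | h2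
        · exact ⟨h2, hj2⟩
        · exact absurd (((Fin.ext h2 : j = ⟨i, h⟩)) ▸ hj2) hb
      · rintro ⟨hj1, hj2⟩
        exact ⟨Nat.lt_succ_of_lt hj1, hj2⟩
    rw [he, Nat.add_zero]

theorem cnt_mono (p : Fin n → Bool) {m m' : ℕ} (h : m ≤ m') :
    (univ.filter fun j : Fin n => j.val < m ∧ p j = true).card
      ≤ (univ.filter fun j : Fin n => j.val < m' ∧ p j = true).card := by
  classical
  apply Finset.card_le_card
  intro j hj
  simp only [mem_filter, mem_univ, true_and] at hj ⊢
  exact ⟨lt_of_lt_of_le hj.1 h, hj.2⟩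

/-- The `j`-th step of the Dyck word associated to opener/closer data. -/
def stp (f : Fin n → Bool × Bool) (j : ℕ) : DyckStep :=
  if h : j / 2 < n then
    (if j % 2 = 0 then (if (f ⟨j / 2, h⟩).2 = true then D else U)
     else (if (f ⟨j / 2, h⟩).1 = true then U else D))
  else U

/-- The Dyck word associated to opener/closer data. -/
def wd (f : Fin n → Bool × Bool) : List DyckStep :=
  List.ofFn fun j : Fin (2 * n) => stp f j.val

theorem length_wd (f : Fin n → Bool × Bool) : (wd f).length = 2 * n := by
  simp [wd]

theorem getElem_wd (f : Fin n → Bool × Bool) {j : ℕ} (h : j < (wd f).length) :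
    (wd f)[j] = stp f j := by
  simp [wd]

theorem stp_even (f : Fin n → Bool × Bool) {i : ℕ} (h : i < n) :
    stp f (2 * i) = if (f ⟨i, h⟩).2 = true then D else U := by
  have e1 : 2 * i / 2 = i := by omega
  have e2 : 2 * i % 2 = 0 := by omega
  simp only [stp, e1, e2, dif_pos h]
  norm_num

theorem stp_odd (f : Fin n → Bool × Bool) {i : ℕ} (h : i < n) :
    stp f (2 * i + 1) = if (f ⟨i, h⟩).1 = true then U else D := by
  have e1 : (2 * i + 1) / 2 = i := by omega
  have e2 : (2 * i + 1) % 2 = 1 := by omega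
  simp only [stp, e1, e2, dif_pos h]
  norm_num

theorem take_wd_succ (f : Fin n → Bool × Bool) {m : ℕ} (hm : m < 2 * n) :
    (wd f).take (m + 1) = (wd f).take m ++ [stp f m] := by
  have hl : m < (wd f).length := by rw [length_wd]; omega
  rw [List.take_succ, List.getElem?_eq_getElem hl, getElem_wd f hl]
  rfl

theorem count_U_add_D (l : List DyckStep) : l.count U + l.count D = l.length := by
  induction l with
  | nil => rfl
  | cons a l ih =>
    rcases a.dichotomy with rfl | rfl <;>
      simp only [List.count_cons, List.length_cons] <;> simp <;> omega

/-- The fundamental counting identity at even prefixes. -/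
theorem countU_even (f : Fin n → Bool × Bool) :
    ∀ i, i ≤ n → ((wd f).take (2 * i)).count U + Bc f i = i + Ao f i := by
  intro i
  induction i with
  | zero => simp [Ao, Bc]
  | succ i ih =>
    intro hi
    have hin : i < n := hi
    have h1 : 2 * i + 1 < 2 * n := by omega
    have h0 : 2 * i < 2 * n := by omega
    rw [show 2 * (i + 1) = (2 * i + 1) + 1 by ring, take_wd_succ f h1,
      show 2 * i + 1 = (2 * i) + 1 from rfl, take_wd_succ f h0]
    have hA : Ao f (i + 1) = Ao f i + (if (f ⟨i, hin⟩).1 = true then 1 else 0) :=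
      cnt_succ _ hin
    have hB : Bc f (i + 1) = Bc f i + (if (f ⟨i, hin⟩).2 = true then 1 else 0) :=
      cnt_succ _ hin
    have hih := ih (le_of_lt hin)
    rw [stp_even f hin, stp_odd f hin]
    rcases h2 : (f ⟨i, hin⟩).1 <;> rcases h3 : (f ⟨i, hin⟩).2 <;>
      simp only [h2, h3, if_true, if_false, Bool.false_eq_true, List.count_append,
        List.count_cons, List.count_nil, hA, hB] <;> simp <;> omega

theorem countU_odd (f : Fin n → Bool × Bool) {i : ℕ} (hin : i < n) :
    ((wd f).take (2 * i + 1)).count U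
      = ((wd f).take (2 * i)).count U + (if (f ⟨i, hin⟩).2 = true then 0 else 1) := by
  have h0 : 2 * i < 2 * n := by omega
  rw [show 2 * i + 1 = (2 * i) + 1 from rfl, take_wd_succ f h0, stp_even f hin]
  rcases h3 : (f ⟨i, hin⟩).2 <;>
    simp [List.count_append, List.count_cons]

theorem length_take_wd (f : Fin n → Bool × Bool) (m : ℕ) :
    ((wd f).take m).length = min m (2 * n) := by
  rw [List.length_take, length_wd]

theorem bc_le_ao (f : Fin n → Bool × Bool) (hv : Valid f) :
    ∀ i, i ≤ n → Bc f i ≤ Ao f i := by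
  intro i hi
  cases i with
  | zero => simp [Ao, Bc]
  | succ j =>
    have hj : j < n := hi
    calc Bc f (j + 1) ≤ Ao f j := hv.1 ⟨j, hj⟩
    _ ≤ Ao f (j + 1) := cnt_mono _ (Nat.le_succ _)

theorem countU_full (f : Fin n → Bool × Bool) (hv : Valid f) : (wd f).count U = n := by
  have h1 := countU_even f n le_rfl
  have h2 : (wd f).take (2 * n) = wd f := by
    apply List.take_of_length_le
    rw [length_wd]
  rw [h2] at h1
  have := hv.2
  omega

theorem valid_balance (f : Fin n → Bool × Bool) (hv : Valid f) :
    (wd f).count U = (wd f).count D := by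
  have h1 := countU_full f hv
  have h2 := count_U_add_D (wd f)
  rw [length_wd] at h2
  omega

theorem valid_prefix (f : Fin n → Bool × Bool) (hv : Valid f) (m : ℕ) :
    ((wd f).take m).count D ≤ ((wd f).take m).count U := by
  have hsum := count_U_add_D ((wd f).take m)
  rw [length_take_wd] at hsum
  by_cases hm : 2 * n ≤ m
  · have h2 : (wd f).take m = wd f := by
      apply List.take_of_length_le
      rw [length_wd]; omega
    rw [h2]
    rw [valid_balance f hv]
  · push_neg at hm
    obtain ⟨i, hi | hi⟩ : ∃ i, m = 2 * i ∨ m = 2 * i + 1 := ⟨m / 2, by omega⟩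
    · subst hi
      have hin : i ≤ n := by omega
      have he := countU_even f i hin
      have hba := bc_le_ao f hv i hin
      omega
    · subst hi
      have hin : i < n := by omega
      have he := countU_even f i (le_of_lt hin)
      have ho := countU_odd f hin
      have hv1 : Bc f (i + 1) ≤ Ao f i := hv.1 ⟨i, hin⟩
      have hB : Bc f (i + 1) = Bc f i + (if (f ⟨i, hin⟩).2 = true then 1 else 0) :=
        cnt_succ _ hin
      have hA : Ao f i ≤ i := by
        have : (univ.filter fun j : Fin n => j.val < i ∧ (f j).1 = true).card
            ≤ (Finset.range i).card := by
          apply Finset.card_le_card_of_injOn (fun j => j.val)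
          · intro j hj
            simp only [Finset.mem_coe, mem_filter, mem_univ, true_and] at hj
            simp [Finset.mem_range, hj.1]
          · intro a _ b _ hab
            exact Fin.ext hab
        simpa [Ao] using this
      rcases h3 : (f ⟨i, hin⟩).2 <;> rw [h3] at ho hB <;> simp at ho hB <;> omega

theorem valid_of_dyck (f : Fin n → Bool × Bool)
    (hbal : (wd f).count U = (wd f).count D)
    (hpre : ∀ m, ((wd f).take m).count D ≤ ((wd f).take m).count U) :
    Valid f := by
  constructor
  · intro ⟨i, hin⟩
    show Bc f (i + 1) ≤ Ao f i
    have he := countU_even f i (le_of_lt hin)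
    have ho := countU_odd f hin
    have hp := hpre (2 * i + 1)
    have hsum := count_U_add_D ((wd f).take (2 * i + 1))
    rw [length_take_wd] at hsum
    have hmin : min (2 * i + 1) (2 * n) = 2 * i + 1 := by omega
    rw [hmin] at hsum
    have hB : Bc f (i + 1) = Bc f i + (if (f ⟨i, hin⟩).2 = true then 1 else 0) :=
      cnt_succ _ hin
    rcases h3 : (f ⟨i, hin⟩).2 <;> rw [h3] at ho hB <;> simp at ho hB <;> omega
  · have he := countU_even f n le_rfl
    have h2 : (wd f).take (2 * n) = wd f := by
      apply List.take_of_length_le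
      rw [length_wd]
    rw [h2] at he
    have hsum := count_U_add_D (wd f)
    rw [length_wd] at hsum
    omega

end NNCount

namespace NNCount
open Finset DyckStep

variable {n : ℕ}

/-- Opener/closer data extracted from a Dyck word of semilength `n`. -/
def unp (p : DyckWord) (hp : p.semilength = n) : Fin n → Bool × Bool := fun i =>
  ((p.toList[2 * i.val + 1]'(by
      have h := p.two_mul_semilength_eq_length
      have := i.isLt
      omega)) == U,
   (p.toList[2 * i.val]'(by
      have h := p.two_mul_semilength_eq_length
      have := i.isLt
      omega)) == D)

theorem wd_unp (p : DyckWord) (hp : p.semilength = n) : wd (unp p hp) = p.toList := by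
  have hlen : p.toList.length = 2 * n := by
    have := p.two_mul_semilength_eq_length
    omega
  apply List.ext_getElem
  · rw [length_wd, hlen]
  · intro j h1 h2
    rw [getElem_wd]
    obtain ⟨i, rfl | rfl⟩ : ∃ i, j = 2 * i ∨ j = 2 * i + 1 := ⟨j / 2, by omega⟩
    · have hin : i < n := by rw [length_wd] at h1; omega
      rw [stp_even _ hin]
      rcases DyckStep.dichotomy (p.toList[2 * i]'h2) with hs | hs <;>
        simp [unp, hs]
    · have hin : i < n := by rw [length_wd] at h1; omega
      rw [stp_odd _ hin]
      rcases DyckStep.dichotomy (p.toList[2 * i + 1]'h2) with hs | hs <;>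
        simp [unp, hs]

/-- Valid opener/closer data corresponds to Dyck words of semilength `n`. -/
noncomputable def dataDyckEquiv :
    {f : Fin n → Bool × Bool // Valid f} ≃ {p : DyckWord // p.semilength = n} where
  toFun f := ⟨⟨wd f.1, valid_balance f.1 f.2, fun m => valid_prefix f.1 f.2 m⟩,
    countU_full f.1 f.2⟩
  invFun p := ⟨unp p.1 p.2, by
    apply valid_of_dyck
    · rw [wd_unp]; exact p.1.count_U_eq_count_D
    · intro m; rw [wd_unp]; exact p.1.count_D_le_count_U m⟩
  left_inv := by
    rintro ⟨f, hf⟩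
    apply Subtype.ext
    funext i
    show (_ == U, _ == D) = f i
    have h1 : 2 * i.val + 1 < (wd f).length := by rw [length_wd]; have := i.isLt; omega
    have h2 : 2 * i.val < (wd f).length := by rw [length_wd]; have := i.isLt; omega
    rcases hfi : f i with ⟨b1, b2⟩
    rw [Prod.mk.injEq]
    constructor
    · rw [getElem_wd f h1, stp_odd f i.isLt]
      have : f ⟨i.val, i.isLt⟩ = (b1, b2) := by rw [Fin.eta]; exact hfi
      rw [this]
      cases b1 <;> simp
    · rw [getElem_wd f h2, stp_even f i.isLt]
      have : f ⟨i.val, i.isLt⟩ = (b1, b2) := by rw [Fin.eta]; exact hfi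
      rw [this]
      cases b2 <;> simp
  right_inv := by
    rintro ⟨p, hp⟩
    apply Subtype.ext
    apply DyckWord.ext
    exact wd_unp p hp

theorem final_count :
    Nat.card {f : Fin n → Bool × Bool // Valid f} = catalan n := by
  rw [Nat.card_congr (dataDyckEquiv (n := n)), Nat.card_eq_fintype_card]
  exact DyckWord.card_dyckWord_semilength_eq_catalan n

end NNCount


/-- The number of nonnesting set partitions of `{1,...,n}` is the Catalan number `C n`. -/
theorem nonnesting_count (n : ℕ) :
    Nat.card {π : Finpartition (Finset.univ : Finset (Fin n)) // Nonnesting π}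
      = catalan n := by
  rw [Nat.card_congr (NNCount.nnEquiv (n := n))]
  exact NNCount.final_count
end

section
/- The number of noncrossing set partitions of {1,...,n} equals the Catalan number C_n = binomial(2n,n)/(n+1). -/
/-- A set partition is nonnesting if no arc from `i` to `k` crosses an arc from `j`
to `l` with `i < j < k < l`. -/
def Noncrossing {n : ℕ} (π : Finpartition (Finset.univ : Finset (Fin n))) : Prop :=
  ¬ ∃ i j k l : Fin n, i < j ∧ j < k ∧ k < l ∧ Arc π i k ∧ Arc π j l

namespace NCaux

open Finset

variable {n : ℕ}

/-! ### Basic facts about `SameBlock` -/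

lemma sameBlock_iff_mem_part (π : Finpartition (Finset.univ : Finset (Fin n))) (i j : Fin n) :
    SameBlock π i j ↔ j ∈ π.part i := by
  constructor
  · rintro ⟨b, hb, hi, hj⟩
    rwa [π.part_eq_of_mem hb hi]
  · intro h
    exact ⟨π.part i, π.part_mem.2 (mem_univ i), π.mem_part (mem_univ i), h⟩

lemma sameBlock_refl (π : Finpartition (Finset.univ : Finset (Fin n))) (i : Fin n) :
    SameBlock π i i :=
  ⟨π.part i, π.part_mem.2 (mem_univ i), π.mem_part (mem_univ i), π.mem_part (mem_univ i)⟩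

lemma sameBlock_symm {π : Finpartition (Finset.univ : Finset (Fin n))} {i j : Fin n}
    (h : SameBlock π i j) : SameBlock π j i := by
  obtain ⟨b, hb, hi, hj⟩ := h; exact ⟨b, hb, hj, hi⟩

lemma sameBlock_trans {π : Finpartition (Finset.univ : Finset (Fin n))} {i j k : Fin n}
    (h : SameBlock π i j) (h' : SameBlock π j k) : SameBlock π i k := by
  obtain ⟨b, hb, hi, hj⟩ := h
  obtain ⟨c, hc, hj', hk⟩ := h'
  exact ⟨b, hb, hi, by rwa [π.eq_of_mem_parts hb hc hj hj']⟩

lemma sameBlock_equivalence (π : Finpartition (Finset.univ : Finset (Fin n))) :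
    Equivalence (SameBlock π) :=
  ⟨sameBlock_refl π, sameBlock_symm, sameBlock_trans⟩

lemma finpartition_ext {π π' : Finpartition (Finset.univ : Finset (Fin n))}
    (h : ∀ i j, SameBlock π i j ↔ SameBlock π' i j) : π = π' := by
  have hpart : ∀ i : Fin n, π.part i = π'.part i := by
    intro i
    ext j
    rw [← sameBlock_iff_mem_part, ← sameBlock_iff_mem_part, h]
  ext p
  constructor
  · intro hp
    obtain ⟨a, ha⟩ := π.nonempty_of_mem_parts hp
    have : π.part a = p := π.part_eq_of_mem hp ha
    rw [← this, hpart]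
    exact π'.part_mem.2 (mem_univ a)
  · intro hp
    obtain ⟨a, ha⟩ := π'.nonempty_of_mem_parts hp
    have : π'.part a = p := π'.part_eq_of_mem hp ha
    rw [← this, ← hpart]
    exact π.part_mem.2 (mem_univ a)

lemma sameBlock_ofSetoid (s : Setoid (Fin n)) [DecidableRel s.r] (i j : Fin n) :
    SameBlock (Finpartition.ofSetoid s) i j ↔ s.r i j := by
  rw [sameBlock_iff_mem_part, Finpartition.mem_part_ofSetoid_iff_rel]

/-! ### Relation-level notions -/

/-- Arc of a relation. -/
def ArcR (r : Fin n → Fin n → Prop) (i j : Fin n) : Prop :=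
  i < j ∧ r i j ∧ ∀ m : Fin n, i < m → m < j → ¬ r i m

/-- Noncrossing for a relation, arc form. -/
def NCR (r : Fin n → Fin n → Prop) : Prop :=
  ¬ ∃ i j k l : Fin n, i < j ∧ j < k ∧ k < l ∧ ArcR r i k ∧ ArcR r j l

/-- Noncrossing for a relation, quadruple form. -/
def NCQ (r : Fin n → Fin n → Prop) : Prop :=
  ∀ a b c d : Fin n, a < b → b < c → c < d → r a c → r b d → r a b

lemma arcR_congr {r r' : Fin n → Fin n → Prop} (h : ∀ i j, r i j ↔ r' i j) (i j : Fin n) :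
    ArcR r i j ↔ ArcR r' i j := by
  unfold ArcR; simp_rw [h]

lemma ncr_congr {r r' : Fin n → Fin n → Prop} (h : ∀ i j, r i j ↔ r' i j) :
    NCR r ↔ NCR r' := by
  unfold NCR; simp_rw [arcR_congr h]

lemma noncrossing_iff_ncr (π : Finpartition (Finset.univ : Finset (Fin n))) :
    Noncrossing π ↔ NCR (SameBlock π) := Iff.rfl

/-- From a related pair spanning a gap, extract an arc spanning the gap. -/
lemma exists_arc_spanning {r : Fin n → Fin n → Prop}
    (hsymm : ∀ {a b}, r a b → r b a) (htrans : ∀ {a b c}, r a b → r b c → r a c)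
    (hrefl : ∀ a, r a a)
    {x y z : Fin n} (hxy : r x y) (hxz : x < z) (hzy : z < y) (hnz : ¬ r x z) :
    ∃ u v : Fin n, r x u ∧ r x v ∧ x ≤ u ∧ v ≤ y ∧ u < z ∧ z < v ∧ ArcR r u v := by
  classical
  set S : Finset (Fin n) := univ.filter (fun w => r x w ∧ w < z) with hS
  set T : Finset (Fin n) := univ.filter (fun w => r x w ∧ z < w) with hT
  have hSne : S.Nonempty := ⟨x, by simp [hS, hrefl, hxz]⟩
  have hTne : T.Nonempty := ⟨y, by simp [hT, hxy, hzy]⟩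
  set u := S.max' hSne with hu
  set v := T.min' hTne with hv
  have hu_mem := S.max'_mem hSne
  have hv_mem := T.min'_mem hTne
  simp only [hS, mem_filter] at hu_mem
  simp only [hT, mem_filter] at hv_mem
  have hxu : r x u := hu_mem.2.1
  have hxv : r x v := hv_mem.2.1
  have huz : u < z := hu_mem.2.2
  have hzv : z < v := hv_mem.2.2
  refine ⟨u, v, hxu, hxv, S.le_max' x (by simp [hS, hrefl, hxz]),
    T.min'_le y (by simp [hT, hxy, hzy]), huz, hzv, huz.trans hzv, htrans (hsymm hxu) hxv, ?_⟩
  intro m hum hmv hr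
  have hxm : r x m := htrans hxu hr
  rcases lt_trichotomy m z with h | h | h
  · exact absurd (S.le_max' m (by simp [hS, hxm, h])) (not_le.mpr hum)
  · exact hnz (h ▸ hxm)
  · exact absurd (T.min'_le m (by simp [hT, hxm, h])) (not_le.mpr hmv)

lemma ncr_iff_ncq {r : Fin n → Fin n → Prop}
    (hsymm : ∀ {a b}, r a b → r b a) (htrans : ∀ {a b c}, r a b → r b c → r a c)
    (hrefl : ∀ a, r a a) : NCR r ↔ NCQ r := by
  constructor
  · intro hncr a b c d hab hbc hcd hac hbd
    by_contra hnab
    have hnbc : ¬ r b c := fun h => hnab (htrans hac (hsymm h))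
    obtain ⟨u, v, hau, hav, hxu, hvy, hub, hbv, harc⟩ :=
      exists_arc_spanning (r := r) hsymm htrans hrefl hac hab hbc hnab
    obtain ⟨u', v', hbu', hbv', hbu'', hv'd, hu'c, hcv', harc'⟩ :=
      exists_arc_spanning (r := r) hsymm htrans hrefl hbd hbc hcd hnbc
    rcases lt_trichotomy v u' with h | h | h
    · have hnbv : ¬ r b v := fun hh => hnab (htrans hav (hsymm hh))
      obtain ⟨p, q, hbp, hbq, hbp', hqd, hpv, hvq, harc''⟩ :=
        exists_arc_spanning (r := r) hsymm htrans hrefl hbd hbv (h.trans (hu'c.trans hcd)) hnbv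
      exact hncr ⟨u, p, v, q, lt_of_lt_of_le hub hbp', hpv, hvq, harc, harc''⟩
    · exact hnab (htrans hav (hsymm (h ▸ hbu')))
    · exact hncr ⟨u, u', v, v', lt_of_lt_of_le hub hbu'', h, lt_of_le_of_lt hvy hcv', harc, harc'⟩
  · intro hncq ⟨i, j, k, l, hij, hjk, hkl, hik, hjl⟩
    exact hik.2.2 j hij hjk (hncq i j k l hij hjk hkl hik.2.1 hjl.2.1)

lemma ncr_iff_ncq' {r : Fin n → Fin n → Prop} (h : Equivalence r) : NCR r ↔ NCQ r :=
  ncr_iff_ncq (fun {_ _} hh => h.symm hh) (fun {_ _ _} h1 h2 => h.trans h1 h2) h.refl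

lemma ncq_of_noncrossing (π : Finpartition (Finset.univ : Finset (Fin n)))
    (h : Noncrossing π) : NCQ (SameBlock π) :=
  (ncr_iff_ncq' (sameBlock_equivalence π)).mp h

lemma noncrossing_ofSetoid (s : Setoid (Fin n)) [DecidableRel s.r] (h : NCQ s.r) :
    Noncrossing (Finpartition.ofSetoid s) := by
  rw [noncrossing_iff_ncr, ncr_congr (fun i j => sameBlock_ofSetoid s i j)]
  exact (ncr_iff_ncq' s.iseqv).mpr h

def glue (n k : ℕ) (r₁ : Fin k → Fin k → Prop) (r₂ : Fin (n - k) → Fin (n - k) → Prop)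
    (a b : Fin (n + 1)) : Prop :=
  (a.1 = 0 ∧ b.1 = 0) ∨
  (∃ (_ : 0 < a.1 ∧ a.1 ≤ k) (_ : 0 < b.1 ∧ b.1 ≤ k),
      r₁ ⟨a.1 - 1, by omega⟩ ⟨b.1 - 1, by omega⟩) ∨
  (a.1 = 0 ∧ ∃ (_ : k < b.1), r₂ ⟨0, by have := b.isLt; omega⟩
      ⟨b.1 - (k + 1), by have := b.isLt; omega⟩) ∨
  (b.1 = 0 ∧ ∃ (_ : k < a.1), r₂ ⟨0, by have := a.isLt; omega⟩
      ⟨a.1 - (k + 1), by have := a.isLt; omega⟩) ∨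
  (∃ (_ : k < a.1) (_ : k < b.1), r₂ ⟨a.1 - (k + 1), by have := a.isLt; omega⟩
      ⟨b.1 - (k + 1), by have := b.isLt; omega⟩)

section GlueLemmas
variable {k : ℕ} {r₁ : Fin k → Fin k → Prop} {r₂ : Fin (n - k) → Fin (n - k) → Prop}
  {a b : Fin (n + 1)}
lemma glue_iff_zz (ha : a.1 = 0) (hb : b.1 = 0) : glue n k r₁ r₂ a b := Or.inl ⟨ha, hb⟩
lemma glue_iff_II (ha : 0 < a.1 ∧ a.1 ≤ k) (hb : 0 < b.1 ∧ b.1 ≤ k) :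
    glue n k r₁ r₂ a b ↔ r₁ ⟨a.1 - 1, by omega⟩ ⟨b.1 - 1, by omega⟩ := by
  unfold glue
  constructor
  · rintro (⟨h1, h2⟩ | ⟨_, _, h⟩ | ⟨h1, _⟩ | ⟨h1, _⟩ | ⟨h1, _, _⟩) <;> first | exact h | omega
  · intro h; exact Or.inr (Or.inl ⟨ha, hb, h⟩)
lemma glue_iff_zO (ha : a.1 = 0) (hb : k < b.1) :
    glue n k r₁ r₂ a b ↔ r₂ ⟨0, by have := b.isLt; omega⟩
      ⟨b.1 - (k + 1), by have := b.isLt; omega⟩ := by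
  unfold glue
  constructor
  · rintro (⟨h1, h2⟩ | ⟨h1, _, h⟩ | ⟨_, _, h⟩ | ⟨h1, _⟩ | ⟨h1, _, _⟩) <;>
      first | exact h | omega
  · intro h; exact Or.inr (Or.inr (Or.inl ⟨ha, hb, h⟩))
lemma glue_iff_Oz (ha : k < a.1) (hb : b.1 = 0) :
    glue n k r₁ r₂ a b ↔ r₂ ⟨0, by have := a.isLt; omega⟩
      ⟨a.1 - (k + 1), by have := a.isLt; omega⟩ := by
  unfold glue
  constructor
  · rintro (⟨h1, h2⟩ | ⟨h1, _, h⟩ | ⟨h1, _⟩ | ⟨_, _, h⟩ | ⟨_, h1, _⟩) <;>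
      first | exact h | omega
  · intro h; exact Or.inr (Or.inr (Or.inr (Or.inl ⟨hb, ha, h⟩)))
lemma glue_iff_OO (ha : k < a.1) (hb : k < b.1) :
    glue n k r₁ r₂ a b ↔ r₂ ⟨a.1 - (k + 1), by have := a.isLt; omega⟩
      ⟨b.1 - (k + 1), by have := b.isLt; omega⟩ := by
  unfold glue
  constructor
  · rintro (⟨h1, h2⟩ | ⟨h1, _, h⟩ | ⟨h1, _⟩ | ⟨h1, _⟩ | ⟨_, _, h⟩) <;>
      first | exact h | omega
  · intro h; exact Or.inr (Or.inr (Or.inr (Or.inr ⟨ha, hb, h⟩)))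
lemma glue_not_zI (ha : a.1 = 0) (hb : 0 < b.1 ∧ b.1 ≤ k) : ¬ glue n k r₁ r₂ a b := by
  unfold glue
  rintro (⟨h1, h2⟩ | ⟨h1, _, h⟩ | ⟨_, h1, _⟩ | ⟨h1, _⟩ | ⟨h1, _, _⟩) <;> omega
lemma glue_not_Iz (ha : 0 < a.1 ∧ a.1 ≤ k) (hb : b.1 = 0) : ¬ glue n k r₁ r₂ a b := by
  unfold glue
  rintro (⟨h1, h2⟩ | ⟨_, h1, h⟩ | ⟨h1, _⟩ | ⟨_, h1, _⟩ | ⟨h1, _, _⟩) <;> omega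
lemma glue_not_IO (ha : 0 < a.1 ∧ a.1 ≤ k) (hb : k < b.1) : ¬ glue n k r₁ r₂ a b := by
  unfold glue
  rintro (⟨h1, h2⟩ | ⟨_, h1, h⟩ | ⟨h1, _⟩ | ⟨h1, _⟩ | ⟨h1, _, _⟩) <;> omega
lemma glue_not_OI (ha : k < a.1) (hb : 0 < b.1 ∧ b.1 ≤ k) : ¬ glue n k r₁ r₂ a b := by
  unfold glue
  rintro (⟨h1, h2⟩ | ⟨h1, _, h⟩ | ⟨h1, _⟩ | ⟨h1, _⟩ | ⟨_, h1, _⟩) <;> omega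

lemma glue_congr {r₁' : Fin k → Fin k → Prop} {r₂' : Fin (n - k) → Fin (n - k) → Prop}
    (h1 : ∀ a b, r₁ a b ↔ r₁' a b) (h2 : ∀ a b, r₂ a b ↔ r₂' a b) (a b : Fin (n + 1)) :
    glue n k r₁ r₂ a b ↔ glue n k r₁' r₂' a b := by
  unfold glue; simp only [h1, h2]

lemma glue_equivalence (h₁ : Equivalence r₁) (h₂ : Equivalence r₂) :
    Equivalence (glue n k r₁ r₂) := by
  constructor
  · intro a
    rcases Nat.lt_or_ge k a.1 with h | h
    · exact (glue_iff_OO h h).mpr (h₂.refl _)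
    · rcases Nat.eq_zero_or_pos a.1 with h0 | h0
      · exact glue_iff_zz h0 h0
      · exact (glue_iff_II ⟨h0, h⟩ ⟨h0, h⟩).mpr (h₁.refl _)
  · intro a b hab
    unfold glue at hab ⊢
    rcases hab with ⟨h1, h2⟩ | ⟨ha, hb, h⟩ | ⟨h1, hb, h⟩ | ⟨h1, ha, h⟩ | ⟨ha, hb, h⟩
    · exact Or.inl ⟨h2, h1⟩
    · exact Or.inr (Or.inl ⟨hb, ha, h₁.symm h⟩)
    · exact Or.inr (Or.inr (Or.inr (Or.inl ⟨h1, hb, h⟩)))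
    · exact Or.inr (Or.inr (Or.inl ⟨h1, ha, h⟩))
    · exact Or.inr (Or.inr (Or.inr (Or.inr ⟨hb, ha, h₂.symm h⟩)))
  · intro a b c hab hbc
    rcases Nat.lt_or_ge k b.1 with hb | hb
    · -- b in O
      rcases Nat.lt_or_ge k a.1 with ha | ha
      · have hab' := (glue_iff_OO (n := n) (r₁ := r₁) (r₂ := r₂) ha hb).mp hab
        rcases Nat.lt_or_ge k c.1 with hc | hc
        · exact (glue_iff_OO ha hc).mpr (h₂.trans hab' ((glue_iff_OO hb hc).mp hbc))
        · rcases Nat.eq_zero_or_pos c.1 with hc0 | hc0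
          · exact (glue_iff_Oz ha hc0).mpr (h₂.trans ((glue_iff_Oz hb hc0).mp hbc) (h₂.symm hab'))
          · exact absurd hbc (glue_not_OI hb ⟨hc0, hc⟩)
      · rcases Nat.eq_zero_or_pos a.1 with ha0 | ha0
        · have hab' := (glue_iff_zO (n := n) (r₁ := r₁) (r₂ := r₂) ha0 hb).mp hab
          rcases Nat.lt_or_ge k c.1 with hc | hc
          · exact (glue_iff_zO ha0 hc).mpr (h₂.trans hab' ((glue_iff_OO hb hc).mp hbc))
          · rcases Nat.eq_zero_or_pos c.1 with hc0 | hc0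
            · exact glue_iff_zz ha0 hc0
            · exact absurd hbc (glue_not_OI hb ⟨hc0, hc⟩)
        · exact absurd hab (glue_not_IO ⟨ha0, ha⟩ hb)
    · rcases Nat.eq_zero_or_pos b.1 with hb0 | hb0
      · -- b = 0
        rcases Nat.lt_or_ge k a.1 with ha | ha
        · have hab' := (glue_iff_Oz (n := n) (r₁ := r₁) (r₂ := r₂) ha hb0).mp hab
          rcases Nat.lt_or_ge k c.1 with hc | hc
          · exact (glue_iff_OO ha hc).mpr
              (h₂.trans (h₂.symm hab') ((glue_iff_zO hb0 hc).mp hbc))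
          · rcases Nat.eq_zero_or_pos c.1 with hc0 | hc0
            · exact (glue_iff_Oz ha hc0).mpr hab'
            · exact absurd hbc (glue_not_zI hb0 ⟨hc0, hc⟩)
        · rcases Nat.eq_zero_or_pos a.1 with ha0 | ha0
          · rcases Nat.lt_or_ge k c.1 with hc | hc
            · exact (glue_iff_zO ha0 hc).mpr ((glue_iff_zO hb0 hc).mp hbc)
            · rcases Nat.eq_zero_or_pos c.1 with hc0 | hc0
              · exact glue_iff_zz ha0 hc0
              · exact absurd hbc (glue_not_zI hb0 ⟨hc0, hc⟩)
          · exact absurd hab (glue_not_Iz ⟨ha0, ha⟩ hb0)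
      · -- b in I
        rcases Nat.lt_or_ge k a.1 with ha | ha
        · exact absurd hab (glue_not_OI ha ⟨hb0, hb⟩)
        · rcases Nat.eq_zero_or_pos a.1 with ha0 | ha0
          · exact absurd hab (glue_not_zI ha0 ⟨hb0, hb⟩)
          · have hab' := (glue_iff_II (n := n) (r₂ := r₂) ⟨ha0, ha⟩ ⟨hb0, hb⟩).mp hab
            rcases Nat.lt_or_ge k c.1 with hc | hc
            · exact absurd hbc (glue_not_IO ⟨hb0, hb⟩ hc)
            · rcases Nat.eq_zero_or_pos c.1 with hc0 | hc0
              · exact absurd hbc (glue_not_Iz ⟨hb0, hb⟩ hc0)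
              · exact (glue_iff_II ⟨ha0, ha⟩ ⟨hc0, hc⟩).mpr
                  (h₁.trans hab' ((glue_iff_II ⟨hb0, hb⟩ ⟨hc0, hc⟩).mp hbc))

lemma ncq_glue (h₂e : Equivalence r₂) (h₁ : NCQ r₁) (h₂ : NCQ r₂) :
    NCQ (glue n k r₁ r₂) := by
  intro a b c d hab hbc hcd hac hbd
  have hab' : a.1 < b.1 := hab
  have hbc' : b.1 < c.1 := hbc
  have hcd' : c.1 < d.1 := hcd
  rcases Nat.lt_or_ge k a.1 with ha | ha
  · have h4 := (glue_iff_OO (r₁ := r₁) ha (by omega)).mp hac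
    have h5 := (glue_iff_OO (r₁ := r₁) (by omega) (by omega)).mp hbd
    exact (glue_iff_OO ha (by omega)).mpr
      (h₂ _ _ _ _ (Fin.mk_lt_mk.mpr (by omega)) (Fin.mk_lt_mk.mpr (by omega))
        (Fin.mk_lt_mk.mpr (by omega)) h4 h5)
  · rcases Nat.eq_zero_or_pos a.1 with ha0 | ha0
    · -- a = 0
      rcases Nat.lt_or_ge k c.1 with hc | hc
      · have hac' := (glue_iff_zO (r₁ := r₁) ha0 hc).mp hac
        rcases Nat.lt_or_ge k b.1 with hb | hb
        · rcases Nat.lt_or_ge k d.1 with hd | hd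
          · have hbd' := (glue_iff_OO (r₁ := r₁) hb hd).mp hbd
            rcases Nat.eq_or_lt_of_le (show k + 1 ≤ b.1 by omega) with hbk | hbk
            · refine (glue_iff_zO ha0 hb).mpr ?_
              have h0 : b.1 - (k + 1) = 0 := by omega
              simp only [h0]
              exact h₂e.refl _
            · exact (glue_iff_zO ha0 hb).mpr
                (h₂ _ _ _ _ (Fin.mk_lt_mk.mpr (by omega)) (Fin.mk_lt_mk.mpr (by omega))
                  (Fin.mk_lt_mk.mpr (by omega)) hac' hbd')
          · exact absurd hbd (glue_not_OI hb ⟨by omega, hd⟩)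
        · rcases Nat.lt_or_ge k d.1 with hd | hd
          · exact absurd hbd (glue_not_IO ⟨by omega, hb⟩ hd)
          · omega
      · exact absurd hac (glue_not_zI ha0 ⟨by omega, hc⟩)
    · -- a in I
      rcases Nat.lt_or_ge k c.1 with hc | hc
      · exact absurd hac (glue_not_IO ⟨ha0, ha⟩ hc)
      · have hac' := (glue_iff_II (r₂ := r₂) ⟨ha0, ha⟩ ⟨by omega, hc⟩).mp hac
        rcases Nat.lt_or_ge k d.1 with hd | hd
        · exact absurd hbd (glue_not_IO ⟨by omega, by omega⟩ hd)
        · have hbd' := (glue_iff_II (r₂ := r₂) ⟨by omega, by omega⟩ ⟨by omega, hd⟩).mp hbd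
          exact (glue_iff_II ⟨ha0, ha⟩ ⟨by omega, by omega⟩).mpr
            (h₁ _ _ _ _ (Fin.mk_lt_mk.mpr (by omega)) (Fin.mk_lt_mk.mpr (by omega))
              (Fin.mk_lt_mk.mpr (by omega)) hac' hbd')
end GlueLemmas

/-! ### Splitting -/

lemma fin_rel_iff_of_eq {m : ℕ} {r : Fin m → Fin m → Prop} {x y x' y' : Fin m}
    (hx : x.1 = x'.1) (hy : y.1 = y'.1) : r x y ↔ r x' y' := by
  rw [Fin.ext hx, Fin.ext hy]

def rIn (r : Fin (n + 1) → Fin (n + 1) → Prop) (k : ℕ) (hk : k ≤ n) :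
    Fin k → Fin k → Prop :=
  fun a b => r ⟨a.1 + 1, by have := a.isLt; omega⟩ ⟨b.1 + 1, by have := b.isLt; omega⟩

def rOut (r : Fin (n + 1) → Fin (n + 1) → Prop) (k : ℕ) :
    Fin (n - k) → Fin (n - k) → Prop :=
  fun a b => r ⟨a.1 + k + 1, by have := a.isLt; omega⟩ ⟨b.1 + k + 1, by have := b.isLt; omega⟩

lemma rIn_equivalence {r : Fin (n + 1) → Fin (n + 1) → Prop} (hr : Equivalence r)
    {k : ℕ} (hk : k ≤ n) : Equivalence (rIn r k hk) :=
  ⟨fun _ => hr.refl _, fun h => hr.symm h, fun h h' => hr.trans h h'⟩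

lemma rOut_equivalence {r : Fin (n + 1) → Fin (n + 1) → Prop} (hr : Equivalence r)
    {k : ℕ} : Equivalence (rOut r k) :=
  ⟨fun _ => hr.refl _, fun h => hr.symm h, fun h h' => hr.trans h h'⟩

lemma ncq_rIn {r : Fin (n + 1) → Fin (n + 1) → Prop} (hq : NCQ r) {k : ℕ} (hk : k ≤ n) :
    NCQ (rIn r k hk) := by
  intro a b c d hab hbc hcd hac hbd
  exact hq _ _ _ _ (Fin.mk_lt_mk.mpr (by have : a.1 < b.1 := hab; omega))
    (Fin.mk_lt_mk.mpr (by have : b.1 < c.1 := hbc; omega))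
    (Fin.mk_lt_mk.mpr (by have : c.1 < d.1 := hcd; omega)) hac hbd

lemma ncq_rOut {r : Fin (n + 1) → Fin (n + 1) → Prop} (hq : NCQ r) {k : ℕ} :
    NCQ (rOut r k) := by
  intro a b c d hab hbc hcd hac hbd
  exact hq _ _ _ _ (Fin.mk_lt_mk.mpr (by have : a.1 < b.1 := hab; omega))
    (Fin.mk_lt_mk.mpr (by have : b.1 < c.1 := hbc; omega))
    (Fin.mk_lt_mk.mpr (by have : c.1 < d.1 := hcd; omega)) hac hbd

noncomputable def JsetOf (r : Fin (n + 1) → Fin (n + 1) → Prop) : Finset (Fin (n + 1)) :=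
  letI : DecidablePred fun m : Fin (n + 1) => 0 < m.1 ∧ r 0 m := fun _ => Classical.dec _
  univ.filter fun m => 0 < m.1 ∧ r 0 m

lemma mem_JsetOf {r : Fin (n + 1) → Fin (n + 1) → Prop} {m : Fin (n + 1)} :
    m ∈ JsetOf r ↔ 0 < m.1 ∧ r 0 m := by
  unfold JsetOf
  simp [Finset.mem_filter]

noncomputable def kOf (r : Fin (n + 1) → Fin (n + 1) → Prop) : ℕ :=
  if h : (JsetOf r).Nonempty then ((JsetOf r).min' h).1 - 1 else n

lemma kOf_le (r : Fin (n + 1) → Fin (n + 1) → Prop) : kOf r ≤ n := by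
  unfold kOf
  split_ifs with h
  · have := ((JsetOf r).min' h).isLt; omega
  · exact le_refl n

lemma kOf_congr {r r' : Fin (n + 1) → Fin (n + 1) → Prop} (h : ∀ a b, r a b ↔ r' a b) :
    kOf r = kOf r' := by
  have hJ : JsetOf r = JsetOf r' := by
    ext m; simp only [mem_JsetOf]; rw [h]
  unfold kOf
  simp only [hJ]
section Split
variable {r : Fin (n + 1) → Fin (n + 1) → Prop}

lemma glue_split (hre : Equivalence r) (hq : NCQ r) (a b : Fin (n + 1)) :
    glue n (kOf r) (rIn r (kOf r) (kOf_le r)) (rOut r (kOf r)) a b ↔ r a b := by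
  have hk : kOf r ≤ n := kOf_le r
  by_cases hne : (JsetOf r).Nonempty
  · set j := (JsetOf r).min' hne with hj
    have hkval : kOf r = j.1 - 1 := by unfold kOf; rw [dif_pos hne]
    have hj0 : 0 < j.1 ∧ r 0 j := mem_JsetOf.mp ((JsetOf r).min'_mem hne)
    have hjeq : j.1 = kOf r + 1 := by omega
    have hmin : ∀ m : Fin (n + 1), 0 < m.1 → r 0 m → j.1 ≤ m.1 :=
      fun m h1 h2 => (JsetOf r).min'_le m (mem_JsetOf.mpr ⟨h1, h2⟩)
    have fact0 : ∀ m : Fin (n + 1), 0 < m.1 → m.1 ≤ kOf r → ¬ r 0 m := by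
      intro m h1 h2 h3; have := hmin m h1 h3; omega
    have fact2 : ∀ x y : Fin (n + 1), 0 < x.1 → x.1 ≤ kOf r → kOf r < y.1 → ¬ r x y := by
      intro x y hx1 hx2 hy hrxy
      rcases Nat.eq_or_lt_of_le (show j.1 ≤ y.1 by omega) with he | hlt
      · have hyj : y = j := Fin.ext (by omega)
        exact fact0 x hx1 hx2 (hre.trans hj0.2 (hre.symm (hyj ▸ hrxy)))
      · have h0x : (0 : Fin (n + 1)) < x := by
          rw [Fin.lt_def]; simpa using hx1
        have hxj : x < j := by rw [Fin.lt_def]; omega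
        have hjy : j < y := by rw [Fin.lt_def]; omega
        exact fact0 x hx1 hx2 (hq 0 x j y h0x hxj hjy hj0.2 hrxy)
    -- zone analysis
    rcases Nat.lt_or_ge (kOf r) a.1 with ha | ha
    · rcases Nat.lt_or_ge (kOf r) b.1 with hb | hb
      · rw [glue_iff_OO ha hb]
        unfold rOut
        exact fin_rel_iff_of_eq (by simp; omega) (by simp; omega)
      · rcases Nat.eq_zero_or_pos b.1 with hb0 | hb0
        · rw [glue_iff_Oz ha hb0]
          unfold rOut
          have hb' : b = 0 := Fin.ext (by simpa using hb0)
          refine ((fin_rel_iff_of_eq (x' := j) (y' := a)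
            (by simp; omega) (by simp; omega)).trans ?_)
          subst hb'
          constructor
          · intro h; exact hre.symm (hre.trans hj0.2 h)
          · intro h; exact hre.trans (hre.symm hj0.2) (hre.symm h)
        · exact iff_of_false (glue_not_OI ha ⟨hb0, hb⟩)
            (fun h => fact2 b a hb0 hb ha (hre.symm h))
    · rcases Nat.eq_zero_or_pos a.1 with ha0 | ha0
      · have ha' : a = 0 := Fin.ext (by simpa using ha0)
        rcases Nat.lt_or_ge (kOf r) b.1 with hb | hb
        · rw [glue_iff_zO ha0 hb]
          unfold rOut
          refine ((fin_rel_iff_of_eq (x' := j) (y' := b)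
            (by simp; omega) (by simp; omega)).trans ?_)
          subst ha'
          constructor
          · intro h; exact hre.trans hj0.2 h
          · intro h; exact hre.trans (hre.symm hj0.2) h
        · rcases Nat.eq_zero_or_pos b.1 with hb0 | hb0
          · have hb' : b = 0 := Fin.ext (by simpa using hb0)
            subst ha' hb'
            exact iff_of_true (glue_iff_zz rfl rfl) (hre.refl _)
          · subst ha'
            exact iff_of_false (glue_not_zI rfl ⟨hb0, hb⟩) (fact0 b hb0 hb)
      · rcases Nat.lt_or_ge (kOf r) b.1 with hb | hb
        · exact iff_of_false (glue_not_IO ⟨ha0, ha⟩ hb) (fact2 a b ha0 ha hb)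
        · rcases Nat.eq_zero_or_pos b.1 with hb0 | hb0
          · have hb' : b = 0 := Fin.ext (by simpa using hb0)
            subst hb'
            exact iff_of_false (glue_not_Iz ⟨ha0, ha⟩ rfl)
              (fun h => fact0 a ha0 ha (hre.symm h))
          · rw [glue_iff_II ⟨ha0, ha⟩ ⟨hb0, hb⟩]
            unfold rIn
            exact fin_rel_iff_of_eq (by simp; omega) (by simp; omega)
  · -- Jset empty : kOf r = n
    have hkval : kOf r = n := by unfold kOf; rw [dif_neg hne]
    have fact0 : ∀ m : Fin (n + 1), 0 < m.1 → ¬ r 0 m :=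
      fun m h1 h2 => hne ⟨m, mem_JsetOf.mpr ⟨h1, h2⟩⟩
    have hb' : ∀ x : Fin (n + 1), x.1 ≤ kOf r := fun x => by have := x.isLt; omega
    rcases Nat.eq_zero_or_pos a.1 with ha0 | ha0
    · have ha' : a = 0 := Fin.ext (by simpa using ha0)
      rcases Nat.eq_zero_or_pos b.1 with hb0 | hb0
      · have hbb : b = 0 := Fin.ext (by simpa using hb0)
        subst ha' hbb
        exact iff_of_true (glue_iff_zz rfl rfl) (hre.refl _)
      · subst ha'
        exact iff_of_false (glue_not_zI rfl ⟨hb0, hb' b⟩) (fact0 b hb0)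
    · rcases Nat.eq_zero_or_pos b.1 with hb0 | hb0
      · have hbb : b = 0 := Fin.ext (by simpa using hb0)
        subst hbb
        exact iff_of_false (glue_not_Iz ⟨ha0, hb' a⟩ rfl)
          (fun h => fact0 a ha0 (hre.symm h))
      · rw [glue_iff_II ⟨ha0, hb' a⟩ ⟨hb0, hb' b⟩]
        unfold rIn
        exact fin_rel_iff_of_eq (by simp; omega) (by simp; omega)

end Split

section RoundTrip2
variable {k : ℕ} {r₁ : Fin k → Fin k → Prop} {r₂ : Fin (n - k) → Fin (n - k) → Prop}

lemma kOf_glue (h₂e : Equivalence r₂) (hk : k ≤ n) : kOf (glue n k r₁ r₂) = k := by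
  rcases Nat.eq_or_lt_of_le hk with he | hlt
  · have hempty : JsetOf (glue n k r₁ r₂) = ∅ := by
      ext m
      simp only [mem_JsetOf, Finset.notMem_empty, iff_false]
      rintro ⟨h1, h2⟩
      exact glue_not_zI (by simp) ⟨h1, by have := m.isLt; omega⟩ h2
    unfold kOf
    rw [dif_neg (by simp [hempty])]
    omega
  · have hmem : (⟨k + 1, by omega⟩ : Fin (n + 1)) ∈ JsetOf (glue n k r₁ r₂) := by
      rw [mem_JsetOf]
      refine ⟨by simp, ?_⟩
      refine (glue_iff_zO (by simp) (by simp)).mpr ?_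
      exact (fin_rel_iff_of_eq (x' := (⟨0, by omega⟩ : Fin (n - k)))
        (y' := ⟨0, by omega⟩) rfl (by simp)).mpr (h₂e.refl _)
    have hne : (JsetOf (glue n k r₁ r₂)).Nonempty := ⟨_, hmem⟩
    have hminle : ((JsetOf (glue n k r₁ r₂)).min' hne).1 ≤ k + 1 :=
      (JsetOf (glue n k r₁ r₂)).min'_le _ hmem
    have hminge : k + 1 ≤ ((JsetOf (glue n k r₁ r₂)).min' hne).1 := by
      have hm := mem_JsetOf.mp ((JsetOf (glue n k r₁ r₂)).min'_mem hne)
      by_contra hcon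
      exact glue_not_zI (by simp) ⟨hm.1, by omega⟩ hm.2
    unfold kOf
    rw [dif_pos hne]
    omega

lemma rIn_glue (hk : k ≤ n) (a b : Fin k) :
    rIn (glue n k r₁ r₂) k hk a b ↔ r₁ a b := by
  unfold rIn
  rw [glue_iff_II (by simp) (by simp)]
  exact fin_rel_iff_of_eq (by simp) (by simp)

lemma rOut_glue (a b : Fin (n - k)) :
    rOut (glue n k r₁ r₂) k a b ↔ r₂ a b := by
  unfold rOut
  rw [glue_iff_OO (by simp) (by simp)]
  exact fin_rel_iff_of_eq (by simp) (by simp)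

end RoundTrip2

/-! ### Partition-level assembly -/

/-- Noncrossing partitions of `Fin n`. -/
def NCP (n : ℕ) := {π : Finpartition (Finset.univ : Finset (Fin n)) // Noncrossing π}

instance {m : ℕ} : Finite (NCP m) := Subtype.finite

/-- Build a noncrossing partition from a noncrossing equivalence relation. -/
noncomputable def ofRel {m : ℕ} (r : Fin m → Fin m → Prop) (hr : Equivalence r)
    (hq : NCQ r) : NCP m :=
  letI : DecidableRel (⟨r, hr⟩ : Setoid (Fin m)).r := fun _ _ => Classical.dec _
  ⟨Finpartition.ofSetoid ⟨r, hr⟩, noncrossing_ofSetoid (⟨r, hr⟩ : Setoid (Fin m)) hq⟩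

lemma sameBlock_ofRel {m : ℕ} (r : Fin m → Fin m → Prop) (hr : Equivalence r)
    (hq : NCQ r) (a b : Fin m) : SameBlock (ofRel r hr hq).1 a b ↔ r a b := by
  letI : DecidableRel (⟨r, hr⟩ : Setoid (Fin m)).r := fun _ _ => Classical.dec _
  exact sameBlock_ofSetoid (⟨r, hr⟩ : Setoid (Fin m)) a b

noncomputable def Fmap (x : NCP (n + 1)) :
    Σ k : Fin (n + 1), NCP k.1 × NCP (n - k.1) :=
  ⟨⟨kOf (SameBlock x.1), by have := kOf_le (SameBlock x.1); omega⟩,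
   ofRel (rIn (SameBlock x.1) (kOf (SameBlock x.1)) (kOf_le _))
     (rIn_equivalence (sameBlock_equivalence _) _)
     (ncq_rIn (ncq_of_noncrossing _ x.2) _),
   ofRel (rOut (SameBlock x.1) (kOf (SameBlock x.1)))
     (rOut_equivalence (sameBlock_equivalence _))
     (ncq_rOut (ncq_of_noncrossing _ x.2))⟩

noncomputable def Gmap (y : Σ k : Fin (n + 1), NCP k.1 × NCP (n - k.1)) : NCP (n + 1) :=
  ofRel (glue n y.1.1 (SameBlock y.2.1.1) (SameBlock y.2.2.1))
    (glue_equivalence (sameBlock_equivalence _) (sameBlock_equivalence _))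
    (ncq_glue (sameBlock_equivalence _) (ncq_of_noncrossing _ y.2.1.2)
      (ncq_of_noncrossing _ y.2.2.2))

lemma Gmap_Fmap (x : NCP (n + 1)) : Gmap (Fmap x) = x := by
  obtain ⟨π, hπ⟩ := x
  apply Subtype.ext
  apply finpartition_ext
  intro a b
  have h1 : SameBlock (Gmap (Fmap ⟨π, hπ⟩)).1 a b ↔
      glue n (kOf (SameBlock π)) (SameBlock ((Fmap (⟨π, hπ⟩ : NCP (n + 1))).2.1).1)
        (SameBlock ((Fmap (⟨π, hπ⟩ : NCP (n + 1))).2.2).1) a b :=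
    sameBlock_ofRel _ _ _ a b
  have h2 : ∀ a b : Fin (kOf (SameBlock π)),
      SameBlock ((Fmap (⟨π, hπ⟩ : NCP (n + 1))).2.1).1 a b ↔
        rIn (SameBlock π) (kOf (SameBlock π)) (kOf_le _) a b :=
    fun a b => sameBlock_ofRel _ (rIn_equivalence (sameBlock_equivalence π) _)
      (ncq_rIn (ncq_of_noncrossing π hπ) _) a b
  have h3 : ∀ a b : Fin (n - kOf (SameBlock π)),
      SameBlock ((Fmap (⟨π, hπ⟩ : NCP (n + 1))).2.2).1 a b ↔
        rOut (SameBlock π) (kOf (SameBlock π)) a b :=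
    fun a b => sameBlock_ofRel _ (rOut_equivalence (sameBlock_equivalence π))
      (ncq_rOut (ncq_of_noncrossing π hπ)) a b
  rw [h1]
  exact (glue_congr h2 h3 a b).trans
    (glue_split (sameBlock_equivalence π) (ncq_of_noncrossing π hπ) a b)

lemma Gmap_inj : Function.Injective (Gmap (n := n)) := by
  rintro ⟨k, ⟨π₁, h₁⟩, ⟨π₂, h₂⟩⟩ ⟨k', ⟨π₁', h₁'⟩, ⟨π₂', h₂'⟩⟩ h
  have e1 : ∀ a b, SameBlock (Gmap (n := n) ⟨k, (⟨π₁, h₁⟩, ⟨π₂, h₂⟩)⟩).1 a b ↔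
      glue n k.1 (SameBlock π₁) (SameBlock π₂) a b :=
    fun a b => sameBlock_ofRel _ _ _ a b
  have e2 : ∀ a b, SameBlock (Gmap (n := n) ⟨k', (⟨π₁', h₁'⟩, ⟨π₂', h₂'⟩)⟩).1 a b ↔
      glue n k'.1 (SameBlock π₁') (SameBlock π₂') a b :=
    fun a b => sameBlock_ofRel _ _ _ a b
  have hsb : ∀ a b : Fin (n + 1), glue n k.1 (SameBlock π₁) (SameBlock π₂) a b
      ↔ glue n k'.1 (SameBlock π₁') (SameBlock π₂') a b := by
    intro a b
    rw [← e1, ← e2, h]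
  have hkk : k = k' := by
    have h0 := kOf_congr hsb
    rw [kOf_glue (sameBlock_equivalence π₂) (by have := k.isLt; omega),
      kOf_glue (sameBlock_equivalence π₂') (by have := k'.isLt; omega)] at h0
    exact Fin.ext h0
  subst hkk
  have hle : (k : ℕ) ≤ n := by have := k.isLt; omega
  have eq1 : π₁ = π₁' := finpartition_ext (fun a b => by
    rw [← rIn_glue (n := n) (r₁ := SameBlock π₁) (r₂ := SameBlock π₂) hle a b,
        ← rIn_glue (n := n) (r₁ := SameBlock π₁') (r₂ := SameBlock π₂') hle a b]
    exact hsb _ _)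
  have eq2 : π₂ = π₂' := finpartition_ext (fun a b => by
    rw [← rOut_glue (n := n) (r₁ := SameBlock π₁) (r₂ := SameBlock π₂) a b,
        ← rOut_glue (n := n) (r₁ := SameBlock π₁') (r₂ := SameBlock π₂') a b]
    exact hsb _ _)
  subst eq1
  subst eq2
  rfl

lemma card_sigma_prod {N : ℕ} (f g : Fin N → Type) [∀ i, Finite (f i)] [∀ i, Finite (g i)] :
    Nat.card (Σ i, f i × g i) = ∑ i, Nat.card (f i) * Nat.card (g i) := by
  letI : ∀ i, Fintype (f i) := fun i => Fintype.ofFinite _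
  letI : ∀ i, Fintype (g i) := fun i => Fintype.ofFinite _
  simp [Nat.card_eq_fintype_card, Fintype.card_sigma, Fintype.card_prod]

theorem main : ∀ n : ℕ, Nat.card (NCP n) = catalan n := by
  intro n
  induction n using Nat.strong_induction_on with
  | _ n ih =>
    rcases n with _ | m
    · haveI : Subsingleton (NCP 0) := ⟨by
        rintro ⟨π, hπ⟩ ⟨π', hπ'⟩
        exact Subtype.ext (finpartition_ext (fun i _ => i.elim0))⟩
      haveI : Nonempty (NCP 0) := ⟨⟨⊥, fun ⟨i, _⟩ => i.elim0⟩⟩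
      rw [Nat.card_unique, catalan_zero]
    · have hle1 : Nat.card (NCP (m + 1)) ≤
          Nat.card (Σ k : Fin (m + 1), NCP k.1 × NCP (m - k.1)) :=
        Nat.card_le_card_of_injective Fmap (Function.LeftInverse.injective Gmap_Fmap)
      have hle2 : Nat.card (Σ k : Fin (m + 1), NCP k.1 × NCP (m - k.1)) ≤
          Nat.card (NCP (m + 1)) :=
        Nat.card_le_card_of_injective Gmap Gmap_inj
      rw [le_antisymm hle1 hle2,
        card_sigma_prod (fun k : Fin (m + 1) => NCP k.1) (fun k : Fin (m + 1) => NCP (m - k.1)),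
        catalan_succ]
      refine Finset.sum_congr rfl (fun k _ => ?_)
      rw [ih k.1 k.isLt, ih (m - k.1) (by omega)]

end NCaux

/-- The number of noncrossing set partitions of `{1,...,n}` is the Catalan number `C n`. -/
theorem noncrossing_count (n : ℕ) :
    Nat.card {π : Finpartition (Finset.univ : Finset (Fin n)) // Noncrossing π}
      = catalan n := by
  exact NCaux.main n
end

section
/- The number of antichains in the root poset of type A_{n-1} equals the Catalan number C_n. -/
/-- Positive roots of type `A_{n-1}`: the root `e_i - e_j` is encoded by the pair `(i,j)`
with `i < j`. -/
def PosRoot (n : ℕ) : Type := {p : Fin n × Fin n // p.1 < p.2}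

/-- The root poset order: `e_i - e_j ≤ e_{i'} - e_{j'}` iff the difference is a
nonnegative combination of simple roots, i.e. `i' ≤ i` and `j ≤ j'`. -/
def RootLE {n : ℕ} (α β : PosRoot n) : Prop :=
  β.1.1 ≤ α.1.1 ∧ α.1.2 ≤ β.1.2

open List DyckStep Finset


-- blocks word
def dblocks (A B : Finset ℕ) (n : ℕ) : List DyckStep :=
  (List.range n).flatMap (fun q => [if q ∈ B then D else U, if q ∈ A then U else D])

lemma dblocks_succ (A B : Finset ℕ) (q : ℕ) :
    dblocks A B (q+1) = dblocks A B q ++ [if q ∈ B then D else U, if q ∈ A then U else D] := by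
  unfold dblocks
  rw [List.range_succ, List.flatMap_append]
  simp

lemma dblocks_length (A B : Finset ℕ) (n : ℕ) : (dblocks A B n).length = 2 * n := by
  induction n with
  | zero => rfl
  | succ q ih => rw [dblocks_succ]; simp [ih]; omega

lemma card_filter_succ (B : Finset ℕ) (q : ℕ) :
    (B.filter (· < q+1)).card = (B.filter (· < q)).card + (if q ∈ B then 1 else 0) := by
  have : B.filter (· < q+1) = B.filter (· < q) ∪ B.filter (· = q) := by
    rw [← Finset.filter_or]
    apply Finset.filter_congr
    intro x _
    simp [Nat.lt_succ_iff_lt_or_eq, Nat.le_iff_lt_or_eq]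
  rw [this, Finset.card_union_of_disjoint, Finset.filter_eq']
  · split <;> simp
  · simp [Finset.disjoint_filter]
    omega

lemma dblocks_count_D (A B : Finset ℕ) (q : ℕ) :
    (dblocks A B q).count D + (A.filter (· < q)).card = q + (B.filter (· < q)).card := by
  induction q with
  | zero => simp [dblocks]
  | succ q ih =>
    rw [dblocks_succ, List.count_append, card_filter_succ, card_filter_succ]
    simp only [List.count_cons, List.count_nil]
    by_cases hB : q ∈ B <;> by_cases hA : q ∈ A <;> simp [hB, hA] <;> omega

lemma dblocks_count_U (A B : Finset ℕ) (q : ℕ) :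
    (dblocks A B q).count U + (B.filter (· < q)).card = q + (A.filter (· < q)).card := by
  induction q with
  | zero => simp [dblocks]
  | succ q ih =>
    rw [dblocks_succ, List.count_append, card_filter_succ, card_filter_succ]
    simp only [List.count_cons, List.count_nil]
    by_cases hB : q ∈ B <;> by_cases hA : q ∈ A <;> simp [hB, hA] <;> omega

lemma dblocks_prefix (A B : Finset ℕ) {q n : ℕ} (h : q ≤ n) :
    ∃ t, dblocks A B n = dblocks A B q ++ t := by
  obtain ⟨m, rfl⟩ := Nat.le.dest h
  induction m with
  | zero => exact ⟨[], by simp⟩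
  | succ m ih =>
    obtain ⟨t, ht⟩ := ih (by omega)
    rw [show q + (m+1) = (q+m)+1 by omega, dblocks_succ, ht]
    exact ⟨_, by rw [List.append_assoc]⟩

lemma dblocks_take_even (A B : Finset ℕ) {q n : ℕ} (h : q ≤ n) :
    (dblocks A B n).take (2*q) = dblocks A B q := by
  obtain ⟨t, ht⟩ := dblocks_prefix A B h
  rw [ht, List.take_append_of_le_length (by rw [dblocks_length]),
    List.take_of_length_le (by rw [dblocks_length])]

lemma dblocks_take_odd (A B : Finset ℕ) {q n : ℕ} (h : q < n) :
    (dblocks A B n).take (2*q+1) = dblocks A B q ++ [if q ∈ B then D else U] := by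
  obtain ⟨t, ht⟩ := dblocks_prefix A B h
  rw [ht, dblocks_succ, List.append_assoc]
  rw [List.take_append, List.take_of_length_le (by rw [dblocks_length]; omega),
    dblocks_length]
  congr 1
  simp [show 2*q+1 - 2*q = 1 by omega]

def CondAB (n : ℕ) (A B : Finset ℕ) : Prop :=
  A ⊆ Finset.range n ∧ B ⊆ Finset.range n ∧ A.card = B.card ∧
    ∀ q < n, (B.filter (· < q+1)).card ≤ (A.filter (· < q)).card

lemma filter_eq_self_of_subset_range {A : Finset ℕ} {n : ℕ} (h : A ⊆ Finset.range n) :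
    A.filter (· < n) = A :=
  Finset.filter_true_of_mem (fun x hx => Finset.mem_range.mp (h hx))

lemma card_filter_le_self_nat (A : Finset ℕ) (q : ℕ) : (A.filter (· < q)).card ≤ q := by
  calc (A.filter (· < q)).card ≤ (Finset.range q).card := by
        apply Finset.card_le_card
        intro x hx
        simp only [Finset.mem_filter] at hx
        exact Finset.mem_range.mpr hx.2
    _ = q := Finset.card_range q

lemma dblocks_isDyck {n : ℕ} {A B : Finset ℕ} (h : CondAB n A B) :
    (dblocks A B n).count U = (dblocks A B n).count D ∧
      ∀ i, ((dblocks A B n).take i).count D ≤ ((dblocks A B n).take i).count U := by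
  obtain ⟨hA, hB, hcard, hcond⟩ := h
  have hDn := dblocks_count_D A B n
  have hUn := dblocks_count_U A B n
  rw [filter_eq_self_of_subset_range hA, filter_eq_self_of_subset_range hB] at hDn hUn
  have htot : (dblocks A B n).count U = (dblocks A B n).count D := by omega
  refine ⟨htot, fun i => ?_⟩
  rcases le_or_gt (2*n) i with hi | hi
  · rw [List.take_of_length_le (by rw [dblocks_length]; omega)]
    omega
  · -- i < 2*n; write i = 2*q or 2*q+1 with q < n (or q ≤ n for even)
    have key : ∀ q < n, (B.filter (· < q)).card + (if q ∈ B then 1 else 0)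
        ≤ (A.filter (· < q)).card := by
      intro q hq
      have := hcond q hq
      have := card_filter_succ B q
      omega
    rcases Nat.even_or_odd i with ⟨q, hq⟩ | ⟨q, hq⟩
    · have hqn : q ≤ n := by omega
      rw [show i = 2*q by omega, dblocks_take_even A B hqn]
      have hD := dblocks_count_D A B q
      have hU := dblocks_count_U A B q
      rcases Nat.eq_zero_or_pos q with rfl | hq0
      · simp [dblocks]
      · have := key (q-1) (by omega)
        have h2 := card_filter_succ B (q-1)
        have h3 : (A.filter (· < q-1)).card ≤ (A.filter (· < q)).card := by
          apply Finset.card_le_card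
          intro x hx
          simp only [Finset.mem_filter] at *
          exact ⟨hx.1, by omega⟩
        rw [show q-1+1 = q by omega] at h2
        omega
    · have hqn : q < n := by omega
      rw [show i = 2*q+1 by omega, dblocks_take_odd A B hqn]
      rw [List.count_append, List.count_append]
      have hD := dblocks_count_D A B q
      have hU := dblocks_count_U A B q
      have := key q hqn
      by_cases hqB : q ∈ B
      · rw [if_pos hqB] at this ⊢
        simp only [List.count_singleton, beq_iff_eq, reduceCtorEq, eq_self_iff_true, if_true, if_false]
        omega
      · rw [if_neg hqB]
        simp only [List.count_singleton, beq_iff_eq, reduceCtorEq, eq_self_iff_true, if_true, if_false]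
        omega

lemma dblocks_cond {n : ℕ} {A B : Finset ℕ} (hA : A ⊆ Finset.range n) (hB : B ⊆ Finset.range n)
    (htot : (dblocks A B n).count U = (dblocks A B n).count D)
    (hpre : ∀ i, ((dblocks A B n).take i).count D ≤ ((dblocks A B n).take i).count U) :
    CondAB n A B := by
  refine ⟨hA, hB, ?_, ?_⟩
  · have hDn := dblocks_count_D A B n
    have hUn := dblocks_count_U A B n
    rw [filter_eq_self_of_subset_range hA, filter_eq_self_of_subset_range hB] at hDn hUn
    omega
  · intro q hq
    have := hpre (2*q+1)
    rw [dblocks_take_odd A B hq, List.count_append, List.count_append] at this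
    have hD := dblocks_count_D A B q
    have hU := dblocks_count_U A B q
    have h2 := card_filter_succ B q
    by_cases hqB : q ∈ B
    · rw [if_pos hqB] at this
      simp only [List.count_singleton, beq_iff_eq, reduceCtorEq, eq_self_iff_true, if_true, if_false] at this
      simp only [hqB, if_true] at h2
      omega
    · rw [if_neg hqB] at this
      simp only [List.count_singleton, beq_iff_eq, reduceCtorEq, eq_self_iff_true, if_true, if_false] at this
      simp only [hqB, if_false] at h2
      omega

lemma dblocks_decomp {n q : ℕ} (A B : Finset ℕ) (hq : q < n) :
    ∃ t, dblocks A B n = dblocks A B q ++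
      ((if q ∈ B then D else U) :: (if q ∈ A then U else D) :: t) := by
  obtain ⟨t, ht⟩ := dblocks_prefix A B hq
  rw [dblocks_succ] at ht
  exact ⟨t, by rw [ht]; simp⟩

lemma dblocks_getElem_even {n q : ℕ} (A B : Finset ℕ) (hq : q < n)
    (h2 : 2*q < (dblocks A B n).length) :
    (dblocks A B n)[2*q] = if q ∈ B then D else U := by
  obtain ⟨t, ht⟩ := dblocks_decomp A B hq
  have hlen : (dblocks A B q).length = 2*q := dblocks_length A B q
  rw [List.getElem_of_eq ht (by omega), List.getElem_append_right (by omega)]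
  simp [hlen]

lemma dblocks_getElem_odd {n q : ℕ} (A B : Finset ℕ) (hq : q < n)
    (h2 : 2*q+1 < (dblocks A B n).length) :
    (dblocks A B n)[2*q+1] = if q ∈ A then U else D := by
  obtain ⟨t, ht⟩ := dblocks_decomp A B hq
  have hlen : (dblocks A B q).length = 2*q := dblocks_length A B q
  rw [List.getElem_of_eq ht (by omega), List.getElem_append_right (by omega)]
  simp [hlen]

def wordA (n : ℕ) (w : DyckWord) : Finset ℕ :=
  (Finset.range n).filter (fun q => w.toList.getD (2*q+1) D = U)

def wordB (n : ℕ) (w : DyckWord) : Finset ℕ :=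
  (Finset.range n).filter (fun q => w.toList.getD (2*q) U = D)

lemma dblocks_reconstruct {n : ℕ} (w : DyckWord) (hlen : w.toList.length = 2*n) :
    dblocks (wordA n w) (wordB n w) n = w.toList := by
  apply List.ext_getElem
  · rw [dblocks_length, hlen]
  · intro i h1 h2
    rcases Nat.even_or_odd i with ⟨q, hq⟩ | ⟨q, hq⟩
    · have hqn : q < n := by rw [dblocks_length] at h1; omega
      obtain rfl : i = 2*q := by omega
      rw [dblocks_getElem_even _ _ hqn (by rwa [dblocks_length, ← hlen])]
      have hmem : q ∈ wordB n w ↔ w.toList[2*q] = D := by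
        simp only [wordB, Finset.mem_filter, Finset.mem_range]
        rw [List.getD_eq_getElem _ _ h2]
        tauto
      rcases (w.toList[2*q]).dichotomy with hv | hv
      · rw [if_neg (fun hc => by rw [hmem.mp hc] at hv; exact absurd hv (by decide)), hv]
      · rw [if_pos (hmem.mpr hv), hv]
    · have hqn : q < n := by rw [dblocks_length] at h1; omega
      obtain rfl : i = 2*q+1 := by omega
      rw [dblocks_getElem_odd _ _ hqn (by rwa [dblocks_length, ← hlen])]
      have hmem : q ∈ wordA n w ↔ w.toList[2*q+1] = U := by
        simp only [wordA, Finset.mem_filter, Finset.mem_range]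
        rw [List.getD_eq_getElem _ _ h2]
        tauto
      rcases (w.toList[2*q+1]).dichotomy with hv | hv
      · rw [if_pos (hmem.mpr hv), hv]
      · rw [if_neg (fun hc => by rw [hmem.mp hc] at hv; exact absurd hv (by decide)), hv]

def MAB (n : ℕ) := {AB : Finset ℕ × Finset ℕ // CondAB n AB.1 AB.2}

noncomputable def E2 (n : ℕ) : MAB n ≃ {w : DyckWord // w.semilength = n} where
  toFun AB := ⟨⟨dblocks AB.1.1 AB.1.2 n, (dblocks_isDyck AB.2).1,
      fun i => (dblocks_isDyck AB.2).2 i⟩, by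
    have h := DyckWord.two_mul_semilength_eq_length
      (p := ⟨dblocks AB.1.1 AB.1.2 n, (dblocks_isDyck AB.2).1, fun i => (dblocks_isDyck AB.2).2 i⟩)
    simp only [dblocks_length] at h
    omega⟩
  invFun w := ⟨(wordA n w.1, wordB n w.1), by
    have hlen : w.1.toList.length = 2*n := by
      rw [← DyckWord.two_mul_semilength_eq_length, w.2]
    have hrec := dblocks_reconstruct w.1 hlen
    refine dblocks_cond (Finset.filter_subset _ _) (Finset.filter_subset _ _) ?_ ?_
    · rw [hrec]; exact w.1.count_U_eq_count_D
    · intro i; rw [hrec]; exact w.1.count_D_le_count_U i⟩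
  left_inv := by
    rintro ⟨⟨A, B⟩, hcond⟩
    have hAn := hcond.1
    have hBn := hcond.2.1
    have hlen := dblocks_length A B n
    refine Subtype.ext (Prod.ext ?_ ?_) <;> simp only
    · ext q
      simp only [wordA, Finset.mem_filter, Finset.mem_range]
      constructor
      · rintro ⟨hq, hv⟩
        rw [List.getD_eq_getElem _ _ (by omega), dblocks_getElem_odd A B hq (by omega)] at hv
        by_contra hc
        rw [if_neg hc] at hv
        exact absurd hv (by decide)
      · intro hq
        have hqn : q < n := Finset.mem_range.mp (hAn hq)
        refine ⟨hqn, ?_⟩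
        rw [List.getD_eq_getElem _ _ (by omega), dblocks_getElem_odd A B hqn (by omega), if_pos hq]
    · ext q
      simp only [wordB, Finset.mem_filter, Finset.mem_range]
      constructor
      · rintro ⟨hq, hv⟩
        rw [List.getD_eq_getElem _ _ (by omega), dblocks_getElem_even A B hq (by omega)] at hv
        by_contra hc
        rw [if_neg hc] at hv
        exact absurd hv (by decide)
      · intro hq
        have hqn : q < n := Finset.mem_range.mp (hBn hq)
        refine ⟨hqn, ?_⟩
        rw [List.getD_eq_getElem _ _ (by omega), dblocks_getElem_even A B hqn (by omega), if_pos hq]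
  right_inv := by
    rintro ⟨w, hw⟩
    have hlen : w.toList.length = 2*n := by
      rw [← DyckWord.two_mul_semilength_eq_length, hw]
    exact Subtype.ext (DyckWord.ext (dblocks_reconstruct w hlen))

section E1
variable {n : ℕ}

instance instDecEqPosRoot : DecidableEq (PosRoot n) := by
  unfold PosRoot; infer_instance

instance instFintypePosRoot : Fintype (PosRoot n) := by
  unfold PosRoot; infer_instance

/-- The first-coordinate projection, as a natural number. -/
def rfst (r : PosRoot n) : ℕ := (r.1.1 : ℕ)
/-- The second-coordinate projection, as a natural number. -/
def rsnd (r : PosRoot n) : ℕ := (r.1.2 : ℕ)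

lemma rfst_lt_rsnd (r : PosRoot n) : rfst r < rsnd r := r.2

lemma rfst_lt (r : PosRoot n) : rfst r < n := r.1.1.2
lemma rsnd_lt (r : PosRoot n) : rsnd r < n := r.1.2.2

lemma posroot_ext {r r' : PosRoot n} (h1 : rfst r = rfst r') (h2 : rsnd r = rsnd r') :
    r = r' := by
  apply Subtype.ext
  apply Prod.ext <;> apply Fin.ext <;> assumption

lemma rootLE_iff' {n : ℕ} {r r' : PosRoot n} :
    RootLE r r' ↔ rfst r' ≤ rfst r ∧ rsnd r ≤ rsnd r' := Iff.rfl


variable {S : Finset (PosRoot n)}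

lemma anti_fst_injOn (hS : IsAntichain RootLE (↑S : Set (PosRoot n))) : ∀ r ∈ S, ∀ r' ∈ S, rfst r = rfst r' → r = r' := by
  intro r hr r' hr' heq
  by_contra hne
  rcases le_total (rsnd r) (rsnd r') with h | h
  · exact hS hr hr' hne (rootLE_iff'.mpr ⟨heq.ge, h⟩)
  · exact hS hr' hr (Ne.symm hne) (rootLE_iff'.mpr ⟨heq.le, h⟩)

lemma anti_snd_injOn (hS : IsAntichain RootLE (↑S : Set (PosRoot n))) : ∀ r ∈ S, ∀ r' ∈ S, rsnd r = rsnd r' → r = r' := by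
  intro r hr r' hr' heq
  by_contra hne
  rcases le_total (rfst r) (rfst r') with h | h
  · exact hS hr' hr (Ne.symm hne) (rootLE_iff'.mpr ⟨h, heq.ge⟩)
  · exact hS hr hr' hne (rootLE_iff'.mpr ⟨h, heq.le⟩)

/-- The projections of an antichain. -/
def Afst (S : Finset (PosRoot n)) : Finset ℕ := S.image rfst
def Bsnd (S : Finset (PosRoot n)) : Finset ℕ := S.image rsnd

lemma card_Afst (hS : IsAntichain RootLE (↑S : Set (PosRoot n))) : (Afst S).card = S.card :=
  Finset.card_image_of_injOn (fun r hr r' hr' h => anti_fst_injOn hS r hr r' hr' h)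

lemma card_Bsnd (hS : IsAntichain RootLE (↑S : Set (PosRoot n))) : (Bsnd S).card = S.card :=
  Finset.card_image_of_injOn (fun r hr r' hr' h => anti_snd_injOn hS r hr r' hr' h)

lemma cond_of_antichain (hS : IsAntichain RootLE (↑S : Set (PosRoot n))) : CondAB n (Afst S) (Bsnd S) := by
  refine ⟨?_, ?_, ?_, ?_⟩
  · intro x hx
    obtain ⟨r, _, rfl⟩ := Finset.mem_image.mp hx
    exact Finset.mem_range.mpr (rfst_lt r)
  · intro x hx
    obtain ⟨r, _, rfl⟩ := Finset.mem_image.mp hx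
    exact Finset.mem_range.mpr (rsnd_lt r)
  · rw [card_Afst hS, card_Bsnd hS]
  · intro q hq
    set T := S.filter (fun r => rsnd r < q + 1) with hT
    have h1 : (Bsnd S).filter (· < q+1) = T.image rsnd := by
      rw [hT, Bsnd, Finset.filter_image]
    have h2 : ((Bsnd S).filter (· < q+1)).card = T.card := by
      rw [h1]
      apply Finset.card_image_of_injOn
      intro r hr r' hr' h
      exact anti_snd_injOn hS r (Finset.filter_subset _ _ hr) r' (Finset.filter_subset _ _ hr') h
    have h3 : (T.image rfst).card = T.card := by
      apply Finset.card_image_of_injOn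
      intro r hr r' hr' h
      exact anti_fst_injOn hS r (Finset.filter_subset _ _ hr) r' (Finset.filter_subset _ _ hr') h
    have h4 : T.image rfst ⊆ (Afst S).filter (· < q) := by
      intro x hx
      obtain ⟨r, hr, rfl⟩ := Finset.mem_image.mp hx
      rw [Finset.mem_filter] at hr ⊢
      refine ⟨Finset.mem_image_of_mem _ hr.1, ?_⟩
      have := rfst_lt_rsnd r
      have := hr.2
      omega
    calc ((Bsnd S).filter (· < q+1)).card = (T.image rfst).card := by rw [h2, h3]
      _ ≤ ((Afst S).filter (· < q)).card := Finset.card_le_card h4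
end E1

section Canon
variable {n k : ℕ} {A B : Finset ℕ}

lemma fA_lt_fB (h : CondAB n A B) (hkA : A.card = k) (hkB : B.card = k) (t : Fin k) :
    A.orderEmbOfFin hkA t < B.orderEmbOfFin hkB t := by
  set fA := A.orderEmbOfFin hkA with hfA
  set fB := B.orderEmbOfFin hkB with hfB
  set b := fB t with hb
  have hbn : b < n := Finset.mem_range.mp (h.2.1 (Finset.orderEmbOfFin_mem _ _ _))
  have step1 : t.val + 1 ≤ (B.filter (· < b+1)).card := by
    have himg : (Finset.Iic t).image fB ⊆ B.filter (· < b+1) := by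
      intro x hx
      obtain ⟨s, hs, rfl⟩ := Finset.mem_image.mp hx
      rw [Finset.mem_filter]
      refine ⟨Finset.orderEmbOfFin_mem _ _ _, ?_⟩
      have : fB s ≤ b := fB.monotone (Finset.mem_Iic.mp hs)
      omega
    calc t.val + 1 = ((Finset.Iic t).image fB).card := by
          rw [Finset.card_image_of_injective _ fB.injective, Fin.card_Iic]
      _ ≤ _ := Finset.card_le_card himg
  have step2 : t.val + 1 ≤ (A.filter (· < b)).card := le_trans step1 (h.2.2.2 b hbn)
  by_contra hc
  push_neg at hc
  have step3 : A.filter (· < b) ⊆ (Finset.Iio t).image fA := by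
    intro a ha
    rw [Finset.mem_filter] at ha
    have : a ∈ Set.range fA := by rw [Finset.range_orderEmbOfFin]; exact ha.1
    obtain ⟨s, rfl⟩ := this
    apply Finset.mem_image_of_mem
    rw [Finset.mem_Iio, ← fA.lt_iff_lt]
    have ha2 := ha.2
    omega
  have := Finset.card_le_card step3
  rw [Finset.card_image_of_injective _ fA.injective, Fin.card_Iio] at this
  omega

lemma fA_lt_n (h : CondAB n A B) (hkA : A.card = k) (t : Fin k) :
    A.orderEmbOfFin hkA t < n :=
  Finset.mem_range.mp (h.1 (Finset.orderEmbOfFin_mem _ _ _))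

lemma fB_lt_n (h : CondAB n A B) (hkB : B.card = k) (t : Fin k) :
    B.orderEmbOfFin hkB t < n :=
  Finset.mem_range.mp (h.2.1 (Finset.orderEmbOfFin_mem _ _ _))

/-- The canonical antichain built from a pair `(A, B)` satisfying `CondAB`. -/
noncomputable def canonElt (h : CondAB n A B) (hkA : A.card = k) (hkB : B.card = k)
    (t : Fin k) : PosRoot n :=
  ⟨(⟨A.orderEmbOfFin hkA t, fA_lt_n h hkA t⟩, ⟨B.orderEmbOfFin hkB t, fB_lt_n h hkB t⟩),
    Fin.mk_lt_mk.mpr (fA_lt_fB h hkA hkB t)⟩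

lemma rfst_canonElt (h : CondAB n A B) (hkA : A.card = k) (hkB : B.card = k) (t : Fin k) :
    rfst (canonElt h hkA hkB t) = A.orderEmbOfFin hkA t := rfl

lemma rsnd_canonElt (h : CondAB n A B) (hkA : A.card = k) (hkB : B.card = k) (t : Fin k) :
    rsnd (canonElt h hkA hkB t) = B.orderEmbOfFin hkB t := rfl

noncomputable def canonSet (h : CondAB n A B) (hkA : A.card = k) (hkB : B.card = k) :
    Finset (PosRoot n) :=
  Finset.univ.image (canonElt h hkA hkB)

lemma canonElt_injective (h : CondAB n A B) (hkA : A.card = k) (hkB : B.card = k) :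
    Function.Injective (canonElt h hkA hkB) := by
  intro t s hts
  have : rfst (canonElt h hkA hkB t) = rfst (canonElt h hkA hkB s) := by rw [hts]
  rw [rfst_canonElt, rfst_canonElt] at this
  exact (A.orderEmbOfFin hkA).injective (by exact_mod_cast this)

lemma canonSet_antichain (h : CondAB n A B) (hkA : A.card = k) (hkB : B.card = k) :
    IsAntichain RootLE (↑(canonSet h hkA hkB) : Set (PosRoot n)) := by
  intro x hx y hy hne hle
  simp only [canonSet, Finset.coe_image, Set.mem_image] at hx hy
  obtain ⟨t, -, rfl⟩ := hx
  obtain ⟨s, -, rfl⟩ := hy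
  rw [rootLE_iff', rfst_canonElt, rfst_canonElt, rsnd_canonElt, rsnd_canonElt] at hle
  have h1 : s ≤ t := (A.orderEmbOfFin hkA).le_iff_le.mp hle.1
  have h2 : t ≤ s := (B.orderEmbOfFin hkB).le_iff_le.mp hle.2
  exact hne (congrArg _ (le_antisymm h2 h1))

lemma Afst_canonSet (h : CondAB n A B) (hkA : A.card = k) (hkB : B.card = k) :
    Afst (canonSet h hkA hkB) = A := by
  apply Finset.eq_of_subset_of_card_le
  · intro x hx
    obtain ⟨r, hr, rfl⟩ := Finset.mem_image.mp hx
    obtain ⟨t, -, rfl⟩ := Finset.mem_image.mp hr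
    exact Finset.orderEmbOfFin_mem _ _ _
  · rw [card_Afst (canonSet_antichain h hkA hkB), canonSet,
      Finset.card_image_of_injective _ (canonElt_injective h hkA hkB), Finset.card_univ,
      Fintype.card_fin, hkA]

lemma Bsnd_canonSet (h : CondAB n A B) (hkA : A.card = k) (hkB : B.card = k) :
    Bsnd (canonSet h hkA hkB) = B := by
  apply Finset.eq_of_subset_of_card_le
  · intro x hx
    obtain ⟨r, hr, rfl⟩ := Finset.mem_image.mp hx
    obtain ⟨t, -, rfl⟩ := Finset.mem_image.mp hr
    exact Finset.orderEmbOfFin_mem _ _ _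
  · rw [card_Bsnd (canonSet_antichain h hkA hkB), canonSet,
      Finset.card_image_of_injective _ (canonElt_injective h hkA hkB), Finset.card_univ,
      Fintype.card_fin, hkB]
end Canon

section CanonEq
variable {n k : ℕ} {S : Finset (PosRoot n)}

lemma antichain_eq_canonSet (hS : IsAntichain RootLE (↑S : Set (PosRoot n)))
    (hkA : (Afst S).card = k) (hkB : (Bsnd S).card = k) :
    S = canonSet (cond_of_antichain hS) hkA hkB := by
  set fA := (Afst S).orderEmbOfFin hkA with hfA
  set fB := (Bsnd S).orderEmbOfFin hkB with hfB
  have hex : ∀ t : Fin k, ∃! r, r ∈ S ∧ rfst r = fA t := by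
    intro t
    have hmem : (fA t : ℕ) ∈ Afst S := Finset.orderEmbOfFin_mem _ _ _
    obtain ⟨r, hr, hrf⟩ := Finset.mem_image.mp hmem
    exact ⟨r, ⟨hr, hrf⟩, fun r' hr' =>
      anti_fst_injOn hS r' hr'.1 r hr (hr'.2.trans hrf.symm)⟩
  set ρ : Fin k → PosRoot n := fun t => Finset.choose _ S (hex t) with hρ
  have hρS : ∀ t, ρ t ∈ S := fun t => Finset.choose_mem _ S (hex t)
  have hρf : ∀ t, rfst (ρ t) = fA t := fun t => Finset.choose_property _ S (hex t)
  have hclaim : (fun t => rsnd (ρ t)) = ⇑fB := by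
    apply Finset.orderEmbOfFin_unique hkB
    · exact fun t => Finset.mem_image_of_mem rsnd (hρS t)
    · intro t s hts
      by_contra hc
      push_neg at hc
      have hfst : rfst (ρ t) < rfst (ρ s) := by
        rw [hρf, hρf]
        exact fA.strictMono hts
      have hne : ρ s ≠ ρ t := fun he => by rw [he] at hfst; omega
      exact hS (Finset.mem_coe.mpr (hρS s)) (Finset.mem_coe.mpr (hρS t)) hne
        (rootLE_iff'.mpr ⟨le_of_lt hfst, hc⟩)
  have hρeq : ∀ t, ρ t = canonElt (cond_of_antichain hS) hkA hkB t := by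
    intro t
    apply posroot_ext
    · rw [hρf, rfst_canonElt]
    · rw [show rsnd (ρ t) = fB t from congrFun hclaim t, rsnd_canonElt]
  apply Finset.Subset.antisymm
  · intro r hr
    have hmem : rfst r ∈ Afst S := Finset.mem_image_of_mem rfst hr
    have : rfst r ∈ Set.range fA := by rw [Finset.range_orderEmbOfFin]; exact hmem
    obtain ⟨t, ht⟩ := this
    have hru : r = ρ t := (hex t).unique ⟨hr, ht.symm⟩ ⟨hρS t, hρf t⟩
    rw [hru, hρeq t]
    exact Finset.mem_image_of_mem _ (Finset.mem_univ t)
  · intro x hx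
    obtain ⟨t, -, rfl⟩ := Finset.mem_image.mp hx
    rw [← hρeq t]
    exact hρS t

lemma canonSet_congr {A B A' B' : Finset ℕ} (h : CondAB n A B) (h' : CondAB n A' B')
    (hkA : A.card = k) (hkB : B.card = k) (hkA' : A'.card = k) (hkB' : B'.card = k)
    (hA : A = A') (hB : B = B') :
    canonSet h hkA hkB = canonSet h' hkA' hkB' := by
  subst hA; subst hB; rfl

noncomputable def E1 (n : ℕ) :
    {S : Finset (PosRoot n) // IsAntichain RootLE (↑S : Set (PosRoot n))} ≃ MAB n := by
  apply Equiv.ofBijective (fun S => (⟨(Afst S.1, Bsnd S.1), cond_of_antichain S.2⟩ : MAB n))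
  constructor
  · rintro ⟨S, hS⟩ ⟨T, hT⟩ heq
    simp only [Subtype.mk.injEq, Prod.mk.injEq] at heq
    obtain ⟨hA, hB⟩ := heq
    have hcards : (Bsnd S).card = (Afst S).card := (card_Bsnd hS).trans (card_Afst hS).symm
    have hcardT : (Afst T).card = (Afst S).card := by rw [← hA]
    have hcardTB : (Bsnd T).card = (Afst S).card := by
      rw [(card_Bsnd hT).trans (card_Afst hT).symm, hcardT]
    apply Subtype.ext
    simp only
    rw [antichain_eq_canonSet hS rfl hcards, antichain_eq_canonSet hT hcardT hcardTB]
    exact canonSet_congr _ _ _ _ _ _ hA hB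
  · rintro ⟨⟨A, B⟩, h⟩
    refine ⟨⟨canonSet h rfl h.2.2.1.symm, canonSet_antichain h rfl h.2.2.1.symm⟩, ?_⟩
    apply Subtype.ext
    simp only
    rw [Afst_canonSet, Bsnd_canonSet]

noncomputable def E0 (n : ℕ) :
    {S : Set (PosRoot n) // IsAntichain RootLE S} ≃
      {S : Finset (PosRoot n) // IsAntichain RootLE (↑S : Set (PosRoot n))} :=
  (Equiv.subtypeEquiv Fintype.finsetEquivSet (fun S => by
    rw [show Fintype.finsetEquivSet S = ↑S from rfl])).symm

/-- The number of antichains in the root poset of type `A_{n-1}` equals the Catalan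
number `C n`. -/
theorem antichains_root_poset_count (n : ℕ) :
    Nat.card {S : Set (PosRoot n) // IsAntichain RootLE S} = catalan n := by
  rw [Nat.card_congr ((E0 n).trans ((E1 n).trans (E2 n))), Nat.card_eq_fintype_card]
  exact DyckWord.card_dyckWord_semilength_eq_catalan n
end CanonEq
end

section
/- The number of parking functions of length n is (n+1)^{n-1}. -/
/-- `p` is a parking function of length `n` (written with `0`-indexed entries): some
rearrangement of `p` is nondecreasing with `i`-th smallest value at most `i`
(`0`-indexed; this is the condition `b_i ≤ i - 1` for `1`-indexed tuples). -/
def IsParkingFunction (n : ℕ) (p : Fin n → ℕ) : Prop :=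
  ∃ σ : Equiv.Perm (Fin n), Monotone (p ∘ σ) ∧ ∀ i : Fin n, p (σ i) ≤ (i : ℕ)

/-- Counting characterization. -/
lemma isParkingFunction_iff (n : ℕ) (p : Fin n → ℕ) :
    IsParkingFunction n p ↔
      ∀ k < n, k < (Finset.univ.filter (fun i => p i ≤ k)).card := by
  constructor
  · rintro ⟨σ, hmono, hle⟩ k hk
    have hsub : (Finset.Iic (⟨k, hk⟩ : Fin n)).image σ ⊆
        Finset.univ.filter (fun i => p i ≤ k) := by
      intro j hj
      simp only [Finset.mem_image, Finset.mem_Iic] at hj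
      obtain ⟨i, hi, rfl⟩ := hj
      simp only [Finset.mem_filter, Finset.mem_univ, true_and]
      calc p (σ i) ≤ (i : ℕ) := hle i
        _ ≤ k := hi
    calc k < k + 1 := Nat.lt_succ_self k
      _ = ((Finset.Iic (⟨k, hk⟩ : Fin n)).image σ).card := by
          rw [Finset.card_image_of_injective _ σ.injective, Fin.card_Iic]
      _ ≤ _ := Finset.card_le_card hsub
  · intro h
    refine ⟨Tuple.sort p, Tuple.monotone_sort p, fun i => ?_⟩
    by_contra hcon
    push_neg at hcon
    have hsub : Finset.univ.filter (fun j => p j ≤ (i : ℕ)) ⊆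
        (Finset.Iio i).image (Tuple.sort p) := by
      intro j hj
      simp only [Finset.mem_filter, Finset.mem_univ, true_and] at hj
      simp only [Finset.mem_image, Finset.mem_Iio]
      refine ⟨(Tuple.sort p).symm j, ?_, by simp⟩
      by_contra hlt
      push_neg at hlt
      have := Tuple.monotone_sort p hlt
      simp only [Function.comp_apply, Equiv.apply_symm_apply] at this
      omega
    have hc := Finset.card_le_card hsub
    rw [Finset.card_image_of_injective _ (Tuple.sort p).injective, Fin.card_Iio] at hc
    have := h (i : ℕ) i.isLt
    omega

/-- For a `ℤ`-valued sequence decreasing by 1 over each period `n+1`, there is a unique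
starting point `s ≤ n` from which all windowed values stay at least `S s`. -/
lemma exists_unique_good_start (n : ℕ) (S : ℕ → ℤ)
    (hper : ∀ m, S (m + (n + 1)) = S m - 1) :
    ∃! s, s ≤ n ∧ ∀ m ≤ n, S s ≤ S (s + m) := by
  have hP : ∃ s, s ≤ n ∧ ∀ u ≤ n, S s ≤ S u := by
    obtain ⟨x, hx, hmin⟩ := Finset.exists_min_image (Finset.range (n + 1)) S ⟨0, by simp⟩
    exact ⟨x, by have := Finset.mem_range.mp hx; omega,
      fun u hu => hmin u (Finset.mem_range.mpr (by omega))⟩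
  classical
  set s := Nat.find hP with hs
  obtain ⟨hsn, hsmin⟩ := Nat.find_spec hP
  have hstrict : ∀ t < s, S s < S t := by
    intro t ht
    have hle : S s ≤ S t := hsmin t (by omega)
    rcases lt_or_eq_of_le hle with h | h
    · exact h
    · exfalso
      exact Nat.find_min hP ht ⟨by omega, fun u hu => h ▸ hsmin u hu⟩
  have hgood : ∀ m ≤ n, S s ≤ S (s + m) := by
    intro m hm
    rcases le_or_gt (s + m) n with h | h
    · exact hsmin _ h
    · have ht : s + m = (s + m - (n + 1)) + (n + 1) := by omega
      rw [ht, hper]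
      have := hstrict (s + m - (n + 1)) (by omega)
      omega
  refine ⟨s, ⟨hsn, hgood⟩, ?_⟩
  -- uniqueness
  have key : ∀ s1 s2 : ℕ, s1 < s2 → s2 ≤ n →
      (∀ m ≤ n, S s1 ≤ S (s1 + m)) → (∀ m ≤ n, S s2 ≤ S (s2 + m)) → False := by
    intro s1 s2 hlt hs2 h1 h2
    have ha : S s1 ≤ S s2 := by
      have := h1 (s2 - s1) (by omega)
      rwa [show s1 + (s2 - s1) = s2 by omega] at this
    have hb : S s2 ≤ S (s1 + (n + 1)) := by
      have := h2 (s1 + n + 1 - s2) (by omega)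
      rwa [show s2 + (s1 + n + 1 - s2) = s1 + (n + 1) by omega] at this
    rw [hper] at hb
    omega
  intro y ⟨hyn, hy⟩
  rcases lt_trichotomy y s with h | h | h
  · exact absurd (key y s h hsn hy hgood) not_false
  · exact h
  · exact absurd (key s y h hyn hgood hy) not_false

open Finset

variable {n : ℕ}

/-- number of entries of `f` equal to `t mod (n+1)` -/
def Afib (n : ℕ) (f : Fin n → ZMod (n + 1)) (t : ℕ) : ℕ :=
  (univ.filter (fun i => f i = (t : ZMod (n + 1)))).card

lemma sum_shift (f : Fin n → ZMod (n + 1)) (m : ℕ) :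
    ∑ t ∈ range (n + 1), Afib n f (m + t) = n := by
  haveI : NeZero (n + 1) := ⟨Nat.succ_ne_zero n⟩
  have h1 : (univ : Finset (Fin n)).card
      = ∑ z : ZMod (n + 1), (univ.filter (fun i => f i = z)).card :=
    card_eq_sum_card_fiberwise (fun x _ => mem_univ _)
  have h2 : ∑ t ∈ range (n + 1), Afib n f (m + t)
      = ∑ z : ZMod (n + 1), (univ.filter (fun i => f i = z)).card := by
    refine sum_bij' (fun t _ => ((m + t : ℕ) : ZMod (n + 1)))
      (fun z _ => (z - (m : ZMod (n + 1))).val) (fun t _ => mem_univ _)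
      (fun z _ => mem_range.mpr (ZMod.val_lt _)) ?_ ?_ ?_
    · intro t ht
      have ht' : t < n + 1 := mem_range.mp ht
      push_cast
      rw [add_sub_cancel_left]
      exact ZMod.val_cast_of_lt ht'
    · intro z _
      push_cast
      simp [ZMod.natCast_val, ZMod.cast_id]
    · intro t _
      rfl
  rw [h2, ← h1, card_univ, Fintype.card_fin]

lemma sum_range_add' (g : ℕ → ℤ) (a b : ℕ) :
    ∑ t ∈ range (a + b), g t = ∑ t ∈ range a, g t + ∑ t ∈ range b, g (a + t) := by
  rw [Finset.range_add, Finset.sum_union (by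
    simp [Finset.disjoint_left]
    intro x hx; omega), Finset.sum_map]
  rfl

/-- partial-sum walk -/
def Swalk (n : ℕ) (f : Fin n → ZMod (n + 1)) (m : ℕ) : ℤ :=
  (∑ t ∈ range m, (Afib n f t : ℤ)) - m

lemma Swalk_period (f : Fin n → ZMod (n + 1)) (m : ℕ) :
    Swalk n f (m + (n + 1)) = Swalk n f m - 1 := by
  unfold Swalk
  rw [sum_range_add']
  have : ∑ t ∈ range (n + 1), ((Afib n f (m + t) : ℤ)) = (n : ℤ) := by
    rw [← Nat.cast_sum]
    exact_mod_cast congrArg (Nat.cast (R := ℤ)) (sum_shift f m)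
  rw [this]
  push_cast
  ring

lemma Swalk_window (f : Fin n → ZMod (n + 1)) (s m : ℕ) :
    Swalk n f (s + m) - Swalk n f s = (∑ t ∈ range m, (Afib n f (s + t) : ℤ)) - m := by
  unfold Swalk
  rw [sum_range_add']
  push_cast
  ring

lemma card_shift (f : Fin n → ZMod (n + 1)) (c : ZMod (n + 1)) (k : ℕ) (hk : k < n) :
    (univ.filter (fun i => (f i + c).val ≤ k)).card
      = ∑ t ∈ range (k + 1), Afib n f ((-c).val + t) := by
  haveI : NeZero (n + 1) := ⟨Nat.succ_ne_zero n⟩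
  have hmem : ∀ i : Fin n, (f i + c).val ≤ k ↔
      ∃ t < k + 1, f i = (((-c).val + t : ℕ) : ZMod (n + 1)) := by
    intro i
    constructor
    · intro h
      refine ⟨(f i + c).val, by omega, ?_⟩
      push_cast
      simp [ZMod.natCast_val, ZMod.cast_id]
    · rintro ⟨t, ht, hfi⟩
      have : f i + c = (t : ZMod (n + 1)) := by
        rw [hfi]; push_cast
        simp [ZMod.natCast_val, ZMod.cast_id]
      rw [this, ZMod.val_cast_of_lt (by omega)]
      omega
  have hinj : ∀ t1 < k + 1, ∀ t2 < k + 1,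
      (((-c).val + t1 : ℕ) : ZMod (n + 1)) = (((-c).val + t2 : ℕ) : ZMod (n + 1)) → t1 = t2 := by
    intro t1 h1 t2 h2 h
    have hmod := congrArg ZMod.val h
    rw [ZMod.val_natCast, ZMod.val_natCast] at hmod
    have h2' : t1 % (n + 1) = t2 % (n + 1) := Nat.ModEq.add_left_cancel' _ hmod
    rw [Nat.mod_eq_of_lt (by omega), Nat.mod_eq_of_lt (by omega)] at h2'
    exact h2'
  set T := (range (k + 1)).image (fun t => (((-c).val + t : ℕ) : ZMod (n + 1))) with hT
  have hstep : (univ.filter (fun i => (f i + c).val ≤ k)).card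
      = ∑ z ∈ T, ((univ.filter (fun i => (f i + c).val ≤ k)).filter (fun i => f i = z)).card := by
    refine card_eq_sum_card_fiberwise ?_
    intro x hx
    rw [mem_coe, mem_filter] at hx
    obtain ⟨t, ht, hft⟩ := (hmem x).mp hx.2
    exact mem_coe.mpr (mem_image.mpr ⟨t, mem_range.mpr ht, hft.symm⟩)
  rw [hstep, hT, Finset.sum_image (by
    intro t1 h1 t2 h2 h
    exact hinj t1 (mem_range.mp h1) t2 (mem_range.mp h2) h)]
  refine Finset.sum_congr rfl ?_
  intro t ht
  unfold Afib
  congr 1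
  rw [filter_filter]
  refine filter_congr ?_
  intro i _
  constructor
  · rintro ⟨_, h⟩; exact h
  · intro h
    exact ⟨(hmem i).mpr ⟨t, mem_range.mp ht, h⟩, h⟩

/-- `g` is "good": the counting condition of a parking function on `ZMod (n+1)` values. -/
def Good (n : ℕ) (g : Fin n → ZMod (n + 1)) : Prop :=
  ∀ k < n, k < (univ.filter (fun i => (g i).val ≤ k)).card

lemma good_iff (f : Fin n → ZMod (n + 1)) (c : ZMod (n + 1)) :
    Good n (fun i => f i + c) ↔
      ∀ m ≤ n, Swalk n f ((-c).val) ≤ Swalk n f ((-c).val + m) := by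
  have key : ∀ k < n, ((k : ℕ) < (univ.filter (fun i => (f i + c).val ≤ k)).card ↔
      Swalk n f ((-c).val) ≤ Swalk n f ((-c).val + (k + 1))) := by
    intro k hk
    rw [card_shift f c k hk]
    have hw := Swalk_window f ((-c).val) (k + 1)
    constructor
    · intro h
      have : ((k : ℤ) + 1) ≤ ∑ t ∈ range (k + 1), (Afib n f ((-c).val + t) : ℤ) := by
        exact_mod_cast h
      omega
    · intro h
      have : ((k : ℤ) + 1) ≤ ∑ t ∈ range (k + 1), (Afib n f ((-c).val + t) : ℤ) := by
        omega
      exact_mod_cast this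
  constructor
  · intro h m hm
    rcases Nat.eq_zero_or_pos m with rfl | hm0
    · simp
    · obtain ⟨k, rfl⟩ := Nat.exists_eq_add_of_lt hm0
      simp only [Nat.zero_add] at *
      exact (key k (by omega)).mp (h k (by omega))
  · intro h k hk
    exact (key k hk).mpr (h (k + 1) (by omega))

lemma existsUnique_shift (f : Fin n → ZMod (n + 1)) :
    ∃! c : ZMod (n + 1), Good n (fun i => f i + c) := by
  haveI : NeZero (n + 1) := ⟨Nat.succ_ne_zero n⟩
  obtain ⟨s0, ⟨hs0n, hs0⟩, huniq⟩ :=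
    exists_unique_good_start n (Swalk n f) (Swalk_period f)
  refine ⟨-(s0 : ZMod (n + 1)), ?_, ?_⟩
  · show Good n (fun i => f i + -(s0 : ZMod (n + 1)))
    rw [good_iff]
    rw [neg_neg, ZMod.val_cast_of_lt (by omega)]
    exact hs0
  · intro c hc
    rw [good_iff] at hc
    have hval : (-c).val = s0 := huniq _ ⟨by have := ZMod.val_lt (-c); omega, hc⟩
    calc c = -(-c) := (neg_neg c).symm
      _ = -(((-c).val : ℕ) : ZMod (n + 1)) := by
          simp [ZMod.natCast_val, ZMod.cast_id]
      _ = -(s0 : ZMod (n + 1)) := by rw [hval]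

/-- The Pollak bijection. -/
lemma pollak_card :
    Nat.card {g : Fin n → ZMod (n + 1) // Good n g} * (n + 1) = (n + 1) ^ n := by
  haveI : NeZero (n + 1) := ⟨Nat.succ_ne_zero n⟩
  classical
  have hbij : Function.Bijective
      (fun x : {g : Fin n → ZMod (n + 1) // Good n g} × ZMod (n + 1) =>
        (fun i => x.1.1 i + x.2 : Fin n → ZMod (n + 1))) := by
    constructor
    · rintro ⟨⟨g1, hg1⟩, c1⟩ ⟨⟨g2, hg2⟩, c2⟩ h
      simp only at h
      set F : Fin n → ZMod (n + 1) := fun i => g1 i + c1 with hF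
      have h1 : Good n (fun i => F i + (-c1)) := by
        have : (fun i => F i + (-c1)) = g1 := by funext i; simp [hF]
        rw [this]; exact hg1
      have h2 : Good n (fun i => F i + (-c2)) := by
        have e : (fun i => F i + (-c2)) = g2 := by
          funext i
          have hpt : g1 i + c1 = g2 i + c2 := congrFun h i
          show g1 i + c1 + -c2 = g2 i
          rw [hpt]; ring
        rw [e]; exact hg2
      obtain ⟨c, -, huniq⟩ := existsUnique_shift F
      have hc : c1 = c2 := by
        have e1 := huniq _ h1
        have e2 := huniq _ h2
        exact neg_injective (e1.trans e2.symm)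
      have hg : g1 = g2 := by
        funext i
        have hpt : g1 i + c1 = g2 i + c2 := congrFun h i
        rw [hc] at hpt
        exact add_right_cancel hpt
      simp [hg, hc]
    · intro F
      obtain ⟨c, hc, -⟩ := existsUnique_shift F
      refine ⟨⟨⟨fun i => F i + c, hc⟩, -c⟩, ?_⟩
      funext i
      simp
  have hcard := Nat.card_congr (Equiv.ofBijective _ hbij)
  rw [Nat.card_prod, Nat.card_zmod] at hcard
  rw [hcard, Nat.card_eq_fintype_card, Fintype.card_fun, ZMod.card, Fintype.card_fin]

/-- The number of parking functions of length `n` is `(n+1)^(n-1)`. -/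
theorem parking_function_count (n : ℕ) :
    Nat.card {p : Fin n → ℕ // IsParkingFunction n p} = (n + 1) ^ (n - 1) := by
  haveI : NeZero (n + 1) := ⟨Nat.succ_ne_zero n⟩
  classical
  have hbound : ∀ p : Fin n → ℕ, IsParkingFunction n p → ∀ i, p i < n + 1 := by
    rintro p ⟨σ, -, hle⟩ i
    have h1 := hle (σ.symm i)
    rw [Equiv.apply_symm_apply] at h1
    have h2 := (σ.symm i).isLt
    omega
  have e : {p : Fin n → ℕ // IsParkingFunction n p} ≃
      {g : Fin n → ZMod (n + 1) // Good n g} :=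
    { toFun := fun p => ⟨fun i => ((p.1 i : ℕ) : ZMod (n + 1)), by
        intro k hk
        have hc := (isParkingFunction_iff n p.1).mp p.2 k hk
        refine lt_of_lt_of_le hc (le_of_eq (congrArg Finset.card ?_))
        refine (filter_congr ?_).symm
        intro i _
        rw [ZMod.val_cast_of_lt (hbound p.1 p.2 i)]⟩
      invFun := fun g => ⟨fun i => (g.1 i).val, by
        rw [isParkingFunction_iff]
        intro k hk
        exact g.2 k hk⟩
      left_inv := fun p => Subtype.ext (funext fun i =>
        ZMod.val_cast_of_lt (hbound p.1 p.2 i))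
      right_inv := fun g => Subtype.ext (funext fun i => by
        simp [ZMod.natCast_val, ZMod.cast_id]) }
  rw [Nat.card_congr e]
  have h := pollak_card (n := n)
  have hpow : (n + 1) ^ n = (n + 1) ^ (n - 1) * (n + 1) := by
    rcases n with _ | m
    · simp
    · rw [pow_succ]
      simp
  rw [hpow] at h
  exact Nat.eq_of_mul_eq_mul_right (by omega) h
end

section
/- For fixed m ≥ 1, the number of m-parking functions of length n is (mn+1)^{n-1}. -/
open Finset

/-- `p` is an `m`-parking function of length `n` (written with `0`-indexed entries): some
rearrangement of `p` is nondecreasing with `i`-th smallest value at most `m * i`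
(`0`-indexed; this is the condition `b_i ≤ m(i-1)` for `1`-indexed tuples). -/
def IsMParkingFunction (m n : ℕ) (p : Fin n → ℕ) : Prop :=
  ∃ σ : Equiv.Perm (Fin n), Monotone (p ∘ σ) ∧ ∀ i : Fin n, p (σ i) ≤ m * (i : ℕ)

namespace MParkingAux

/-- The counting characterization of `m`-parking functions. -/
def Cond (m n : ℕ) (p : Fin n → ℕ) : Prop :=
  ∀ k, k < n → k + 1 ≤ (Finset.univ.filter fun i : Fin n => p i ≤ m * k).card

lemma card_filter_comp {n : ℕ} (σ : Equiv.Perm (Fin n)) (P : Fin n → Prop) [DecidablePred P] :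
    (Finset.univ.filter fun j => P (σ j)).card = (Finset.univ.filter P).card := by
  apply Finset.card_bij' (fun j _ => σ j) (fun i _ => σ.symm i) <;> simp

lemma park_iff {m n : ℕ} (p : Fin n → ℕ) : IsMParkingFunction m n p ↔ Cond m n p := by
  constructor
  · rintro ⟨σ, hmono, hle⟩ k hk
    rw [← card_filter_comp σ]
    have hsub : Finset.Iic (⟨k, hk⟩ : Fin n) ⊆
        Finset.univ.filter fun j => p (σ j) ≤ m * k := by
      intro j hj
      simp only [Finset.mem_filter, Finset.mem_univ, true_and]
      exact le_trans (hmono (Finset.mem_Iic.mp hj)) (hle ⟨k, hk⟩)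
    calc k + 1 = (Finset.Iic (⟨k, hk⟩ : Fin n)).card := by rw [Fin.card_Iic]
      _ ≤ _ := Finset.card_le_card hsub
  · intro hC
    refine ⟨Tuple.sort p, Tuple.monotone_sort p, fun i => ?_⟩
    by_contra h
    push_neg at h
    have hsub : (Finset.univ.filter fun j => p (Tuple.sort p j) ≤ m * (i : ℕ)) ⊆
        Finset.Iio i := by
      intro j hj
      simp only [Finset.mem_filter, Finset.mem_univ, true_and] at hj
      rw [Finset.mem_Iio]
      by_contra hij
      push_neg at hij
      exact absurd (Tuple.monotone_sort p hij) (by simpa using lt_of_le_of_lt hj h)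
    have h1 : (i : ℕ) + 1 ≤ (Finset.univ.filter fun j : Fin n => p j ≤ m * (i : ℕ)).card :=
      hC i i.isLt
    rw [← card_filter_comp (Tuple.sort p)] at h1
    have h2 := Finset.card_le_card hsub
    rw [Fin.card_Iio] at h2
    omega


section Cycle

variable (m n : ℕ)

/-- number of entries of `q` equal to `j mod (mn+1)`. -/
def cnt (q : Fin n → ZMod (m*n+1)) (j : ℕ) : ℕ :=
  (Finset.univ.filter fun i => ((j : ℕ) : ZMod (m*n+1)) = q i).card

variable {m n}

lemma window_card (x : ZMod (m*n+1)) (t u : ℕ) (hu : u < m*n+1) :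
    ((Finset.Icc t (t+u)).filter fun j => ((j : ℕ) : ZMod (m*n+1)) = x).card
      = if (x - (t : ZMod (m*n+1))).val ≤ u then 1 else 0 := by
  have key : ∀ j ∈ Finset.Icc t (t+u), ((j : ℕ) : ZMod (m*n+1)) = x →
      t ≤ j ∧ (x - (t : ZMod (m*n+1))).val = j - t := by
    intro j hj hx
    rw [Finset.mem_Icc] at hj
    refine ⟨hj.1, ?_⟩
    have h1 : ((j - t : ℕ) : ZMod (m*n+1)) = x - (t : ZMod (m*n+1)) := by
      rw [Nat.cast_sub hj.1, hx]
    rw [← h1, ZMod.val_cast_of_lt (by omega)]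
  split_ifs with h
  · rw [Finset.card_eq_one]
    refine ⟨t + (x - (t : ZMod (m*n+1))).val, ?_⟩
    rw [Finset.eq_singleton_iff_unique_mem]
    constructor
    · rw [Finset.mem_filter, Finset.mem_Icc]
      refine ⟨⟨Nat.le_add_right _ _, by omega⟩, ?_⟩
      push_cast
      rw [ZMod.natCast_rightInverse]
      ring
    · intro j hj
      rw [Finset.mem_filter] at hj
      obtain ⟨h1, h2⟩ := key j hj.1 hj.2
      omega
  · rw [Finset.card_eq_zero, Finset.eq_empty_iff_forall_notMem]
    intro j hj
    rw [Finset.mem_filter] at hj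
    obtain ⟨h1, h2⟩ := key j hj.1 hj.2
    rw [Finset.mem_Icc] at hj
    omega

lemma sum_cnt (q : Fin n → ZMod (m*n+1)) (t u : ℕ) (hu : u < m*n+1) :
    ∑ j ∈ Finset.Icc t (t+u), cnt m n q j
      = (Finset.univ.filter fun i : Fin n =>
          (q i - (t : ZMod (m*n+1))).val ≤ u).card := by
  unfold cnt
  rw [Finset.card_filter]
  simp_rw [Finset.card_filter]
  rw [Finset.sum_comm]
  refine Finset.sum_congr rfl fun i _ => ?_
  rw [← Finset.card_filter, window_card (q i) t u hu]

variable (m n) in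
/-- partial sums of `m * cnt - 1`. -/
def S (q : Fin n → ZMod (m*n+1)) (t : ℕ) : ℤ :=
  ∑ j ∈ Finset.range t, ((m : ℤ) * cnt m n q j - 1)

lemma S_add (q : Fin n → ZMod (m*n+1)) {b c : ℕ} (h : b ≤ c) :
    S m n q c = S m n q b + ∑ j ∈ Finset.Ico b c, ((m : ℤ) * cnt m n q j - 1) := by
  rw [S, S, Finset.range_eq_Ico, Finset.range_eq_Ico,
    ← Finset.sum_Ico_consecutive _ (Nat.zero_le b) h]


lemma S_period (q : Fin n → ZMod (m*n+1)) (t : ℕ) :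
    S m n q (t + (m*n+1)) = S m n q t - 1 := by
  rw [S_add q (Nat.le_add_right _ _), Finset.sum_sub_distrib, ← Finset.mul_sum,
    Finset.sum_const, Nat.card_Ico]
  have h1 : Finset.Ico t (t + (m*n+1)) = Finset.Icc t (t + m*n) := by
    have : t + (m*n+1) = (t + m*n) + 1 := by omega
    rw [this, Finset.Ico_add_one_right_eq_Icc]
  have h2 : ∑ j ∈ Finset.Icc t (t + m*n), (cnt m n q j : ℤ) = n := by
    rw [← Nat.cast_sum]
    norm_cast
    rw [sum_cnt q t (m*n) (by omega)]
    have : (Finset.univ.filter fun i : Fin n =>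
        (q i - (t : ZMod (m*n+1))).val ≤ m*n) = Finset.univ := by
      refine Finset.filter_true_of_mem fun i _ => ?_
      have := ZMod.val_lt (q i - (t : ZMod (m*n+1)))
      omega
    rw [this, Finset.card_univ, Fintype.card_fin]
  rw [h1, h2]
  ring_nf
  omega

lemma S_lower (q : Fin n → ZMod (m*n+1)) {b c : ℕ} (h : b ≤ c) :
    S m n q b - ((c : ℤ) - b) ≤ S m n q c := by
  rw [S_add q h]
  have : ∑ j ∈ Finset.Ico b c, (-1 : ℤ) ≤
      ∑ j ∈ Finset.Ico b c, ((m : ℤ) * cnt m n q j - 1) := by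
    refine Finset.sum_le_sum fun j _ => ?_
    have : (0 : ℤ) ≤ (m : ℤ) * cnt m n q j := by positivity
    omega
  rw [Finset.sum_const, Nat.card_Ico] at this
  simp only [nsmul_eq_mul, mul_neg_one] at this
  have hcb : ((c - b : ℕ) : ℤ) = (c : ℤ) - b := by omega
  rw [hcb] at this
  omega


variable (m n) in
/-- `r` is a "good" starting point: the partial sums stay above `S r` for a full period. -/
def Good (q : Fin n → ZMod (m*n+1)) (r : ℕ) : Prop :=
  r < m*n+1 ∧ ∀ t, r < t → t < r + (m*n+1) → S m n q r ≤ S m n q t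

lemma good_exists (q : Fin n → ZMod (m*n+1)) : ∃ r, Good m n q r := by
  have hne0 : ((Finset.range (m*n+1)).image (S m n q)).Nonempty :=
    ⟨S m n q 0, Finset.mem_image_of_mem _ (by simp)⟩
  set M := ((Finset.range (m*n+1)).image (S m n q)).min' hne0 with hM
  have hmem : M ∈ (Finset.range (m*n+1)).image (S m n q) := Finset.min'_mem _ hne0
  have hMle : ∀ s, s < m*n+1 → M ≤ S m n q s := fun s hs =>
    Finset.min'_le _ _ (Finset.mem_image_of_mem _ (Finset.mem_range.mpr hs))
  have hTne : ((Finset.range (m*n+1)).filter (fun s => S m n q s = M)).Nonempty := by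
    obtain ⟨s, hs, hsM⟩ := Finset.mem_image.mp hmem
    exact ⟨s, Finset.mem_filter.mpr ⟨hs, hsM⟩⟩
  set r := ((Finset.range (m*n+1)).filter (fun s => S m n q s = M)).min' hTne with hr
  have hrT := Finset.min'_mem _ hTne
  rw [← hr, Finset.mem_filter, Finset.mem_range] at hrT
  obtain ⟨hrlt, hrM⟩ := hrT
  refine ⟨r, hrlt, fun t hrt htr => ?_⟩
  rcases lt_or_ge t (m*n+1) with ht | ht
  · rw [hrM]; exact hMle t ht
  · have h1 : t = (t - (m*n+1)) + (m*n+1) := by omega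
    have h2 : S m n q t = S m n q (t - (m*n+1)) - 1 := by
      have := S_period q (t - (m*n+1))
      rw [← h1] at this
      exact this
    have h3 : t - (m*n+1) < r := by omega
    have h4 : S m n q (t - (m*n+1)) ≠ M := by
      intro hM'
      have : t - (m*n+1) ∈ (Finset.range (m*n+1)).filter (fun s => S m n q s = M) :=
        Finset.mem_filter.mpr ⟨Finset.mem_range.mpr (by omega), hM'⟩
      have := Finset.min'_le _ _ this
      omega
    have h5 : M ≤ S m n q (t - (m*n+1)) := hMle _ (by omega)
    omega

lemma good_unique (q : Fin n → ZMod (m*n+1)) {r1 r2 : ℕ}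
    (h1 : Good m n q r1) (h2 : Good m n q r2) : r1 = r2 := by
  obtain ⟨hr1, hg1⟩ := h1
  obtain ⟨hr2, hg2⟩ := h2
  by_contra hne
  -- wlog via a symmetric argument
  rcases lt_or_gt_of_ne hne with hlt | hlt
  · have ha : S m n q r1 ≤ S m n q r2 := hg1 r2 hlt (by omega)
    have hb : S m n q r2 ≤ S m n q (r1 + (m*n+1)) := hg2 _ (by omega) (by omega)
    rw [S_period] at hb
    omega
  · have ha : S m n q r2 ≤ S m n q r1 := hg2 r1 hlt (by omega)
    have hb : S m n q r1 ≤ S m n q (r2 + (m*n+1)) := hg1 _ (by omega) (by omega)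
    rw [S_period] at hb
    omega


lemma key_eq (q : Fin n → ZMod (m*n+1)) (r : ℕ) {k : ℕ} (hm : 1 ≤ m) (hk : k < n) :
    S m n q (r + (m*k+1)) - S m n q r
      = (m : ℤ) * ((Finset.univ.filter fun i : Fin n =>
          (q i - (r : ZMod (m*n+1))).val ≤ m*k).card) - (m*k+1) := by
  have hmk : m * k < m*n+1 := by
    have := Nat.mul_le_mul_left m (by omega : k ≤ n)
    nlinarith [Nat.mul_le_mul_left m (Nat.succ_le_of_lt hk)]
  rw [S_add q (by omega : r ≤ r + (m*k+1)), Finset.sum_sub_distrib, ← Finset.mul_sum,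
    Finset.sum_const, Nat.card_Ico]
  have h1 : Finset.Ico r (r + (m*k+1)) = Finset.Icc r (r + m*k) := by
    have : r + (m*k+1) = (r + m*k) + 1 := by omega
    rw [this, Finset.Ico_add_one_right_eq_Icc]
  rw [h1]
  have h2 : ∑ j ∈ Finset.Icc r (r + m*k), (cnt m n q j : ℤ)
      = ((Finset.univ.filter fun i : Fin n =>
          (q i - (r : ZMod (m*n+1))).val ≤ m*k).card : ℤ) := by
    rw [← Nat.cast_sum]
    norm_cast
    exact sum_cnt q r (m*k) hmk
  rw [h2]
  rw [Nat.add_sub_cancel_left, nsmul_eq_mul]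
  push_cast
  ring

lemma cond_iff_good (hm : 1 ≤ m) (q : Fin n → ZMod (m*n+1)) (r : ℕ) (hr : r < m*n+1) :
    Cond m n (fun i => (q i - (r : ZMod (m*n+1))).val) ↔ Good m n q r := by
  constructor
  · intro hC
    refine ⟨hr, fun t hrt htr => ?_⟩
    set u := t - r with hu
    set k := (u-1)/m with hk
    set s := (u-1) % m with hs
    have hks : u - 1 = m * k + s ∧ s < m :=
      ⟨(Nat.div_add_mod (u-1) m).symm, Nat.mod_lt _ (by omega)⟩
    have hkn : k < n := by
      rcases Nat.lt_or_ge k n with h | h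
      · exact h
      · exfalso
        have := Nat.mul_le_mul_left m h
        omega
    have hcard : k + 1 ≤ (Finset.univ.filter fun i : Fin n =>
        (q i - (r : ZMod (m*n+1))).val ≤ m*k).card := hC k hkn
    have hcard' : (k : ℤ) + 1 ≤ ((Finset.univ.filter fun i : Fin n =>
        (q i - (r : ZMod (m*n+1))).val ≤ m*k).card : ℤ) := by exact_mod_cast hcard
    have hkey := key_eq q r hm hkn
    have htN : t = r + m*k + 1 + s := by omega
    have htZ : (t : ℤ) = r + m*k + 1 + s := by exact_mod_cast htN
    have hstep : S m n q (r + (m*k+1)) - ((t : ℤ) - (r + (m*k+1) : ℕ)) ≤ S m n q t :=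
      S_lower q (by omega)
    have hcst : ((r + (m*k+1) : ℕ) : ℤ) = r + (m:ℤ)*k + 1 := by push_cast; ring
    have hmul : (m : ℤ) * ((k:ℤ)+1) ≤ (m : ℤ) * ((Finset.univ.filter fun i : Fin n =>
        (q i - (r : ZMod (m*n+1))).val ≤ m*k).card : ℤ) :=
      mul_le_mul_of_nonneg_left hcard' (by positivity)
    have hexp : (m : ℤ) * ((k:ℤ)+1) = (m:ℤ)*(k:ℤ) + m := by ring
    have hms : (s : ℤ) ≤ (m : ℤ) - 1 := by
      have : (s:ℤ) < (m:ℤ) := by exact_mod_cast hks.2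
      omega
    rw [hcst] at hstep
    omega
  · rintro ⟨-, hG⟩ k hkn
    have hkey := key_eq q r hm hkn
    have hexp : m * (k+1) = m*k + m := by ring
    have ht : S m n q r ≤ S m n q (r + (m*k+1)) := by
      refine hG _ (by omega) ?_
      have h2 : m * (k+1) ≤ m * n := Nat.mul_le_mul_left m hkn
      omega
    have h3 : (m : ℤ) * (k : ℤ) < (m : ℤ) * ((Finset.univ.filter fun i : Fin n =>
        (q i - (r : ZMod (m*n+1))).val ≤ m*k).card : ℤ) := by
      omega
    have h4 : (k : ℤ) < ((Finset.univ.filter fun i : Fin n =>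
        (q i - (r : ZMod (m*n+1))).val ≤ m*k).card : ℤ) :=
      lt_of_mul_lt_mul_left h3 (by positivity)
    have h5 : k + 1 ≤ (Finset.univ.filter fun i : Fin n =>
        (q i - (r : ZMod (m*n+1))).val ≤ m*k).card := by exact_mod_cast h4
    exact h5


lemma exists_unique_shift (hm : 1 ≤ m) (q : Fin n → ZMod (m*n+1)) :
    ∃! c : ZMod (m*n+1), Cond m n (fun i => (q i + c).val) := by
  haveI : NeZero (m*n+1) := ⟨by omega⟩
  obtain ⟨r, hGood⟩ := good_exists q
  refine ⟨-(r : ZMod (m*n+1)), ?_, ?_⟩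
  · have h : (fun i => (q i + -(r : ZMod (m*n+1))).val)
        = fun i => (q i - (r : ZMod (m*n+1))).val := by
      funext i; rw [sub_eq_add_neg]
    show Cond m n fun i => (q i + -(r : ZMod (m*n+1))).val
    rw [h]
    exact (cond_iff_good hm q r hGood.1).mpr hGood
  · intro c hc
    have hcast : (((-c).val : ℕ) : ZMod (m*n+1)) = -c := ZMod.natCast_rightInverse _
    have h : (fun i => (q i + c).val)
        = fun i => (q i - (((-c).val : ℕ) : ZMod (m*n+1))).val := by
      funext i; rw [hcast, sub_neg_eq_add]
    rw [h] at hc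
    have hg' : Good m n q (-c).val :=
      (cond_iff_good hm q (-c).val (ZMod.val_lt _)).mp hc
    have hrr : (-c).val = r := good_unique q hg' hGood
    have : -c = (r : ZMod (m*n+1)) := by rw [← hcast, hrr]
    rw [← neg_neg c, this]

lemma cond_lt (hn : 1 ≤ n) (p : Fin n → ℕ) (hp : Cond m n p) (i : Fin n) :
    p i < m*n+1 := by
  have h := hp (n-1) (by omega)
  have hle : (Finset.univ.filter fun i : Fin n => p i ≤ m * (n-1)).card ≤ n := by
    have := Finset.card_filter_le (Finset.univ : Finset (Fin n))
      (fun i => p i ≤ m * (n-1))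
    simpa using this
  have huniv : (Finset.univ.filter fun i : Fin n => p i ≤ m * (n-1)) = Finset.univ :=
    Finset.eq_univ_of_card _ (by rw [Fintype.card_fin]; omega)
  have hpi : p i ≤ m * (n-1) := by
    have := huniv ▸ Finset.mem_univ i
    exact (Finset.mem_filter.mp this).2
  have hmn : m * (n-1) ≤ m * n := Nat.mul_le_mul_left m (by omega)
  omega

end Cycle


section Count

variable {m n : ℕ}

lemma shift_bijective (hm : 1 ≤ m) (hn : 1 ≤ n) :
    Function.Bijective (fun x : {p : Fin n → ℕ // Cond m n p} × ZMod (m*n+1) =>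
      (fun i => (x.1.1 i : ZMod (m*n+1)) + x.2 : Fin n → ZMod (m*n+1))) := by
  haveI : NeZero (m*n+1) := ⟨by omega⟩
  constructor
  · rintro ⟨⟨p1, hp1⟩, c1⟩ ⟨⟨p2, hp2⟩, c2⟩ h
    simp only at h
    set q : Fin n → ZMod (m*n+1) := fun i => (p1 i : ZMod (m*n+1)) + c1 with hq
    have key : ∀ (p : Fin n → ℕ) (c : ZMod (m*n+1)), Cond m n p →
        (∀ i, (p i : ZMod (m*n+1)) + c = q i) →
        (fun i => (q i + -c).val) = p := by
      intro p c hp hqe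
      funext i
      have h1 : q i + -c = (p i : ZMod (m*n+1)) := by rw [← hqe i]; ring
      rw [h1, ZMod.val_cast_of_lt (cond_lt hn p hp i)]
    have k1 : (fun i => (q i + -c1).val) = p1 := key p1 c1 hp1 (fun i => rfl)
    have k2 : (fun i => (q i + -c2).val) = p2 :=
      key p2 c2 hp2 (fun i => (congrFun h i).symm)
    obtain ⟨c0, hc0, huniq⟩ := exists_unique_shift hm q
    have e1 : -c1 = c0 := huniq _ (by
      show Cond m n fun i => (q i + -c1).val
      rw [k1]; exact hp1)
    have e2 : -c2 = c0 := huniq _ (by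
      show Cond m n fun i => (q i + -c2).val
      rw [k2]; exact hp2)
    have ec : c1 = c2 := by
      have : -c1 = -c2 := by rw [e1, e2]
      exact neg_injective this
    have ep : p1 = p2 := by rw [← k1, ← k2, ec]
    simp [Prod.ext_iff, Subtype.ext_iff, ep, ec]
  · intro q
    obtain ⟨c, hc, -⟩ := exists_unique_shift hm q
    refine ⟨⟨⟨fun i => (q i + c).val, hc⟩, -c⟩, ?_⟩
    funext i
    simp only
    rw [ZMod.natCast_rightInverse]
    ring

end Count

end MParkingAux

/-- For fixed `m ≥ 1`, the number of `m`-parking functions of length `n` is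
`(mn+1)^(n-1)`. -/
theorem m_parking_function_count (m n : ℕ) (hm : 1 ≤ m) :
    Nat.card {p : Fin n → ℕ // IsMParkingFunction m n p} = (m * n + 1) ^ (n - 1) := by
  rcases Nat.eq_zero_or_pos n with hn | hn
  · subst hn
    have hall : ∀ p : Fin 0 → ℕ, IsMParkingFunction m 0 p := by
      intro p
      exact ⟨1, fun a b _ => a.elim0, fun i => i.elim0⟩
    rw [Nat.card_congr (Equiv.subtypeUnivEquiv hall)]
    rw [Nat.card_unique]
    simp
  · have hb := MParkingAux.shift_bijective (m := m) (n := n) hm hn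
    have e := Nat.card_congr (Equiv.ofBijective _ hb)
    rw [Nat.card_prod, Nat.card_zmod] at e
    have hfun : Nat.card (Fin n → ZMod (m*n+1)) = (m*n+1)^n := by
      haveI : NeZero (m*n+1) := ⟨by omega⟩
      rw [Nat.card_eq_fintype_card, Fintype.card_fun, ZMod.card, Fintype.card_fin]
    rw [hfun] at e
    have hcond : Nat.card {p : Fin n → ℕ // IsMParkingFunction m n p}
        = Nat.card {p : Fin n → ℕ // MParkingAux.Cond m n p} :=
      Nat.card_congr (Equiv.subtypeEquivRight fun p => MParkingAux.park_iff p)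
    rw [hcond]
    have hpow : (m*n+1)^n = (m*n+1)^(n-1) * (m*n+1) := by
      rw [← pow_succ]
      congr 1
      omega
    rw [hpow] at e
    exact Nat.eq_of_mul_eq_mul_right (by omega) e
end

section
/- For each n ≥ 2 and each nonnegative integer k ≤ n+1 - 1, the sum over set partitions (B_1,...,B_{n+1-k}) of {1,...,n+1} into n+1-k blocks of the product |B_1|^{|B_1|-1} * ... * |B_{n+1-k}|^{|B_{n+1-k}|-1} equals (n+1)^k * binomial(n, n-k). -/
/-- `P` is (the set of blocks of) a set partition of `{1,...,n+1}`: its blocks are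
nonempty, pairwise disjoint, and their union is everything. -/
def IsSetPartition (n : ℕ) (P : Finset (Finset (Fin (n + 1)))) : Prop :=
  (∀ b ∈ P, b.Nonempty) ∧
    (∀ b ∈ P, ∀ c ∈ P, b ≠ c → Disjoint b c) ∧
    P.sup id = Finset.univ

open Polynomial Finset

section FiniteDifference

lemma findiff {R : Type*} [CommRing R] [Nontrivial R] [NoZeroDivisors R] :
    ∀ (m : ℕ) (q : R[X]), q.degree < m →
      ∑ k ∈ Finset.range (m+1), (-1:R)^k * (m.choose k) * q.eval (k:R) = 0 := by
  intro m
  induction m with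
  | zero =>
    intro q hq
    have hb : q.degree = ⊥ := Nat.WithBot.lt_zero_iff.mp (by exact_mod_cast hq)
    have : q = 0 := Polynomial.degree_eq_bot.mp hb
    simp [this]
  | succ m ih =>
    intro q hq
    set r : R[X] := q - Polynomial.taylor 1 q with hr
    have hdeg : r.degree < m := by
      rcases eq_or_ne q (Polynomial.taylor 1 q) with h | h
      · have h0 : r = 0 := by rw [hr, ← h, sub_self]
        rw [h0, Polynomial.degree_zero]
        exact WithBot.bot_lt_coe m
      · have hq0 : q ≠ 0 := by
          rintro rfl; simp at h
        have ht0 : Polynomial.taylor (1:R) q ≠ 0 := by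
          intro h0
          exact hq0 (Polynomial.taylor_injective 1 (by simpa using h0))
        have hnd : (Polynomial.taylor (1:R) q).natDegree = q.natDegree :=
          Polynomial.natDegree_taylor q 1
        have hdq : q.degree = (Polynomial.taylor (1:R) q).degree := by
          rw [Polynomial.degree_eq_natDegree hq0, Polynomial.degree_eq_natDegree ht0, hnd]
        have hlc : q.leadingCoeff = (Polynomial.taylor (1:R) q).leadingCoeff := by
          rw [Polynomial.taylor_apply]
          rw [Polynomial.leadingCoeff_comp (by
            simpa using (ne_zero_of_eq_one <| Polynomial.natDegree_X_add_C (1:R)))]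
          rw [Polynomial.leadingCoeff_X_add_C, one_pow, mul_one]
        calc r.degree < q.degree := Polynomial.degree_sub_lt hdq hq0 hlc
          _ ≤ m := by
              rw [Polynomial.degree_eq_natDegree hq0] at hq ⊢
              have : q.natDegree < m + 1 := by exact_mod_cast hq
              exact_mod_cast Nat.lt_succ_iff.mp this
    have key : ∑ k ∈ Finset.range (m+1+1), (-1:R)^k * ((m+1).choose k) * q.eval (k:R)
        = ∑ k ∈ Finset.range (m+1), (-1:R)^k * (m.choose k) * r.eval (k:R) := by
      have hre : ∀ k : ℕ, r.eval (k:R) = q.eval (k:R) - q.eval ((k:R)+1) := by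
        intro k
        rw [hr]
        simp [Polynomial.taylor_eval]
      set e : ℕ → R := fun k => (-1:R)^k * (m.choose k) * q.eval (k:R) with he
      rw [Finset.sum_range_succ' (fun k => (-1:R)^k * ((m+1).choose k) * q.eval (k:R)) (m+1)]
      have step1 : ∑ k ∈ Finset.range (m+1),
          (-1:R)^(k+1) * ((m+1).choose (k+1)) * q.eval ((k+1:ℕ):R)
          = ∑ k ∈ Finset.range (m+1),
            (e (k+1) - (-1:R)^k * (m.choose k) * q.eval ((k:R)+1)) := by
        apply Finset.sum_congr rfl
        intro k _
        rw [he]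
        simp only [Nat.choose_succ_succ]
        push_cast
        ring
      have step2 : ∑ k ∈ Finset.range (m+1), e (k+1)
          = ∑ k ∈ Finset.range (m+1), e k - e 0 := by
        have h1 := Finset.sum_range_succ' e (m+1)
        have h2 := Finset.sum_range_succ e (m+1)
        have h3 : e (m+1) = 0 := by
          rw [he]; simp [Nat.choose_eq_zero_of_lt (Nat.lt_succ_self m)]
        rw [h3, add_zero] at h2
        rw [h2] at h1
        exact eq_sub_of_add_eq h1.symm
      rw [step1, Finset.sum_sub_distrib, step2]
      have h4 : e 0 = (-1:R)^0 * ((m+1).choose 0) * q.eval ((0:ℕ):R) := by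
        rw [he]; simp
      rw [← h4]
      have step3 : ∑ k ∈ Finset.range (m+1), (-1:R)^k * (m.choose k) * r.eval (k:R)
          = ∑ k ∈ Finset.range (m+1), e k
            - ∑ k ∈ Finset.range (m+1), (-1:R)^k * (m.choose k) * q.eval ((k:R)+1) := by
        rw [← Finset.sum_sub_distrib]
        apply Finset.sum_congr rfl
        intro k _
        rw [hre k, he]
        ring
      rw [step3]
      ring
    rw [key]
    exact ih r hdeg

end FiniteDifference

section Abel

noncomputable def fAb {R : Type*} [CommRing R] (x : R) : ℕ → R
  | 0 => 1
  | (k+1) => x * (x + ((k+1 : ℕ) : R))^k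

lemma poly_eq_of_deriv {R : Type*} [CommRing R] [IsDomain R] [CharZero R] {p q : R[X]}
    (h : derivative p = derivative q) (a : R) (h2 : p.eval a = q.eval a) : p = q := by
  have hd : derivative (p - q) = 0 := by rw [derivative_sub, h, sub_self]
  have hc := Polynomial.eq_C_of_derivative_eq_zero hd
  have h3 : (p - q).eval a = 0 := by simp [h2]
  rw [hc] at h3
  rw [Polynomial.eval_C] at h3
  have : p - q = 0 := by rw [hc, h3, map_zero]
  exact sub_eq_zero.mp this

lemma choose_mul_sub (m k : ℕ) (hk : k ≤ m) :
    (m + 1 - k) * ((m+1).choose k) = (m+1) * m.choose k := by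
  have h1 := Nat.add_one_mul_choose_eq m (m - k)
  have h2 : m.choose (m - k) = m.choose k := Nat.choose_symm hk
  have h3 : (m+1).choose (m - k + 1) = (m+1).choose k := by
    have : m - k + 1 = (m + 1) - k := by omega
    rw [this]
    exact Nat.choose_symm (by omega)
  rw [h2, h3] at h1
  rw [show m + 1 - k = m - k + 1 from by omega, mul_comm]
  exact h1.symm

lemma abelH {R : Type*} [CommRing R] [IsDomain R] [CharZero R] (x : R) :
    ∀ (m c : ℕ),
      ∑ k ∈ Finset.range (m+1),
        Polynomial.C ((m.choose k : R) * fAb x k) * (X + ((m - k + c : ℕ) : R[X]))^(m-k)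
      = (X + Polynomial.C x + ((m + c : ℕ) : R[X]))^m := by
  intro m
  induction m with
  | zero => intro c; simp [fAb]
  | succ m ih =>
    intro c
    refine poly_eq_of_deriv ?_ (-(x + ((m+1+c : ℕ) : R))) ?_
    · have hderL : derivative (∑ k ∈ Finset.range (m+1+1),
          Polynomial.C (((m+1).choose k : R) * fAb x k)
            * (X + ((m + 1 - k + c : ℕ) : R[X]))^(m+1-k))
          = ((m+1 : ℕ) : R[X]) * ∑ k ∈ Finset.range (m+1),
              Polynomial.C ((m.choose k : R) * fAb x k)
                * (X + ((m - k + (c+1) : ℕ) : R[X]))^(m-k) := by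
        rw [map_sum, Finset.sum_range_succ, Finset.mul_sum]
        have hlast : derivative (Polynomial.C (((m+1).choose (m+1) : R) * fAb x (m+1))
            * (X + ((m + 1 - (m+1) + c : ℕ) : R[X]))^(m+1-(m+1))) = 0 := by
          simp
        rw [hlast, add_zero]
        refine Finset.sum_congr rfl ?_
        intro k hk
        have hkm : k ≤ m := Nat.lt_succ_iff.mp (Finset.mem_range.mp hk)
        rw [derivative_C_mul, derivative_pow]
        have e1 : (m + 1 - k + c : ℕ) = (m - k + (c+1) : ℕ) := by omega
        have e2 : (m + 1 - k - 1 : ℕ) = (m - k : ℕ) := by omega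
        rw [e1, e2]
        have e3 : derivative (X + ((m - k + (c+1) : ℕ) : R[X])) = 1 := by
          simp
        rw [e3, mul_one]
        have hcc : (((m+1).choose k : R) * fAb x k) * ((m+1-k : ℕ) : R)
            = ((m+1 : ℕ) : R) * ((m.choose k : R) * fAb x k) := by
          have h := choose_mul_sub m k hkm
          have h' : ((m + 1 - k : ℕ) : R) * (((m+1).choose k : ℕ) : R)
              = ((m+1 : ℕ) : R) * ((m.choose k : ℕ) : R) := by
            exact_mod_cast congrArg (Nat.cast (R := R)) h
          linear_combination (fAb x k) * h'
        calc Polynomial.C (((m+1).choose k : R) * fAb x k)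
              * (Polynomial.C ((m+1-k : ℕ) : R) * (X + ((m - k + (c+1) : ℕ) : R[X]))^(m-k))
            = Polynomial.C ((((m+1).choose k : R) * fAb x k) * ((m+1-k : ℕ) : R))
              * (X + ((m - k + (c+1) : ℕ) : R[X]))^(m-k) := by
              simp only [map_mul]; ring
          _ = Polynomial.C (((m+1 : ℕ) : R) * ((m.choose k : R) * fAb x k))
              * (X + ((m - k + (c+1) : ℕ) : R[X]))^(m-k) := by rw [hcc]
          _ = ((m+1 : ℕ) : R[X]) * (Polynomial.C ((m.choose k : R) * fAb x k)
              * (X + ((m - k + (c+1) : ℕ) : R[X]))^(m-k)) := by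
              rw [map_mul, Polynomial.C_eq_natCast]; push_cast; ring
      rw [hderL, ih (c+1)]
      rw [derivative_pow]
      have e4 : derivative (X + Polynomial.C x + ((m + 1 + c : ℕ) : R[X])) = 1 := by simp
      rw [e4, mul_one]
      have e5 : (m + (c+1) : ℕ) = (m + 1 + c : ℕ) := by omega
      rw [e5]
      rw [show (m + 1 - 1 : ℕ) = m from rfl, Polynomial.C_eq_natCast]
    · set a : R := -(x + ((m+1+c : ℕ) : R)) with ha
      rw [Polynomial.eval_finset_sum]
      have hterm : ∀ k ∈ Finset.range (m+1+1),
          Polynomial.eval a (Polynomial.C (((m+1).choose k : R) * fAb x k)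
            * (X + ((m + 1 - k + c : ℕ) : R[X]))^(m+1-k))
          = (x * (-1:R)^(m+1)) * ((-1:R)^k * ((m+1).choose k : R)
              * Polynomial.eval ((k : ℕ) : R) ((X + Polynomial.C x)^m)) := by
        intro k hk
        have hkm : k ≤ m + 1 := Nat.lt_succ_iff.mp (Finset.mem_range.mp hk)
        rw [Polynomial.eval_mul, Polynomial.eval_C, Polynomial.eval_pow,
          Polynomial.eval_add, Polynomial.eval_X, Polynomial.eval_natCast]
        have h1 : a + ((m + 1 - k + c : ℕ) : R) = -(x + (k : R)) := by
          rw [ha]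
          have : ((m + 1 - k + c : ℕ) : R) = ((m+1+c : ℕ) : R) - (k : R) := by
            push_cast [Nat.cast_sub hkm]
            ring
          rw [this]; ring
        rw [h1, neg_pow]
        have hsign : (-1:R)^(m+1-k) = (-1:R)^(m+1) * (-1:R)^k := by
          have h2 : (-1:R)^(m+1-k) * (-1:R)^k = (-1:R)^(m+1) := by
            rw [← pow_add, show m+1-k+k = m+1 from by omega]
          calc (-1:R)^(m+1-k) = (-1:R)^(m+1-k) * ((-1:R)^k * (-1:R)^k) := by
                rw [← pow_add]
                simp [← two_mul, pow_mul]
            _ = ((-1:R)^(m+1-k) * (-1:R)^k) * (-1:R)^k := by ring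
            _ = (-1:R)^(m+1) * (-1:R)^k := by rw [h2]
        have heval : Polynomial.eval ((k : ℕ) : R) ((X + Polynomial.C x)^m)
            = ((k : R) + x)^m := by simp
        rw [hsign, heval]
        have hfab : fAb x k * (x + (k:R))^(m+1-k) = x * ((k:R) + x)^m := by
          cases k with
          | zero => simp [fAb]; ring
          | succ j =>
            show x * (x + ((j+1 : ℕ) : R))^j * (x + ((j+1:ℕ) : R))^(m+1-(j+1)) = _
            rw [mul_assoc, ← pow_add, show j + (m+1-(j+1)) = m from by omega]
            push_cast
            ring_nf
        calc ((m+1).choose k : R) * fAb x k * ((-1:R)^(m+1) * (-1:R)^k * (x + (k:R))^(m+1-k))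
            = ((-1:R)^(m+1) * (-1:R)^k) * ((m+1).choose k : R)
              * (fAb x k * (x + (k:R))^(m+1-k)) := by ring
          _ = ((-1:R)^(m+1) * (-1:R)^k) * ((m+1).choose k : R) * (x * ((k:R) + x)^m) := by
              rw [hfab]
          _ = (x * (-1:R)^(m+1)) * ((-1:R)^k * ((m+1).choose k : R) * (((k:R) + x)^m)) := by
              ring
      rw [Finset.sum_congr rfl hterm, ← Finset.mul_sum]
      have hfd : ∑ k ∈ Finset.range (m+1+1), (-1:R)^k * ((m+1).choose k : R)
          * Polynomial.eval ((k : ℕ) : R) ((X + Polynomial.C x)^m) = 0 := by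
        apply findiff (m+1)
        calc ((X + Polynomial.C x)^m : R[X]).degree ≤ m • (X + Polynomial.C x).degree :=
              Polynomial.degree_pow_le _ _
          _ = (m : WithBot ℕ) := by rw [Polynomial.degree_X_add_C]; simp
          _ < ((m+1 : ℕ) : WithBot ℕ) := by exact_mod_cast Nat.lt_succ_self m
      rw [hfd, mul_zero]
      rw [Polynomial.eval_pow]
      have : Polynomial.eval a (X + Polynomial.C x + ((m + 1 + c : ℕ) : R[X])) = 0 := by
        simp [ha]
        ring
      rw [this, zero_pow (Nat.succ_ne_zero m)]

lemma abel_poly (m : ℕ) :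
    ∑ t ∈ Finset.range (m+1),
        ((m.choose t * (t+1)^t : ℕ) : ℚ[X]) * fAb (Polynomial.X : ℚ[X]) (m - t)
      = (Polynomial.X + ((m+1 : ℕ) : ℚ[X]))^m := by
  have h := abelH (Polynomial.X : ℚ[X]) m 0
  have h1 := congrArg (Polynomial.eval (1 : ℚ[X])) h
  rw [Polynomial.eval_finset_sum] at h1
  simp only [Polynomial.eval_mul, Polynomial.eval_C, Polynomial.eval_pow,
    Polynomial.eval_add, Polynomial.eval_X, Polynomial.eval_natCast] at h1
  have h2 : ∀ k ∈ Finset.range (m+1),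
      ((m.choose k : ℚ[X]) * fAb (Polynomial.X : ℚ[X]) k)
          * ((1 : ℚ[X]) + ((m - k + 0 : ℕ) : ℚ[X]))^(m-k)
        = (fun t => ((m.choose t * ((m-t)+1)^(m-t) : ℕ) : ℚ[X])
            * fAb (Polynomial.X : ℚ[X]) t) k := by
    intro k hk
    have : ((1 : ℚ[X]) + ((m - k + 0 : ℕ) : ℚ[X])) = (((m - k) + 1 : ℕ) : ℚ[X]) := by
      push_cast
      ring
    rw [this]
    push_cast
    ring
  rw [Finset.sum_congr rfl h2] at h1
  have h3 : ∀ t ∈ Finset.range (m+1),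
      ((m.choose t * (t+1)^t : ℕ) : ℚ[X]) * fAb (Polynomial.X : ℚ[X]) (m - t)
        = (fun t => ((m.choose t * ((m-t)+1)^(m-t) : ℕ) : ℚ[X])
            * fAb (Polynomial.X : ℚ[X]) t) (m+1-1-t) := by
    intro t ht
    have htm : t ≤ m := Nat.lt_succ_iff.mp (Finset.mem_range.mp ht)
    have e1 : m+1-1-t = m - t := by omega
    have e2 : m - (m - t) = t := by omega
    simp only [e1, e2]
    rw [Nat.choose_symm htm]
  calc ∑ t ∈ Finset.range (m+1),
        ((m.choose t * (t+1)^t : ℕ) : ℚ[X]) * fAb (Polynomial.X : ℚ[X]) (m - t)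
      = ∑ t ∈ Finset.range (m+1), (fun t => ((m.choose t * ((m-t)+1)^(m-t) : ℕ) : ℚ[X])
            * fAb (Polynomial.X : ℚ[X]) t) (m+1-1-t) := Finset.sum_congr rfl h3
    _ = ∑ t ∈ Finset.range (m+1), ((m.choose t * ((m-t)+1)^(m-t) : ℕ) : ℚ[X])
            * fAb (Polynomial.X : ℚ[X]) t := by
          exact Finset.sum_range_reflect (fun t => ((m.choose t * ((m-t)+1)^(m-t) : ℕ) : ℚ[X]) * fAb (Polynomial.X : ℚ[X]) t) (m+1)
    _ = ((1 : ℚ[X]) + Polynomial.X + ((m + 0 : ℕ) : ℚ[X]))^m := h1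
    _ = (Polynomial.X + ((m+1 : ℕ) : ℚ[X]))^m := by push_cast; ring

end Abel

section Partitions

def IsPartOf {α : Type*} [DecidableEq α] (S : Finset α) (P : Finset (Finset α)) : Prop :=
  (∀ b ∈ P, b.Nonempty) ∧
    (∀ b ∈ P, ∀ c ∈ P, b ≠ c → Disjoint b c) ∧
    P.sup id = S

open Classical in
noncomputable def gsum {α : Type*} [DecidableEq α] [Fintype α] (S : Finset α) (j : ℕ) : ℕ :=
  ∑ P ∈ (Finset.univ : Finset (Finset (Finset α))).filter
      (fun P => IsPartOf S P ∧ P.card = j),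
    ∏ b ∈ P, b.card ^ (b.card - 1)

lemma part_exists_unique {α : Type*} [DecidableEq α] {S : Finset α} {P : Finset (Finset α)}
    (h : IsPartOf S P) {a : α} (ha : a ∈ S) : ∃! b, b ∈ P ∧ a ∈ b := by
  obtain ⟨hne, hdis, hsup⟩ := h
  have h1 : a ∈ P.sup id := by rw [hsup]; exact ha
  rw [Finset.mem_sup] at h1
  obtain ⟨b, hb, hab⟩ := h1
  refine ⟨b, ⟨hb, hab⟩, ?_⟩
  rintro c ⟨hc, hac⟩
  by_contra hne'
  exact (Finset.disjoint_left.mp (hdis c hc b hb hne')) hac hab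

lemma block_subset {α : Type*} [DecidableEq α] {S : Finset α} {P : Finset (Finset α)}
    (h : IsPartOf S P) {b : Finset α} (hb : b ∈ P) : b ⊆ S := by
  have := Finset.le_sup (f := id) hb
  rw [h.2.2] at this
  exact this

lemma gsum_empty {α : Type*} [DecidableEq α] [Fintype α] (j : ℕ) :
    gsum (∅ : Finset α) j = if j = 0 then 1 else 0 := by
  classical
  have hiff : ∀ P : Finset (Finset α), IsPartOf (∅ : Finset α) P ↔ P = ∅ := by
    intro P
    constructor
    · intro h
      by_contra hP
      obtain ⟨b, hb⟩ := Finset.nonempty_iff_ne_empty.mpr hP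
      have hsub := block_subset h hb
      obtain ⟨y, hy⟩ := h.1 b hb
      exact absurd (hsub hy) (Finset.notMem_empty y)
    · rintro rfl
      exact ⟨fun b hb => absurd hb (by simp), fun b hb c hc _ => absurd hb (by simp), by simp⟩
  unfold gsum
  rcases Nat.eq_zero_or_pos j with rfl | hj
  · rw [Finset.filter_congr (q := fun P => P = ∅) (fun P _ => by simp [hiff P])]
    rw [Finset.filter_eq' ]
    simp
  · have : ((Finset.univ : Finset (Finset (Finset α))).filter
        (fun P => IsPartOf (∅ : Finset α) P ∧ P.card = j)) = ∅ := by
      apply Finset.filter_eq_empty_iff.mpr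
      intro P _
      rintro ⟨h1, h2⟩
      rw [hiff P] at h1
      subst h1
      simp at h2
      omega
    rw [this]
    have hj' : j ≠ 0 := by omega
    simp [hj']

lemma gsum_zero {α : Type*} [DecidableEq α] [Fintype α] {S : Finset α} (hS : S.Nonempty) :
    gsum S 0 = 0 := by
  classical
  unfold gsum
  have : ((Finset.univ : Finset (Finset (Finset α))).filter
      (fun P => IsPartOf S P ∧ P.card = 0)) = ∅ := by
    apply Finset.filter_eq_empty_iff.mpr
    intro P _
    rintro ⟨h1, h2⟩
    rw [Finset.card_eq_zero] at h2
    subst h2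
    rw [IsPartOf] at h1
    have := h1.2.2
    simp at this
    rw [← this] at hS
    exact Finset.not_nonempty_empty hS
  rw [this]
  simp

lemma part_erase {α : Type*} [DecidableEq α] {S : Finset α} {P : Finset (Finset α)}
    (hP : IsPartOf S P) {B : Finset α} (hB : B ∈ P) : IsPartOf (S \ B) (P.erase B) := by
  obtain ⟨hne, hdis, hsup⟩ := hP
  refine ⟨fun b hb => hne b (Finset.mem_of_mem_erase hb),
          fun b hb c hc h => hdis b (Finset.mem_of_mem_erase hb) c (Finset.mem_of_mem_erase hc) h,
          ?_⟩
  apply le_antisymm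
  · apply Finset.sup_le
    intro c hc
    have hcP := Finset.mem_of_mem_erase hc
    have hcS : c ⊆ S := by rw [← hsup]; exact Finset.le_sup (f := id) hcP
    have hcB : Disjoint c B := hdis c hcP B hB (Finset.ne_of_mem_erase hc)
    exact Finset.subset_sdiff.mpr ⟨hcS, hcB⟩
  · rw [Finset.le_iff_subset]
    intro x hx
    obtain ⟨hxS, hxB⟩ := Finset.mem_sdiff.mp hx
    have hxsup : x ∈ P.sup id := by rw [hsup]; exact hxS
    rw [Finset.mem_sup] at hxsup
    obtain ⟨c, hc, hxc⟩ := hxsup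
    have hcB : c ≠ B := fun h => hxB (h ▸ hxc)
    rw [Finset.mem_sup]
    exact ⟨c, Finset.mem_erase.mpr ⟨hcB, hc⟩, hxc⟩

lemma part_insert {α : Type*} [DecidableEq α] {S B : Finset α} {Q : Finset (Finset α)} {a : α}
    (hBS : B ⊆ S) (haB : a ∈ B) (hQ : IsPartOf (S \ B) Q) :
    IsPartOf S (insert B Q) ∧ B ∉ Q := by
  obtain ⟨hne, hdis, hsup⟩ := hQ
  have hQsub : ∀ c ∈ Q, c ⊆ S \ B := fun c hc => by
    rw [← hsup]; exact Finset.le_sup (f := id) hc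
  have hBQ : B ∉ Q := by
    intro h
    exact (Finset.mem_sdiff.mp (hQsub B h haB)).2 haB
  refine ⟨⟨?_, ?_, ?_⟩, hBQ⟩
  · intro b hb
    rcases Finset.mem_insert.mp hb with rfl | hb'
    · exact ⟨a, haB⟩
    · exact hne b hb'
  · intro b hb c hc hbc
    rcases Finset.mem_insert.mp hb with rfl | hb' <;>
      rcases Finset.mem_insert.mp hc with rfl | hc'
    · exact absurd rfl hbc
    · exact Finset.disjoint_left.mpr
        (fun x hxB hxc => (Finset.mem_sdiff.mp (hQsub c hc' hxc)).2 hxB)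
    · exact (Finset.disjoint_left.mpr
        (fun x hxB hxb => (Finset.mem_sdiff.mp (hQsub b hb' hxb)).2 hxB)).symm
    · exact hdis b hb' c hc' hbc
  · rw [Finset.sup_insert, hsup]
    show B ∪ (S \ B) = S
    exact Finset.union_sdiff_of_subset hBS

open Classical in
lemma gsum_rec {α : Type*} [DecidableEq α] [Fintype α] (S : Finset α) (a : α) (ha : a ∈ S)
    (j : ℕ) :
    gsum S (j+1) = ∑ B ∈ S.powerset.filter (fun B => a ∈ B),
      B.card ^ (B.card - 1) * gsum (S \ B) j := by
  unfold gsum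
  have hmul : ∀ B ∈ S.powerset.filter (fun B => a ∈ B),
      B.card ^ (B.card - 1) * ∑ Q ∈ (Finset.univ : Finset (Finset (Finset α))).filter
          (fun Q => IsPartOf (S \ B) Q ∧ Q.card = j), ∏ b ∈ Q, b.card ^ (b.card - 1)
        = ∑ Q ∈ (Finset.univ : Finset (Finset (Finset α))).filter
          (fun Q => IsPartOf (S \ B) Q ∧ Q.card = j),
          B.card ^ (B.card - 1) * ∏ b ∈ Q, b.card ^ (b.card - 1) := by
    intro B _
    exact Finset.mul_sum _ _ _
  rw [Finset.sum_congr rfl hmul, Finset.sum_sigma']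
  have key : ∀ P : Finset (Finset α), P ∈ (Finset.univ : Finset (Finset (Finset α))).filter
      (fun P => IsPartOf S P ∧ P.card = j + 1) → ∃! b, b ∈ P ∧ a ∈ b := by
    intro P hP
    exact part_exists_unique (Finset.mem_filter.mp hP).2.1 ha
  refine Finset.sum_bij'
    (i := fun P hP => ⟨Finset.choose (fun b => a ∈ b) P (key P hP),
        P.erase (Finset.choose (fun b => a ∈ b) P (key P hP))⟩)
    (j := fun p _ => insert p.1 p.2) ?_ ?_ ?_ ?_ ?_
  · -- i maps into sigma set
    intro P hP
    obtain ⟨hPart, hcard⟩ := (Finset.mem_filter.mp hP).2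
    set B := Finset.choose (fun b => a ∈ b) P (key P hP) with hBdef
    have hBP : B ∈ P := Finset.choose_mem _ _ _
    have haB : a ∈ B := Finset.choose_property (fun b => a ∈ b) P (key P hP)
    rw [Finset.mem_sigma]
    constructor
    · rw [Finset.mem_filter, Finset.mem_powerset]
      exact ⟨block_subset hPart hBP, haB⟩
    · rw [Finset.mem_filter]
      refine ⟨Finset.mem_univ _, part_erase hPart hBP, ?_⟩
      rw [Finset.card_erase_of_mem hBP, hcard]
      omega
  · -- j maps into partition set
    rintro ⟨B, Q⟩ hp
    rw [Finset.mem_sigma] at hp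
    obtain ⟨hB, hQ⟩ := hp
    rw [Finset.mem_filter, Finset.mem_powerset] at hB
    rw [Finset.mem_filter] at hQ
    obtain ⟨hBS, haB⟩ := hB
    obtain ⟨_, hQpart, hQcard⟩ := hQ
    obtain ⟨hins, hBQ⟩ := part_insert hBS haB hQpart
    rw [Finset.mem_filter]
    refine ⟨Finset.mem_univ _, hins, ?_⟩
    rw [Finset.card_insert_of_notMem hBQ, hQcard]
  · -- left inverse
    intro P hP
    exact Finset.insert_erase (Finset.choose_mem _ _ _)
  · -- right inverse
    rintro ⟨B, Q⟩ hp
    rw [Finset.mem_sigma] at hp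
    obtain ⟨hB, hQ⟩ := hp
    rw [Finset.mem_filter, Finset.mem_powerset] at hB
    rw [Finset.mem_filter] at hQ
    obtain ⟨hBS, haB⟩ := hB
    obtain ⟨_, hQpart, hQcard⟩ := hQ
    obtain ⟨hins, hBQ⟩ := part_insert hBS haB hQpart
    have hchoose : ∀ (h : ∃! b, b ∈ insert B Q ∧ a ∈ b),
        Finset.choose (fun b => a ∈ b) (insert B Q) h = B := fun h =>
      h.unique (Finset.choose_spec (fun b => a ∈ b) (insert B Q) h)
        ⟨Finset.mem_insert_self B Q, haB⟩
    refine Sigma.ext (hchoose _) (heq_of_eq ?_)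
    show (insert B Q).erase (Finset.choose (fun b => a ∈ b) (insert B Q) _) = Q
    rw [hchoose, Finset.erase_insert hBQ]
  · -- weights
    intro P hP
    exact (Finset.mul_prod_erase P _ (Finset.choose_mem _ _ _)).symm

end Partitions

section Main

lemma sum_subsets_card {α M : Type*} [DecidableEq α] [AddCommMonoid M] (S : Finset α) (a : α)
    (ha : a ∈ S) (h : ℕ → M) :
    ∑ B ∈ S.powerset.filter (fun B => a ∈ B), h B.card
      = ∑ t ∈ Finset.range S.card, ((S.card - 1).choose t) • h (t+1) := by
  have h1 : ∑ B ∈ S.powerset.filter (fun B => a ∈ B), h B.card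
      = ∑ C ∈ (S.erase a).powerset, h (C.card + 1) := by
    refine Finset.sum_bij' (i := fun B _ => B.erase a) (j := fun C _ => insert a C)
      ?_ ?_ ?_ ?_ ?_
    · intro B hB
      rw [Finset.mem_filter, Finset.mem_powerset] at hB
      rw [Finset.mem_powerset]
      exact Finset.erase_subset_erase a hB.1
    · intro C hC
      rw [Finset.mem_powerset] at hC
      rw [Finset.mem_filter, Finset.mem_powerset]
      constructor
      · intro x hx
        rcases Finset.mem_insert.mp hx with rfl | hx'
        · exact ha
        · exact (Finset.erase_subset a S) (hC hx')
      · exact Finset.mem_insert_self a C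
    · intro B hB
      rw [Finset.mem_filter] at hB
      exact Finset.insert_erase hB.2
    · intro C hC
      rw [Finset.mem_powerset] at hC
      apply Finset.erase_insert
      intro haC
      exact (Finset.notMem_erase a S) (hC haC)
    · intro B hB
      rw [Finset.mem_filter] at hB
      congr 1
      rw [Finset.card_erase_of_mem hB.2]
      have : 1 ≤ B.card := Finset.card_pos.mpr ⟨a, hB.2⟩
      omega
  rw [h1, Finset.sum_powerset]
  rw [Finset.card_erase_of_mem ha]
  have hc : S.card - 1 + 1 = S.card := Nat.succ_pred_eq_of_pos (Finset.card_pos.mpr ⟨a, ha⟩)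
  rw [hc]
  refine Finset.sum_congr rfl ?_
  intro t ht
  have h2 := Finset.sum_powersetCard t (S.erase a) (fun n => h (n+1))
  rw [Finset.card_erase_of_mem ha] at h2
  exact h2

open Classical in
lemma gsum_eq {α : Type*} [DecidableEq α] [Fintype α] (S : Finset α) :
    ∀ j : ℕ, (gsum S j : ℚ) = (fAb (Polynomial.X : ℚ[X]) S.card).coeff j := by
  induction S using Finset.strongInduction with
  | _ S IH =>
  intro j
  rcases S.eq_empty_or_nonempty with rfl | ⟨a, ha⟩
  · rw [gsum_empty]
    simp only [Finset.card_empty]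
    rw [show fAb (Polynomial.X : ℚ[X]) 0 = 1 from rfl]
    rcases Nat.eq_zero_or_pos j with rfl | hj
    · simp
    · have : j ≠ 0 := by omega
      simp [this, Polynomial.coeff_one]
  · have hcard1 : 1 ≤ S.card := Finset.card_pos.mpr ⟨a, ha⟩
    obtain ⟨r, hr⟩ : ∃ r, S.card = r + 1 := ⟨S.card - 1, by omega⟩
    cases j with
    | zero =>
      rw [gsum_zero ⟨a, ha⟩, hr]
      rw [show fAb (Polynomial.X : ℚ[X]) (r+1)
        = Polynomial.X * (Polynomial.X + ((r+1:ℕ) : ℚ[X]))^r from rfl]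
      rw [Polynomial.mul_coeff_zero]
      simp
    | succ j =>
      rw [gsum_rec S a ha j]
      push_cast
      have hstep : ∀ B ∈ S.powerset.filter (fun B => a ∈ B),
          ((B.card : ℚ)) ^ (B.card - 1) * ((gsum (S \ B) j : ℕ) : ℚ)
            = (fun s => ((s : ℕ) : ℚ) ^ (s - 1)
                * (fAb (Polynomial.X : ℚ[X]) (S.card - s)).coeff j) B.card := by
        intro B hB
        rw [Finset.mem_filter, Finset.mem_powerset] at hB
        have hBne : B.Nonempty := ⟨a, hB.2⟩
        have hss : S \ B ⊂ S := Finset.sdiff_ssubset hB.1 hBne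
        have hcard : (S \ B).card = S.card - B.card := Finset.card_sdiff_of_subset hB.1
        rw [IH _ hss j, hcard]
      rw [Finset.sum_congr rfl hstep]
      rw [sum_subsets_card S a ha
        (fun s => ((s : ℕ) : ℚ) ^ (s - 1) * (fAb (Polynomial.X : ℚ[X]) (S.card - s)).coeff j)]
      have habel := congrArg (fun p => Polynomial.coeff p j) (abel_poly r)
      simp only [Polynomial.finset_sum_coeff] at habel
      have hc2 : ∀ t ∈ Finset.range (r+1),
          (((r.choose t * (t+1)^t : ℕ) : ℚ[X]) * fAb (Polynomial.X : ℚ[X]) (r - t)).coeff j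
            = ((r.choose t : ℚ)) * (((t+1)^t : ℕ) : ℚ)
                * (fAb (Polynomial.X : ℚ[X]) (r - t)).coeff j := by
        intro t _
        rw [show ((r.choose t * (t+1)^t : ℕ) : ℚ[X])
          = Polynomial.C ((r.choose t * (t+1)^t : ℕ) : ℚ) from by push_cast; simp]
        rw [Polynomial.coeff_C_mul]
        push_cast
        ring
      rw [Finset.sum_congr rfl hc2] at habel
      rw [hr]
      calc ∑ t ∈ Finset.range (r+1), (r.choose t)
            • ((((t+1 : ℕ)) : ℚ) ^ ((t+1) - 1)
                * (fAb (Polynomial.X : ℚ[X]) (r + 1 - (t+1))).coeff j)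
          = ∑ t ∈ Finset.range (r+1), ((r.choose t : ℚ)) * (((t+1)^t : ℕ) : ℚ)
                * (fAb (Polynomial.X : ℚ[X]) (r - t)).coeff j := by
            refine Finset.sum_congr rfl ?_
            intro t _
            rw [show (t+1) - 1 = t from rfl, show r + 1 - (t+1) = r - t from by omega,
              nsmul_eq_mul]
            push_cast
            ring
        _ = ((Polynomial.X + ((r+1 : ℕ) : ℚ[X]))^r).coeff j := habel
        _ = (fAb (Polynomial.X : ℚ[X]) (r+1)).coeff (j+1) := by
            rw [show fAb (Polynomial.X : ℚ[X]) (r+1)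
              = Polynomial.X * (Polynomial.X + ((r+1:ℕ) : ℚ[X]))^r from rfl]
            rw [Polynomial.coeff_X_mul]

end Main

open Classical in
/-- For `n ≥ 2` and `k ≤ n`, the sum over set partitions `(B₁,...,B_{n+1-k})` of
`{1,...,n+1}` into `n+1-k` blocks of `∏ |B_i|^{|B_i|-1}` equals
`(n+1)^k * C(n, n-k)`. -/
theorem headley_coefficient_identity (n k : ℕ) (hn : 2 ≤ n) (hk : k ≤ n + 1 - 1) :
    ∑ P ∈ (Finset.univ : Finset (Finset (Finset (Fin (n + 1))))).filter
        (fun P => IsSetPartition n P ∧ P.card = n + 1 - k),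
      ∏ b ∈ P, b.card ^ (b.card - 1)
      = (n + 1) ^ k * n.choose (n - k) := by
  have hk' : k ≤ n := by omega
  have hgs : ∑ P ∈ (Finset.univ : Finset (Finset (Finset (Fin (n + 1))))).filter
        (fun P => IsSetPartition n P ∧ P.card = n + 1 - k),
      ∏ b ∈ P, b.card ^ (b.card - 1) = gsum (Finset.univ : Finset (Fin (n+1))) (n+1-k) := by
    unfold gsum
    apply Finset.sum_congr
    · apply Finset.filter_congr
      intro P _
      constructor
      · rintro ⟨h1, h2⟩
        exact ⟨h1, h2⟩
      · rintro ⟨h1, h2⟩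
        exact ⟨h1, h2⟩
    · intros
      rfl
  rw [hgs]
  have h2 := gsum_eq (Finset.univ : Finset (Fin (n+1))) (n+1-k)
  rw [Finset.card_univ, Fintype.card_fin] at h2
  have h3 : (fAb (Polynomial.X : ℚ[X]) (n+1)).coeff (n+1-k)
      = ((n+1 : ℕ) : ℚ)^k * (n.choose (n-k) : ℚ) := by
    rw [show fAb (Polynomial.X : ℚ[X]) (n+1)
      = Polynomial.X * (Polynomial.X + ((n+1:ℕ) : ℚ[X]))^n from rfl]
    rw [show n + 1 - k = (n-k) + 1 from by omega]
    rw [Polynomial.coeff_X_mul]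
    rw [show ((n+1:ℕ) : ℚ[X]) = Polynomial.C ((n+1:ℕ) : ℚ) from by push_cast; simp]
    rw [Polynomial.coeff_X_add_C_pow]
    rw [show n - (n - k) = k from by omega]
  rw [h3] at h2
  have h4 : ((gsum (Finset.univ : Finset (Fin (n+1))) (n+1-k) : ℕ) : ℚ)
      = (((n + 1) ^ k * n.choose (n - k) : ℕ) : ℚ) := by
    rw [h2]
    push_cast
    ring
  exact_mod_cast h4
end
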